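/- arXiv:1905.04904 — 9 statements merged into one kernel-verified Lean document; each statement's English description precedes it below -/
import Mathlib

section
/- Let τ be a monotone skew-product (semi)flow on Ω×ℙ×ℝ≥0 whose fiber component r(t,ω,θ,r₀) solves r' = r(g(ω·t, θ̃(t,ω,θ)) − k_ρ(r)). Then τ is concave in the fiber: for all η ∈ [0,1], r₁, r₂ ≥ 0 and t ≥ 0 in the common domain of definition, r(t,ω,θ, η r₁ + (1-η) r₂) ≥ η r(t,ω,θ,r₁) + (1-η) r(t,ω,θ,r₂). -/
lemma f_nonneg (ρ : ℝ) (hρ : 0 < ρ) (a : ℝ) : 0 ≤ a * (max (a - ρ) 0)^2 := by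
  rcases le_or_gt a ρ with hc | hc
  · rw [max_eq_right (by linarith)]; simp
  · have : 0 < a := lt_trans hρ hc
    positivity

lemma jensenf (ρ : ℝ) (hρ : 0 < ρ) (η : ℝ) (hη0 : 0 ≤ η) (hη1 : η ≤ 1) (a b : ℝ) :
    (η*a+(1-η)*b) * (max ((η*a+(1-η)*b) - ρ) 0)^2
      ≤ η * (a * (max (a-ρ) 0)^2) + (1-η) * (b * (max (b-ρ) 0)^2) := by
  set c := η*a+(1-η)*b with hc
  have h1 : 0 ≤ 1 - η := by linarith
  rcases le_or_gt c ρ with h | h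
  · rw [max_eq_right (by linarith)]
    nlinarith [mul_nonneg hη0 (f_nonneg ρ hρ a), mul_nonneg h1 (f_nonneg ρ hρ b)]
  · rw [max_eq_left (by linarith)]
    rcases le_or_gt a ρ with ha | ha <;> rcases le_or_gt b ρ with hb | hb
    · exfalso; nlinarith
    · -- a ≤ ρ < b
      rw [max_eq_right (by linarith), max_eq_left (by linarith)]
      have hcb : c ≤ b := by nlinarith
      have hcρ : c - ρ ≤ (1-η)*(b-ρ) := by nlinarith
      have hρc : 0 ≤ c - ρ := le_of_lt (sub_pos.2 h)
      have hb0 : 0 < b := lt_trans hρ hb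
      have e1 : (c-ρ)^2 ≤ ((1-η)*(b-ρ))^2 := by nlinarith
      have e2 : c*(c-ρ)^2 ≤ b*((1-η)*(b-ρ))^2 := by nlinarith [sq_nonneg (c-ρ)]
      nlinarith [mul_nonneg (mul_nonneg (mul_nonneg hη0 h1) hb0.le) (sq_nonneg (b-ρ))]
    · -- b ≤ ρ < a
      rw [max_eq_left (by linarith), max_eq_right (by linarith)]
      have hca : c ≤ a := by nlinarith
      have hcρ : c - ρ ≤ η*(a-ρ) := by nlinarith
      have hρc : 0 ≤ c - ρ := le_of_lt (sub_pos.2 h)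
      have ha0 : 0 < a := lt_trans hρ ha
      have e1 : (c-ρ)^2 ≤ (η*(a-ρ))^2 := by nlinarith
      have e2 : c*(c-ρ)^2 ≤ a*(η*(a-ρ))^2 := by nlinarith [sq_nonneg (c-ρ)]
      nlinarith [mul_nonneg (mul_nonneg (mul_nonneg hη0 h1) ha0.le) (sq_nonneg (a-ρ))]
    · -- both > ρ
      rw [max_eq_left (by linarith), max_eq_left (by linarith)]
      have key : η*(a*(a-ρ)^2)+(1-η)*(b*(b-ρ)^2) - c*(c-ρ)^2
          = η*(1-η)*(a-b)^2*((1+η)*(a-ρ)+(2-η)*(b-ρ)+ρ) := by rw [hc]; ring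
      have h3 : 0 ≤ (1+η)*(a-ρ)+(2-η)*(b-ρ)+ρ := by nlinarith
      nlinarith [mul_nonneg (mul_nonneg (mul_nonneg hη0 h1) (sq_nonneg (a-b))) h3]



-- one-sided, ordered version for both > ρ
lemma lip_aux (ρ R a b : ℝ) (hρ : 0 < ρ) (hA : ρ < a) (hB : ρ < b)
    (hba : b ≤ a) (ha2 : a ≤ R) :
    0 ≤ a * (a-ρ)^2 - b * (b-ρ)^2 ∧ a * (a-ρ)^2 - b * (b-ρ)^2 ≤ 5*R^2*(a-b) := by
  have hx : 0 < a - ρ := by linarith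
  have hy : 0 < b - ρ := by linarith
  have hρR : ρ < R := lt_of_lt_of_le hA ha2
  have hxR : a - ρ ≤ R := by linarith
  have hyR : b - ρ ≤ R := by linarith
  constructor
  · have s1 : b*(b-ρ)^2 ≤ a*(b-ρ)^2 := mul_le_mul_of_nonneg_right hba (sq_nonneg _)
    have s2 : (b-ρ)^2 ≤ (a-ρ)^2 := by nlinarith
    have s3 : a*(b-ρ)^2 ≤ a*(a-ρ)^2 := mul_le_mul_of_nonneg_left s2 (by linarith)
    linarith
  · have hfac : a * (a-ρ)^2 - b * (b-ρ)^2
        = (a-b) * ((a-ρ)^2 + (a-ρ)*(b-ρ) + (b-ρ)^2 + ρ*((a-ρ)+(b-ρ))) := by ring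
    have hBnd : (a-ρ)^2 + (a-ρ)*(b-ρ) + (b-ρ)^2 + ρ*((a-ρ)+(b-ρ)) ≤ 5*R^2 := by
      nlinarith [mul_le_mul hxR hxR hx.le (by linarith : (0:ℝ) ≤ R),
        mul_le_mul hyR hyR hy.le (by linarith : (0:ℝ) ≤ R),
        mul_le_mul hxR hyR hy.le (by linarith : (0:ℝ) ≤ R),
        mul_le_mul hρR.le hxR hx.le (by linarith : (0:ℝ) ≤ R),
        mul_le_mul hρR.le hyR hy.le (by linarith : (0:ℝ) ≤ R)]
    rw [hfac]
    have := mul_le_mul_of_nonneg_left hBnd (by linarith : (0:ℝ) ≤ a - b)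
    linarith [this]

lemma lipf (ρ R : ℝ) (hρ : 0 < ρ) (hR : 0 ≤ R) (a b : ℝ)
    (ha : |a| ≤ R) (hb : |b| ≤ R) :
    |a * (max (a-ρ) 0)^2 - b * (max (b-ρ) 0)^2| ≤ 5*R^2 * |a - b| := by
  rcases abs_le.1 ha with ⟨ha1, ha2⟩
  rcases abs_le.1 hb with ⟨hb1, hb2⟩
  rcases le_or_gt a ρ with hA | hA <;> rcases le_or_gt b ρ with hB | hB
  · rw [max_eq_right (by linarith), max_eq_right (by linarith)]
    simp; positivity
  · -- a ≤ ρ < b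
    rw [max_eq_right (by linarith), max_eq_left (by linarith)]
    have hb0 : 0 < b := lt_trans hρ hB
    have hy : 0 < b - ρ := by linarith
    have hab : |a - b| = b - a := by rw [abs_sub_comm, abs_of_nonneg (by linarith)]
    have e0 : a * 0^2 - b*(b-ρ)^2 = -(b*(b-ρ)^2) := by ring
    rw [hab, e0, abs_neg, abs_of_nonneg (by positivity)]
    have e1 : b*(b-ρ)^2 ≤ R*(b-ρ)^2 := mul_le_mul_of_nonneg_right hb2 (sq_nonneg _)
    have e2 : (b-ρ)^2 ≤ (b-a)*(b-ρ) := by nlinarith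
    have e3 : (b-a)*(b-ρ) ≤ (b-a)*R := by nlinarith
    have e4 : R*(b-ρ)^2 ≤ R*((b-a)*R) := mul_le_mul_of_nonneg_left (le_trans e2 e3) hR
    nlinarith [mul_nonneg (mul_nonneg hR hR) (by linarith : (0:ℝ) ≤ b - a)]
  · -- b ≤ ρ < a
    rw [max_eq_left (by linarith), max_eq_right (by linarith)]
    have ha0 : 0 < a := lt_trans hρ hA
    have hx : 0 < a - ρ := by linarith
    have hab : |a - b| = a - b := abs_of_nonneg (by linarith)
    have e0 : a*(a-ρ)^2 - b * 0^2 = a*(a-ρ)^2 := by ring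
    rw [hab, e0, abs_of_nonneg (by positivity)]
    have e1 : a*(a-ρ)^2 ≤ R*(a-ρ)^2 := mul_le_mul_of_nonneg_right ha2 (sq_nonneg _)
    have e2 : (a-ρ)^2 ≤ (a-b)*(a-ρ) := by nlinarith
    have e3 : (a-b)*(a-ρ) ≤ (a-b)*R := by nlinarith
    have e4 : R*(a-ρ)^2 ≤ R*((a-b)*R) := mul_le_mul_of_nonneg_left (le_trans e2 e3) hR
    nlinarith [mul_nonneg (mul_nonneg hR hR) (by linarith : (0:ℝ) ≤ a - b)]
  · rw [max_eq_left (by linarith), max_eq_left (by linarith)]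
    rcases le_or_gt b a with h | h
    · obtain ⟨g1, g2⟩ := lip_aux ρ R a b hρ hA hB h ha2
      rw [abs_of_nonneg g1, abs_of_nonneg (by linarith : (0:ℝ) ≤ a - b)]
      exact g2
    · obtain ⟨g1, g2⟩ := lip_aux ρ R b a hρ hB hA h.le hb2
      rw [abs_sub_comm, abs_of_nonneg g1, abs_sub_comm, abs_of_nonneg (by linarith : (0:ℝ) ≤ b - a)]
      exact g2


lemma nonneg_of_deriv_ge (L T : ℝ) (v v' : ℝ → ℝ)
    (hv : ∀ t, HasDerivAt v (v' t) t) (h0 : v 0 = 0)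
    (hineq : ∀ t ∈ Set.Icc (0:ℝ) T, -L * |v t| ≤ v' t) :
    ∀ t ∈ Set.Icc (0:ℝ) T, 0 ≤ v t := by
  intro t₀ ht₀
  by_contra hneg
  push_neg at hneg
  have hvc : Continuous v := by
    rw [continuous_iff_continuousAt]; exact fun t => (hv t).continuousAt
  set S : Set ℝ := {t | t ∈ Set.Icc 0 t₀ ∧ 0 ≤ v t} with hS
  have hS0 : (0:ℝ) ∈ S := ⟨⟨le_refl 0, ht₀.1⟩, by rw [h0]⟩
  have hSbdd : BddAbove S := ⟨t₀, fun x hx => hx.1.2⟩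
  have hSclosed : IsClosed S :=
    (isClosed_Icc.inter (isClosed_le continuous_const hvc))
  have hsmem : sSup S ∈ S := hSclosed.csSup_mem ⟨0, hS0⟩ hSbdd
  set s := sSup S with hs
  have hs0 : 0 ≤ s := hsmem.1.1
  have hst : s ≤ t₀ := hsmem.1.2
  have hvs : 0 ≤ v s := hsmem.2
  have hslt : s < t₀ := by
    rcases lt_or_eq_of_le hst with h | h
    · exact h
    · exfalso; rw [h] at hvs; linarith
  have hthin : ∀ u ∈ Set.Ioc s t₀, v u < 0 := by
    intro u hu
    by_contra hc
    push_neg at hc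
    have : u ∈ S := ⟨⟨le_trans hs0 hu.1.le, hu.2⟩, hc⟩
    exact absurd (le_csSup hSbdd this) (not_le.2 hu.1)
  set g : ℝ → ℝ := fun t => v t * Real.exp (-L * t) with hg
  have hgderiv : ∀ t, HasDerivAt g ((v' t - L * v t) * Real.exp (-L * t)) t := by
    intro t
    have he : HasDerivAt (fun t : ℝ => Real.exp (-L * t))
        (Real.exp (-L * t) * (-L)) t := by
      simpa using ((hasDerivAt_id t).const_mul (-L)).exp
    have := (hv t).mul he
    exact this.congr_deriv (by ring)
  have hmono : MonotoneOn g (Set.Icc s t₀) := by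
    apply monotoneOn_of_deriv_nonneg (convex_Icc s t₀)
      (Continuous.continuousOn (by fun_prop))
      (fun x _ => (hgderiv x).differentiableAt.differentiableWithinAt)
    intro x hx
    rw [interior_Icc] at hx
    rw [(hgderiv x).deriv]
    have hvx : v x < 0 := hthin x ⟨hx.1, hx.2.le⟩
    have hxI : x ∈ Set.Icc (0:ℝ) T := ⟨le_trans hs0 hx.1.le, le_trans hx.2.le ht₀.2⟩
    have h1 := hineq x hxI
    rw [abs_of_neg hvx] at h1
    have : 0 ≤ v' x - L * v x := by linarith
    positivity
  have := hmono ⟨le_refl s, hst⟩ ⟨hslt.le, le_refl t₀⟩ hslt.le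
  have hgs : 0 ≤ g s := mul_nonneg hvs (Real.exp_nonneg _)
  have hgt : g t₀ < 0 := mul_neg_of_neg_of_pos hneg (Real.exp_pos _)
  linarith
/-- Concavity in the initial condition of the solution map of
`r' = r (h(t) - k_ρ(r))`: if `r₃(0) = η r₁(0) + (1-η) r₂(0)` with `η ∈ [0,1]`
and nonnegative initial data, then `r₃(t) ≥ η r₁(t) + (1-η) r₂(t)` for `t ≥ 0`. -/
theorem stmt5 (ρ : ℝ) (hρ : 0 < ρ) (k h : ℝ → ℝ)
    (hk : ∀ r : ℝ, k r = if r ≤ ρ then 0 else (r - ρ) ^ 2)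
    (hh : Continuous h) (hhb : ∃ M, ∀ t, |h t| ≤ M)
    (η : ℝ) (hη : η ∈ Set.Icc (0 : ℝ) 1)
    (r₁ r₂ r₃ : ℝ → ℝ)
    (h₁0 : 0 ≤ r₁ 0) (h₂0 : 0 ≤ r₂ 0)
    (h₃0 : r₃ 0 = η * r₁ 0 + (1 - η) * r₂ 0)
    (hode₁ : ∀ t, HasDerivAt r₁ (r₁ t * (h t - k (r₁ t))) t)
    (hode₂ : ∀ t, HasDerivAt r₂ (r₂ t * (h t - k (r₂ t))) t)
    (hode₃ : ∀ t, HasDerivAt r₃ (r₃ t * (h t - k (r₃ t))) t) :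
    ∀ t : ℝ, 0 ≤ t → η * r₁ t + (1 - η) * r₂ t ≤ r₃ t := by
  obtain ⟨hη0, hη1⟩ := hη
  have h1η : 0 ≤ 1 - η := by linarith
  obtain ⟨M, hM⟩ := hhb
  have hM0 : 0 ≤ M := le_trans (abs_nonneg _) (hM 0)
  have hk' : ∀ r : ℝ, k r = (max (r - ρ) 0)^2 := by
    intro r
    rw [hk r]
    split_ifs with hr
    · rw [max_eq_right (by linarith)]; ring
    · rw [max_eq_left (by linarith)]
  intro T hT
  -- continuity of solutions
  have hc₁ : Continuous r₁ := by
    rw [continuous_iff_continuousAt]; exact fun t => (hode₁ t).continuousAt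
  have hc₂ : Continuous r₂ := by
    rw [continuous_iff_continuousAt]; exact fun t => (hode₂ t).continuousAt
  have hc₃ : Continuous r₃ := by
    rw [continuous_iff_continuousAt]; exact fun t => (hode₃ t).continuousAt
  -- bounds on [0, T]
  obtain ⟨C₁, hC₁⟩ := (isCompact_Icc (a := (0:ℝ)) (b := T)).exists_bound_of_continuousOn
    hc₁.continuousOn
  obtain ⟨C₂, hC₂⟩ := (isCompact_Icc (a := (0:ℝ)) (b := T)).exists_bound_of_continuousOn
    hc₂.continuousOn
  obtain ⟨C₃, hC₃⟩ := (isCompact_Icc (a := (0:ℝ)) (b := T)).exists_bound_of_continuousOn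
    hc₃.continuousOn
  set R : ℝ := max (max C₁ C₂) (max C₃ 0) with hR
  have hR0 : 0 ≤ R := le_trans (le_max_right C₃ 0) (le_max_right _ _)
  have hR₁ : ∀ u ∈ Set.Icc (0:ℝ) T, |r₁ u| ≤ R := fun u hu =>
    le_trans (by simpa using hC₁ u hu) (le_trans (le_max_left C₁ C₂) (le_max_left _ _))
  have hR₂ : ∀ u ∈ Set.Icc (0:ℝ) T, |r₂ u| ≤ R := fun u hu =>
    le_trans (by simpa using hC₂ u hu) (le_trans (le_max_right C₁ C₂) (le_max_left _ _))
  have hR₃ : ∀ u ∈ Set.Icc (0:ℝ) T, |r₃ u| ≤ R := fun u hu =>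
    le_trans (by simpa using hC₃ u hu) (le_trans (le_max_left C₃ 0) (le_max_right _ _))
  set L : ℝ := M + 5 * R^2 with hL
  set v : ℝ → ℝ := fun u => r₃ u - (η * r₁ u + (1 - η) * r₂ u) with hv
  set v' : ℝ → ℝ := fun u => r₃ u * (h u - k (r₃ u))
      - (η * (r₁ u * (h u - k (r₁ u))) + (1 - η) * (r₂ u * (h u - k (r₂ u)))) with hv'
  have hvd : ∀ u, HasDerivAt v (v' u) u := fun u =>
    (hode₃ u).sub (((hode₁ u).const_mul η).add ((hode₂ u).const_mul (1 - η)))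
  have hv0 : v 0 = 0 := by simp [hv, h₃0]
  have hineq : ∀ u ∈ Set.Icc (0:ℝ) T, -L * |v u| ≤ v' u := by
    intro u hu
    set a := r₁ u; set b := r₂ u; set c := r₃ u
    set y : ℝ := η * a + (1 - η) * b with hy
    have hyR : |y| ≤ R := by
      have := hR₁ u hu; have := hR₂ u hu
      calc |y| ≤ η * |a| + (1 - η) * |b| := by
            refine le_trans (abs_add_le _ _) ?_
            rw [abs_mul, abs_mul, abs_of_nonneg hη0, abs_of_nonneg h1η]
        _ ≤ η * R + (1 - η) * R := by
            have := hR₁ u hu; have := hR₂ u hu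
            gcongr <;> assumption
        _ = R := by ring
    have hjen : y * (max (y-ρ) 0)^2
        ≤ η * (a * (max (a-ρ) 0)^2) + (1-η) * (b * (max (b-ρ) 0)^2) :=
      jensenf ρ hρ η hη0 hη1 a b
    have hlip := lipf ρ R hρ hR0 c y (hR₃ u hu) hyR
    have habs := abs_le.1 hlip
    have hhu : -M * |v u| ≤ h u * v u := by
      have h1 : |h u * v u| ≤ M * |v u| := by
        rw [abs_mul]
        exact mul_le_mul_of_nonneg_right (hM u) (abs_nonneg _)
      have := neg_abs_le (h u * v u)
      linarith
    have hvu : v u = c - y := rfl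
    have hexp : v' u = h u * v u
        + ((η * (a * (max (a-ρ) 0)^2) + (1-η) * (b * (max (b-ρ) 0)^2))
            - y * (max (y-ρ) 0)^2)
        - (c * (max (c-ρ) 0)^2 - y * (max (y-ρ) 0)^2) := by
      simp only [hv', hv, hk']
      ring
    have h2 : -(5*R^2) * |v u| ≤ -(c * (max (c-ρ) 0)^2 - y * (max (y-ρ) 0)^2) := by
      have := habs.1
      rw [hvu]
      linarith
    have h3 : (0:ℝ) ≤ (η * (a * (max (a-ρ) 0)^2) + (1-η) * (b * (max (b-ρ) 0)^2))
        - y * (max (y-ρ) 0)^2 := by linarith [hjen]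
    rw [hexp, hL]
    linarith
  have := nonneg_of_deriv_ge L T v v' hvd hv0 hineq T ⟨hT, le_refl T⟩
  simp only [hv] at this
  linarith
end

section
/- Let β̃ : Ω×ℙ → [0, r_ρ] be the upper semicontinuous equilibrium bounding the attractor, and suppose β̃(ω,θ) ≥ β₀ > 0 for all (ω,θ). Then β̃ is uniformly stable: for every ε > 0, taking δ(ε) = ε β₀ / r_ρ, if |β̃(ω,θ) − r₀| ≤ δ(ε) then |β̃(σ̃(t,ω,θ)) − r(t,ω,θ,r₀)| ≤ ε for all t ≥ 0. -/
/-- Uniform stability of the equilibrium `β̃` bounding the attractor: if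
`β₀ ≤ β̃ ≤ r_ρ` and `β̃` is an equilibrium of the monotone concave solution
operator `R`, then for every `ε > 0`, taking `δ(ε) = ε β₀ / r_ρ`, an initial
datum `r₀ ≥ 0` with `|β̃(x) - r₀| ≤ δ(ε)` satisfies
`|β̃(σ̃(t,x)) - R(t,x,r₀)| ≤ ε` for all `t ≥ 0`. -/
theorem stmt8 {X : Type*} (σ : ℝ → X → X) (R : ℝ → X → ℝ → ℝ)
    (rρ β₀ : ℝ) (hrρ : 0 < rρ) (hβ₀ : 0 < β₀)
    (β : X → ℝ)
    (hβub : ∀ x, β x ≤ rρ) (hβlb : ∀ x, β₀ ≤ β x)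
    (heq : ∀ (t : ℝ) (x : X), β (σ t x) = R t x (β x))
    (hmono : ∀ t : ℝ, 0 ≤ t → ∀ (x : X) (r₁ r₂ : ℝ), 0 ≤ r₁ → r₁ ≤ r₂ →
      R t x r₁ ≤ R t x r₂)
    (hsub : ∀ η : ℝ, η ∈ Set.Icc (0 : ℝ) 1 → ∀ t : ℝ, 0 ≤ t → ∀ x : X,
      η * β (σ t x) ≤ R t x (η * β x))
    (hsup : ∀ η : ℝ, 1 ≤ η → ∀ t : ℝ, 0 ≤ t → ∀ x : X,
      R t x (η * β x) ≤ η * β (σ t x)) :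
    ∀ ε : ℝ, 0 < ε → ∀ (x : X) (r₀ : ℝ), 0 ≤ r₀ → |β x - r₀| ≤ ε * β₀ / rρ →
      ∀ t : ℝ, 0 ≤ t → |β (σ t x) - R t x r₀| ≤ ε := by
  intro ε hε x r₀ hr₀ hδ t ht
  have hβx : 0 < β x := lt_of_lt_of_le hβ₀ (hβlb x)
  have hβσ : β (σ t x) ≤ rρ := hβub (σ t x)
  have hβσ0 : β₀ ≤ β (σ t x) := hβlb (σ t x)
  set η := r₀ / β x with hη
  have hηβ : η * β x = r₀ := div_mul_cancel₀ r₀ (ne_of_gt hβx)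
  have hkey : |β (σ t x) - R t x r₀| ≤ |1 - η| * β (σ t x) := by
    rcases le_or_gt r₀ (β x) with hle | hlt
    · have hη1 : η ≤ 1 := (div_le_one hβx).mpr hle
      have hη0 : 0 ≤ η := div_nonneg hr₀ hβx.le
      have h1 : η * β (σ t x) ≤ R t x r₀ := by
        have := hsub η ⟨hη0, hη1⟩ t ht x; rwa [hηβ] at this
      have h2 : R t x r₀ ≤ β (σ t x) := by
        rw [heq t x]; exact hmono t ht x r₀ (β x) hr₀ hle
      rw [abs_of_nonneg (by linarith), abs_of_nonneg (by linarith)]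
      nlinarith
    · have hη1 : 1 ≤ η := (one_le_div hβx).mpr hlt.le
      have h1 : R t x r₀ ≤ η * β (σ t x) := by
        have := hsup η hη1 t ht x; rwa [hηβ] at this
      have h2 : β (σ t x) ≤ R t x r₀ := by
        rw [heq t x]; exact hmono t ht x (β x) r₀ hβx.le hlt.le
      rw [abs_of_nonpos (by linarith), abs_of_nonpos (by linarith)]
      nlinarith
  have habs : |1 - η| * β x = |β x - r₀| := by
    have h : (1 - η) * β x = β x - r₀ := by rw [sub_mul, one_mul, hηβ]
    rw [← h, abs_mul, abs_of_pos hβx]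
  have h1η : |1 - η| ≤ ε * β₀ / rρ / β x := by
    rw [le_div_iff₀ hβx, habs]; exact hδ
  calc |β (σ t x) - R t x r₀| ≤ |1 - η| * β (σ t x) := hkey
    _ ≤ (ε * β₀ / rρ / β x) * β (σ t x) :=
        mul_le_mul_of_nonneg_right h1η (by linarith)
    _ ≤ ε := by
        rw [div_mul_eq_mul_div, div_le_iff₀ hβx]
        rw [div_mul_eq_mul_div, div_le_iff₀ hrρ]
        have h3 : ε * β₀ * β (σ t x) ≤ ε * β₀ * rρ :=
          mul_le_mul_of_nonneg_left hβσ (by positivity)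
        have h4 : ε * β₀ * rρ ≤ ε * β x * rρ :=
          mul_le_mul_of_nonneg_right (mul_le_mul_of_nonneg_left (hβlb x) hε.le) hrρ.le
        linarith
end

section
/- Fix (ω,θ) and let β̃(ω,θ) be the supremum of all r₀ ≥ 0 such that the solution r(t,ω,θ,r₀) of r' = r(g(σ̃(t,ω,θ)) − k_ρ(r)) is globally defined and bounded. Then β̃(ω,θ) > 0 if and only if the solution r_l(t,ω,θ,1) of the linear equation r' = r g(σ̃(t,ω,θ)) is bounded on (−∞, 0]. -/
open Set Real

/-- Monotonicity helper: if derivative is nonpositive on an interval, value decreases. -/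
lemma aux_mono {f f' : ℝ → ℝ} {a b : ℝ} (hab : a ≤ b)
    (hd : ∀ t ∈ Set.Icc a b, HasDerivAt f (f' t) t)
    (h0 : ∀ t ∈ Set.Ioo a b, f' t ≤ 0) : f b ≤ f a := by
  have hA : AntitoneOn f (Set.Icc a b) := by
    apply antitoneOn_of_deriv_nonpos (convex_Icc a b)
    · exact fun t ht => (hd t ht).continuousAt.continuousWithinAt
    · intro t ht
      rw [interior_Icc] at ht
      exact ((hd t (Ioo_subset_Icc_self ht)).differentiableAt).differentiableWithinAt
    · intro t ht
      rw [interior_Icc] at ht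
      rw [(hd t (Ioo_subset_Icc_self ht)).deriv]
      exact h0 t ht
  exact hA (Set.left_mem_Icc.mpr hab) (Set.right_mem_Icc.mpr hab) hab

/-- Lipschitz estimate for `x ↦ x * (c - (max (x - ρ) 0)^2)` on `[-B, B]`. -/
lemma aux_lip {ρ B : ℝ} (hρ : 0 ≤ ρ) (hB : 0 ≤ B) {Mg : ℝ} {g : ℝ → ℝ}
    (hMg : ∀ t, |g t| ≤ Mg) {k : ℝ → ℝ} (hk : ∀ x, k x = max (x - ρ) 0 ^ 2) (t : ℝ) :
    LipschitzOnWith (Real.toNNReal (Mg + 3 * B ^ 2)) (fun x => x * (g t - k x))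
      (Set.Icc (-B) B) := by
  apply LipschitzOnWith.of_dist_le_mul
  intro x hx y hy
  simp only [Real.dist_eq]
  rw [Real.coe_toNNReal]
  swap
  · have := (abs_nonneg (g t)).trans (hMg t); positivity
  set a := max (x - ρ) 0 with ha
  set b := max (y - ρ) 0 with hb
  have ha0 : 0 ≤ a := le_max_right _ _
  have hb0 : 0 ≤ b := le_max_right _ _
  have haB : a ≤ B := max_le (by linarith [hx.2]) hB
  have hbB : b ≤ B := max_le (by linarith [hy.2]) hB
  have hab : |a - b| ≤ |x - y| := by
    have := abs_max_sub_max_le_abs (x - ρ) (y - ρ) 0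
    simpa using this
  rw [hk, hk, ← ha, ← hb]
  have key : x * (g t - a ^ 2) - y * (g t - b ^ 2)
      = (x - y) * g t - (x - y) * a ^ 2 - (y * (a + b)) * (a - b) := by ring
  rw [key]
  have h1 : |(x - y) * g t - (x - y) * a ^ 2 - (y * (a + b)) * (a - b)|
      ≤ |(x - y) * g t| + |(x - y) * a ^ 2| + |(y * (a + b)) * (a - b)| := by
    calc _ ≤ |(x - y) * g t - (x - y) * a ^ 2| + |(y * (a + b)) * (a - b)| := abs_sub _ _
    _ ≤ _ := by gcongr; exact abs_sub _ _
  refine h1.trans ?_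
  rw [abs_mul, abs_mul, abs_mul]
  have hga : |g t| ≤ Mg := hMg t
  have ha2 : |a ^ 2| ≤ B ^ 2 := by rw [abs_of_nonneg (by positivity)]; nlinarith
  have hyab : |y * (a + b)| ≤ B * (2 * B) := by
    rw [abs_mul]
    have : |y| ≤ B := abs_le.mpr ⟨hy.1, hy.2⟩
    have : |a + b| ≤ 2 * B := by rw [abs_of_nonneg (by linarith)]; linarith
    exact mul_le_mul (abs_le.mpr ⟨hy.1, hy.2⟩) this (abs_nonneg _) hB
  have habs : 0 ≤ |x - y| := abs_nonneg _
  nlinarith [mul_le_mul_of_nonneg_left hga habs, mul_le_mul_of_nonneg_left ha2 habs,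
    mul_le_mul hyab hab (abs_nonneg _) (by positivity : (0:ℝ) ≤ B * (2 * B))]

/-- Uniqueness: a solution which vanishes somewhere vanishes everywhere. -/
lemma aux_never_zero {f : ℝ → ℝ} {v : ℝ → ℝ → ℝ} {K : NNReal} {s : Set ℝ}
    (hv : ∀ t, LipschitzOnWith K (v t) s) (hv0 : ∀ t, v t 0 = 0) (h0s : (0:ℝ) ∈ s)
    (hf : ∀ t, HasDerivAt f (v t (f t)) t) (hfs : ∀ t, f t ∈ s)
    (t₀ t₁ : ℝ) (h : f t₁ = 0) : f t₀ = 0 := by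
  set b : ℝ := |t₀| + |t₁| + 1 with hbdef
  have hb0 : 0 < b := by positivity
  have ht₁ : t₁ ∈ Set.Ioo (-b) b := by
    constructor <;> [nlinarith [abs_nonneg t₀, neg_abs_le t₁];
      nlinarith [abs_nonneg t₀, le_abs_self t₁]]
  have ht₀ : t₀ ∈ Set.Ioo (-b) b := by
    constructor <;> [nlinarith [abs_nonneg t₁, neg_abs_le t₀];
      nlinarith [abs_nonneg t₁, le_abs_self t₀]]
  have := ODE_solution_unique_of_mem_Ioo (v := v) (s := fun _ => s) (K := K)
    (f := f) (g := fun _ => 0) (t₀ := t₁) (a := -b) (b := b)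
    (fun t _ => hv t) ht₁
    (fun t _ => ⟨hf t, hfs t⟩)
    (fun t _ => ⟨by simpa [hv0 t] using (hasDerivAt_const t (0:ℝ)), h0s⟩)
    (by simpa using h)
  exact this ht₀

/-- A continuous never-vanishing function positive at one point is positive everywhere. -/
lemma aux_pos_everywhere {f : ℝ → ℝ} (hc : Continuous f) (h0 : 0 < f 0)
    (hnz : ∀ t, f t ≠ 0) : ∀ t, 0 < f t := by
  intro t
  by_contra h
  push_neg at h
  have hlt : f t < 0 := lt_of_le_of_ne h (hnz t)
  rcases le_total t 0 with ht | ht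
  · obtain ⟨c, _, hc0⟩ := intermediate_value_Icc ht hc.continuousOn
      (show (0:ℝ) ∈ Set.Icc (f t) (f 0) from ⟨hlt.le, h0.le⟩)
    exact hnz c hc0
  · obtain ⟨c, _, hc0⟩ := intermediate_value_Icc' ht hc.continuousOn
      (show (0:ℝ) ∈ Set.Icc (f t) (f 0) from ⟨hlt.le, h0.le⟩)
    exact hnz c hc0

set_option maxHeartbeats 1000000 in
/-- For fixed `(ω,θ)`, let `β̃(ω,θ)` be the supremum of the initial data `r₀ ≥ 0`
whose solution of the dissipative equation `r' = r (g(t) - k_ρ(r))` is globally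
defined and bounded. Then `β̃(ω,θ) > 0` if and only if the solution `r_l(t) `
of the linear equation `r' = r g(t)` with `r_l(0) = 1` is bounded on `(-∞, 0]`.
Here `g(t) = g(σ̃(t,ω,θ))` is continuous and bounded. -/
theorem stmt9 (ρ : ℝ) (hρ : ρ ∈ Set.Ioc (0 : ℝ) 1) (k g : ℝ → ℝ)
    (hk : ∀ r : ℝ, k r = if r ≤ ρ then 0 else (r - ρ) ^ 2)
    (hg : Continuous g) (hgb : ∃ M, ∀ t, |g t| ≤ M)
    (rl : ℝ → ℝ) (hrl0 : rl 0 = 1)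
    (hrl : ∀ t, HasDerivAt rl (rl t * g t) t)
    (β : ℝ)
    (hβ : β = sSup {r₀ : ℝ | 0 ≤ r₀ ∧ ∃ r : ℝ → ℝ, r 0 = r₀ ∧
      (∀ t, HasDerivAt r (r t * (g t - k (r t))) t) ∧ ∃ M, ∀ t, |r t| ≤ M}) :
    0 < β ↔ ∃ M, ∀ t ≤ (0 : ℝ), rl t ≤ M := by
  subst hβ
  set S := {r₀ : ℝ | 0 ≤ r₀ ∧ ∃ r : ℝ → ℝ, r 0 = r₀ ∧
      (∀ t, HasDerivAt r (r t * (g t - k (r t))) t) ∧ ∃ M, ∀ t, |r t| ≤ M} with hS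
  obtain ⟨Mg, hMg⟩ := hgb
  have hMg0 : 0 ≤ Mg := (abs_nonneg _).trans (hMg 0)
  have hρ0 : 0 < ρ := hρ.1
  have hρ1 : ρ ≤ 1 := hρ.2
  have hk2 : ∀ x, k x = max (x - ρ) 0 ^ 2 := by
    intro x
    rcases le_or_gt x ρ with h | h
    · rw [hk, if_pos h, max_eq_right (by linarith : x - ρ ≤ 0)]
      norm_num
    · rw [hk, if_neg (not_le.mpr h), max_eq_left (by linarith : (0:ℝ) ≤ x - ρ)]
  have hk0 : ∀ x, 0 ≤ k x := fun x => by rw [hk2]; positivity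
  set U : ℝ := ρ + Real.sqrt Mg + 1 with hUdef
  have hsq : Real.sqrt Mg ^ 2 = Mg := Real.sq_sqrt hMg0
  have hs0 : 0 ≤ Real.sqrt Mg := Real.sqrt_nonneg _
  have hU1 : 1 ≤ U := by rw [hUdef]; linarith
  have hUρ : ρ < U := by rw [hUdef]; linarith
  have hU0 : 0 ≤ U := by linarith
  have hUk : ∀ x, U ≤ x → Mg + 1 ≤ k x := by
    intro x hx
    rw [hk2]
    have h2 : max (x - ρ) 0 = x - ρ := max_eq_left (by rw [hUdef] at hx; linarith)
    rw [h2]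
    rw [hUdef] at hx
    nlinarith
  -- S is bounded above by U
  have hSb : ∀ x ∈ S, x ≤ U := by
    rintro x ⟨hx0, r, hr0, hr, M, hM⟩
    by_contra hxU
    push_neg at hxU
    have hrc : Continuous r := continuous_iff_continuousAt.mpr fun t => (hr t).continuousAt
    have step1 : ∀ t ≤ (0:ℝ), U < r t := by
      intro t ht
      by_contra hle
      push_neg at hle
      set A : Set ℝ := Set.Icc t 0 ∩ r ⁻¹' Set.Iic U with hA
      have hAne : A.Nonempty := ⟨t, ⟨le_refl t, ht⟩, hle⟩
      have hAcl : IsClosed A := isClosed_Icc.inter (isClosed_Iic.preimage hrc)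
      have hAbd : BddAbove A := BddAbove.mono Set.inter_subset_left bddAbove_Icc
      have ht'A : sSup A ∈ A := hAcl.csSup_mem hAne hAbd
      have ht'0 : sSup A ≤ 0 := ht'A.1.2
      have hrt' : r (sSup A) ≤ U := ht'A.2
      have hmid : ∀ s ∈ Set.Ioo (sSup A) 0, U < r s := by
        intro s hs
        by_contra hsle
        push_neg at hsle
        have hsA : s ∈ A := ⟨⟨ht'A.1.1.trans hs.1.le, hs.2.le⟩, hsle⟩
        exact absurd (le_csSup hAbd hsA) (not_le.mpr hs.1)
      have hderneg : ∀ s ∈ Set.Ioo (sSup A) (0:ℝ), r s * (g s - k (r s)) ≤ 0 := by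
        intro s hs
        have hUs := hmid s hs
        have h1 : g s - k (r s) ≤ -1 := by
          have := hUk (r s) hUs.le
          have := (abs_le.mp (hMg s)).2
          linarith
        have h2 : 0 ≤ r s := by linarith
        nlinarith [mul_le_mul_of_nonneg_left h1 h2]
      have hmono := aux_mono (f := r) (f' := fun s => r s * (g s - k (r s))) ht'0
        (fun s _ => hr s) hderneg
      rw [hr0] at hmono
      linarith
    have hx_le_M : x ≤ M := by rw [← hr0]; exact (le_abs_self _).trans (hM 0)
    have hxpos : 0 < x := by linarith
    have hMpos : 0 < M := lt_of_lt_of_le hxpos hx_le_M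
    set T : ℝ := Real.log x - Real.log M - 1 with hT
    have hTneg : T ≤ 0 := by
      have := Real.log_le_log hxpos hx_le_M
      rw [hT]; linarith
    have hd1 : ∀ s ∈ Set.Icc T (0:ℝ), HasDerivAt (fun y => Real.log (r y) + y)
        ((g s - k (r s)) + 1) s := by
      intro s hs
      have hspos : 0 < r s := lt_trans (by linarith) (step1 s hs.2)
      have hd := (hr s).log (ne_of_gt hspos)
      rw [mul_div_cancel_left₀ _ (ne_of_gt hspos)] at hd
      exact (hd.add (hasDerivAt_id s)).congr_of_eventuallyEq (Filter.Eventually.of_forall fun y => rfl)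
    have hd2 : ∀ s ∈ Set.Ioo T (0:ℝ), (g s - k (r s)) + 1 ≤ 0 := by
      intro s hs
      have := hUk (r s) (step1 s hs.2.le).le
      have := (abs_le.mp (hMg s)).2
      linarith
    have key := aux_mono (f := fun s => Real.log (r s) + s)
      (f' := fun s => (g s - k (r s)) + 1) hTneg hd1 hd2
    have hrTpos : 0 < r T := lt_trans (by linarith) (step1 T hTneg)
    have h1 : Real.log (r T) ≤ Real.log M :=
      Real.log_le_log hrTpos ((le_abs_self _).trans (hM T))
    simp only [hr0, add_zero] at key
    rw [hT] at key
    linarith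
  have h0S : (0:ℝ) ∈ S := by
    refine ⟨le_refl 0, fun _ => 0, rfl, ?_, 0, by simp⟩
    intro t
    simpa using hasDerivAt_const t (0:ℝ)
  have hSne : S.Nonempty := ⟨0, h0S⟩
  have hSbdd : BddAbove S := ⟨U, fun x hx => hSb x hx⟩
  -- rl is positive everywhere
  have hrlc : Continuous rl := continuous_iff_continuousAt.mpr fun t => (hrl t).continuousAt
  have hlin_lip : ∀ t, LipschitzOnWith (Real.toNNReal Mg) (fun x => x * g t) Set.univ := by
    intro t
    apply LipschitzOnWith.of_dist_le_mul
    intro x _ y _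
    rw [Real.coe_toNNReal _ hMg0, Real.dist_eq, Real.dist_eq]
    have h1 : x * g t - y * g t = (x - y) * g t := by ring
    rw [h1, abs_mul, mul_comm]
    exact mul_le_mul_of_nonneg_right (hMg t) (abs_nonneg _)
  have hrl_nz : ∀ t, rl t ≠ 0 := by
    intro t h
    have h2 := aux_never_zero (v := fun s x => x * g s) hlin_lip (fun s => zero_mul _)
      (Set.mem_univ _) hrl (fun _ => Set.mem_univ _) 0 t h
    rw [hrl0] at h2
    exact one_ne_zero h2
  have hrlpos : ∀ t, 0 < rl t := aux_pos_everywhere hrlc (by rw [hrl0]; norm_num) hrl_nz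
  constructor
  · -- forward direction
    intro hβpos
    have hex : ∃ x ∈ S, 0 < x := by
      by_contra h
      push_neg at h
      have : sSup S ≤ 0 := csSup_le hSne h
      linarith
    obtain ⟨x, hxS, hxpos⟩ := hex
    obtain ⟨-, r, hr0, hr, M, hM⟩ := hxS
    have hrc : Continuous r := continuous_iff_continuousAt.mpr fun t => (hr t).continuousAt
    have hx_le_M : x ≤ M := by rw [← hr0]; exact (le_abs_self _).trans (hM 0)
    have hMpos : 0 < M := lt_of_lt_of_le hxpos hx_le_M
    have hvlip := fun t => aux_lip hρ0.le hMpos.le hMg hk2 (g := g) t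
    have hr_nz : ∀ t, r t ≠ 0 := by
      intro t h
      have h2 := aux_never_zero (v := fun s y => y * (g s - k y)) hvlip
        (fun s => zero_mul _) (⟨by linarith, by linarith⟩) hr
        (fun s => abs_le.mp (hM s)) 0 t h
      rw [hr0] at h2
      exact (ne_of_gt hxpos) h2
    have hrpos := aux_pos_everywhere hrc (by rw [hr0]; exact hxpos) hr_nz
    refine ⟨M / x, ?_⟩
    intro t ht
    have hd1 : ∀ s ∈ Set.Icc t (0:ℝ), HasDerivAt
        (fun y => Real.log (r y) - Real.log (rl y)) (-(k (r s))) s := by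
      intro s _
      have h1 := (hr s).log (hr_nz s)
      have h2 := (hrl s).log (hrl_nz s)
      rw [mul_div_cancel_left₀ _ (hr_nz s)] at h1
      rw [mul_div_cancel_left₀ _ (hrl_nz s)] at h2
      have h3 := h1.sub h2
      have h4 : g s - k (r s) - g s = -(k (r s)) := by ring
      rw [h4] at h3
      exact h3
    have hd2 : ∀ s ∈ Set.Ioo t (0:ℝ), -(k (r s)) ≤ 0 := by
      intro s _
      simp only [neg_nonpos]
      exact hk0 (r s)
    have key := aux_mono (f := fun s => Real.log (r s) - Real.log (rl s))
      (f' := fun s => -(k (r s))) ht hd1 hd2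
    simp only [hr0, hrl0, Real.log_one, sub_zero] at key
    have h1 : Real.log (r t) ≤ Real.log M :=
      Real.log_le_log (hrpos t) ((le_abs_self _).trans (hM t))
    have h2 : Real.log (rl t) ≤ Real.log (M / x) := by
      rw [Real.log_div (ne_of_gt hMpos) (ne_of_gt hxpos)]
      linarith
    calc rl t = Real.exp (Real.log (rl t)) := (Real.exp_log (hrlpos t)).symm
    _ ≤ Real.exp (Real.log (M / x)) := Real.exp_le_exp.mpr h2
    _ = M / x := Real.exp_log (by positivity)
  · -- reverse direction
    rintro ⟨M, hMb⟩
    set M1 : ℝ := max M 1 with hM1def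
    have hM11 : 1 ≤ M1 := le_max_right _ _
    have hM1pos : 0 < M1 := by linarith
    have hM1b : ∀ t ≤ (0:ℝ), rl t ≤ M1 := fun t ht => (hMb t ht).trans (le_max_left _ _)
    set c : ℝ := ρ / M1 with hcdef
    have hc0 : 0 < c := div_pos hρ0 hM1pos
    have hcρ : c ≤ ρ := by rw [hcdef]; exact div_le_self hρ0.le hM11
    have hcrl : ∀ t ≤ (0:ℝ), c * rl t ≤ ρ := by
      intro t ht
      have h1 := mul_le_mul_of_nonneg_left (hM1b t ht) hc0.le
      rw [hcdef, div_mul_cancel₀ _ (ne_of_gt hM1pos)] at h1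
      rw [hcdef]
      exact h1
    -- clamped vector field
    set P : ℝ → ℝ := fun y => max 0 (min y U) with hPdef
    set F : ℝ → ℝ → ℝ := fun t y => P y * (g t - k (P y)) with hFdef
    have hP0 : ∀ y, 0 ≤ P y := fun y => le_max_left _ _
    have hPU : ∀ y, P y ≤ U := fun y => max_le hU0 (min_le_right _ _)
    have hPid : ∀ y, 0 ≤ y → y ≤ U → P y = y := by
      intro y h1 h2
      rw [hPdef]
      simp only []
      rw [min_eq_left h2, max_eq_right h1]
    have hP1 : ∀ x y, |P x - P y| ≤ |x - y| := by
      intro x y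
      have h1 : |P x - P y| ≤ |min x U - min y U| := by
        rw [hPdef]
        simp only []
        rw [max_comm 0 (min x U), max_comm 0 (min y U)]
        exact abs_max_sub_max_le_abs _ _ 0
      have h2 : |min x U - min y U| ≤ |x - y| := by
        have h3 := abs_min_sub_min_le_max x U y U
        simpa using h3
      exact h1.trans h2
    set L : NNReal := Real.toNNReal (Mg + 3 * U ^ 2) with hLdef
    have hlipU := fun t => aux_lip hρ0.le hU0 hMg hk2 (g := g) t
    have hFlip : ∀ t, LipschitzWith L (F t) := by
      intro t
      apply LipschitzWith.of_dist_le_mul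
      intro x y
      have hxm : P x ∈ Set.Icc (-U) U := ⟨by linarith [hP0 x], hPU x⟩
      have hym : P y ∈ Set.Icc (-U) U := ⟨by linarith [hP0 y], hPU y⟩
      have h1 : dist (F t x) (F t y) ≤ (L : ℝ) * dist (P x) (P y) :=
        (hlipU t).dist_le_mul _ hxm _ hym
      refine h1.trans ?_
      apply mul_le_mul_of_nonneg_left _ L.coe_nonneg
      rw [Real.dist_eq, Real.dist_eq]
      exact hP1 x y
    set Cb : ℝ := U * (Mg + U ^ 2) with hCbdef
    have hCb0 : 0 ≤ Cb := by nlinarith [sq_nonneg U]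
    have hkP : ∀ y, k (P y) ≤ U ^ 2 := by
      intro y
      rw [hk2]
      have h1 : max (P y - ρ) 0 ≤ U := max_le (by linarith [hPU y]) hU0
      have h2 : 0 ≤ max (P y - ρ) 0 := le_max_right _ _
      nlinarith
    have hFb : ∀ t y, |F t y| ≤ Cb := by
      intro t y
      have h1 : |P y| ≤ U := abs_le.mpr ⟨by linarith [hP0 y], hPU y⟩
      have h2 : |g t - k (P y)| ≤ Mg + U ^ 2 := by
        rw [abs_le]
        constructor
        · have := (abs_le.mp (hMg t)).1
          have := hkP y
          linarith
        · have := (abs_le.mp (hMg t)).2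
          have := hk0 (P y)
          nlinarith [sq_nonneg U]
      calc |F t y| = |P y| * |g t - k (P y)| := abs_mul _ _
      _ ≤ U * (Mg + U ^ 2) := mul_le_mul h1 h2 (abs_nonneg _) hU0
    -- local solutions on arbitrarily large intervals
    have hex : ∀ n : ℕ, ∃ f : ℝ → ℝ, f 0 = c ∧
        ∀ t ∈ Set.Ioo (-((n:ℝ)+1)) ((n:ℝ)+1), HasDerivAt f (F t (f t)) t := by
      intro n
      set N : ℝ := (n:ℝ) + 1 with hNdef
      have hN0 : 0 < N := by positivity
      have hpl : IsPicardLindelof F (tmin := -N) (tmax := N) ⟨0, ⟨by linarith, by linarith⟩⟩ c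
          ⟨Cb * N + 1, add_nonneg (mul_nonneg hCb0 hN0.le) zero_le_one⟩ 0 ⟨Cb, hCb0⟩ L := by
        refine ⟨fun t _ => (hFlip t).lipschitzOnWith,
          ?_, fun t _ y _ => by rw [Real.norm_eq_abs]; exact hFb t y, ?_⟩
        · intro y _
          apply Continuous.continuousOn
          show Continuous fun t => P y * (g t - k (P y))
          exact continuous_const.mul (hg.sub continuous_const)
        · have h1 : max (N - 0) (0 - -N) = N := by
            rw [sub_zero, zero_sub, neg_neg, max_self]
          simp only [NNReal.coe_mk, NNReal.coe_zero, sub_zero] at h1 ⊢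
          rw [h1]
          show Cb * N ≤ Cb * N + 1
          linarith
      obtain ⟨f, hf0, hfd⟩ := hpl.exists_eq_forall_mem_Icc_hasDerivWithinAt₀
      refine ⟨f, hf0, fun t ht => ?_⟩
      exact (hfd t (Set.Ioo_subset_Icc_self ht)).hasDerivAt (Icc_mem_nhds ht.1 ht.2)
    choose f hf0 hfd using hex
    -- pairwise uniqueness
    have huniq : ∀ (a b : ℕ) (t : ℝ), |t| < (a:ℝ) + 1 → |t| < (b:ℝ) + 1 → f a t = f b t := by
      intro a b t hta htb
      set m : ℝ := min ((a:ℝ)+1) ((b:ℝ)+1) with hmdef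
      have htm : |t| < m := lt_min hta htb
      set b' : ℝ := (|t| + m) / 2 with hb'def
      have habs : 0 ≤ |t| := abs_nonneg t
      have hb'1 : |t| < b' := by rw [hb'def]; linarith
      have hb'2 : b' < m := by rw [hb'def]; linarith
      have hb'0 : 0 < b' := lt_of_le_of_lt habs hb'1
      have hsuba : ∀ s ∈ Set.Icc (-b') b', s ∈ Set.Ioo (-((a:ℝ)+1)) ((a:ℝ)+1) := by
        intro s hs
        have h1 : m ≤ (a:ℝ)+1 := min_le_left _ _
        exact ⟨by linarith [hs.1], by linarith [hs.2]⟩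
      have hsubb : ∀ s ∈ Set.Icc (-b') b', s ∈ Set.Ioo (-((b:ℝ)+1)) ((b:ℝ)+1) := by
        intro s hs
        have h1 : m ≤ (b:ℝ)+1 := min_le_right _ _
        exact ⟨by linarith [hs.1], by linarith [hs.2]⟩
      have heq := ODE_solution_unique_of_mem_Icc (v := F) (s := fun _ => Set.univ) (K := L)
        (f := f a) (g := f b) (t₀ := 0) (a := -b') (b := b')
        (fun s _ => (hFlip s).lipschitzOnWith)
        ⟨by linarith, hb'0⟩
        (fun s hs => ((hfd a s (hsuba s hs)).continuousAt).continuousWithinAt)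
        (fun s hs => hfd a s (hsuba s (Set.Ioo_subset_Icc_self hs)))
        (fun _ _ => Set.mem_univ _)
        (fun s hs => ((hfd b s (hsubb s hs)).continuousAt).continuousWithinAt)
        (fun s hs => hfd b s (hsubb s (Set.Ioo_subset_Icc_self hs)))
        (fun _ _ => Set.mem_univ _)
        (by rw [hf0 a, hf0 b])
      exact heq (abs_le.mp hb'1.le)
    -- the global solution
    set rr : ℝ → ℝ := fun t => f ⌈|t|⌉₊ t with hrrdef
    have hceil : ∀ t : ℝ, |t| < (⌈|t|⌉₊ : ℝ) + 1 :=
      fun t => lt_of_le_of_lt (Nat.le_ceil _) (lt_add_one _)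
    have hrr0 : rr 0 = c := hf0 _
    have hrrd : ∀ t, HasDerivAt rr (F t (rr t)) t := by
      intro t
      set n := ⌈|t|⌉₊ with hn
      have hopen : IsOpen {s : ℝ | |s| < (n:ℝ) + 1} :=
        isOpen_lt continuous_abs continuous_const
      have hmem : t ∈ {s : ℝ | |s| < (n:ℝ) + 1} := hceil t
      have hev : rr =ᶠ[nhds t] f n := by
        filter_upwards [hopen.mem_nhds hmem] with s hs
        exact huniq _ _ s (hceil s) hs
      have ht' : t ∈ Set.Ioo (-((n:ℝ)+1)) ((n:ℝ)+1) := abs_lt.mp (hceil t)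
      have hd := (hfd n t ht').congr_of_eventuallyEq hev
      have hteq : rr t = f n t := rfl
      rwa [hteq]
    have hrrc : Continuous rr := continuous_iff_continuousAt.mpr fun t => (hrrd t).continuousAt
    have hF0 : ∀ t, F t 0 = 0 := by
      intro t
      have h1 : P 0 = 0 := by
        rw [hPdef]
        simp only []
        rw [min_eq_left hU0, max_self]
      show P 0 * (g t - k (P 0)) = 0
      rw [h1, zero_mul]
    have hrr_nz : ∀ t, rr t ≠ 0 := by
      intro t h
      have h2 := aux_never_zero (v := F) (s := Set.univ) (K := L)
        (fun s => (hFlip s).lipschitzOnWith) hF0 (Set.mem_univ _) hrrd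
        (fun _ => Set.mem_univ _) 0 t h
      rw [hrr0] at h2
      exact (ne_of_gt hc0) h2
    have hrrpos : ∀ t, 0 < rr t := aux_pos_everywhere hrrc (by rw [hrr0]; exact hc0) hrr_nz
    -- on (-∞, 0] the solution agrees with c * rl
    have hcrl_deriv : ∀ s ≤ (0:ℝ), HasDerivAt (fun y => c * rl y) (F s (c * rl s)) s := by
      intro s hs
      have h1 := (hrl s).const_mul c
      have h2 : 0 ≤ c * rl s := mul_nonneg hc0.le (hrlpos s).le
      have h3 : c * rl s ≤ ρ := hcrl s hs
      have h4 : P (c * rl s) = c * rl s := hPid _ h2 (h3.trans hUρ.le)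
      have h5 : k (c * rl s) = 0 := by rw [hk]; exact if_pos h3
      have h6 : F s (c * rl s) = c * (rl s * g s) := by
        show P (c * rl s) * (g s - k (P (c * rl s))) = _
        rw [h4, h5]
        ring
      rw [h6]
      exact h1
    have hrr_lin : ∀ t ≤ (0:ℝ), rr t = c * rl t := by
      intro t ht
      have heq := ODE_solution_unique_of_mem_Icc_left (v := F) (s := fun _ => Set.univ) (K := L)
        (f := rr) (g := fun y => c * rl y) (a := t) (b := 0)
        (fun s _ => (hFlip s).lipschitzOnWith)
        (hrrc.continuousOn)
        (fun s _ => (hrrd s).hasDerivWithinAt)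
        (fun _ _ => Set.mem_univ _)
        ((continuous_const.mul hrlc).continuousOn)
        (fun s hs => (hcrl_deriv s hs.2).hasDerivWithinAt)
        (fun _ _ => Set.mem_univ _)
        (by show rr 0 = c * rl 0; rw [hrr0, hrl0, mul_one])
      exact heq (Set.left_mem_Icc.mpr ht)
    -- forward bound
    have hrrU : ∀ t, 0 ≤ t → rr t ≤ U := by
      intro t1 ht1
      by_contra hgt
      push_neg at hgt
      set A : Set ℝ := Set.Icc 0 t1 ∩ rr ⁻¹' Set.Iic U with hA
      have h0A : (0:ℝ) ∈ A := by
        refine ⟨⟨le_refl 0, ht1⟩, ?_⟩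
        rw [Set.mem_preimage, hrr0]
        exact Set.mem_Iic.mpr (hcρ.trans hUρ.le)
      have hAcl : IsClosed A := isClosed_Icc.inter (isClosed_Iic.preimage hrrc)
      have hAbd : BddAbove A := BddAbove.mono Set.inter_subset_left bddAbove_Icc
      have ht'A : sSup A ∈ A := hAcl.csSup_mem ⟨0, h0A⟩ hAbd
      have hmid : ∀ s ∈ Set.Ioo (sSup A) t1, U < rr s := by
        intro s hs
        by_contra hsle
        push_neg at hsle
        have hsA : s ∈ A := ⟨⟨ht'A.1.1.trans hs.1.le, hs.2.le⟩, hsle⟩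
        exact absurd (le_csSup hAbd hsA) (not_le.mpr hs.1)
      have hderneg : ∀ s ∈ Set.Ioo (sSup A) t1, F s (rr s) ≤ 0 := by
        intro s hs
        have hUs := hmid s hs
        have hPU' : P (rr s) = U := by
          rw [hPdef]
          simp only []
          rw [min_eq_right hUs.le, max_eq_right hU0]
        show P (rr s) * (g s - k (P (rr s))) ≤ 0
        rw [hPU']
        have h1 := hUk U (le_refl U)
        have h2 := (abs_le.mp (hMg s)).2
        have h3 : g s - k U ≤ -1 := by linarith
        have h4 : U * (g s - k U) ≤ U * (-1) := mul_le_mul_of_nonneg_left h3 hU0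
        linarith
      have hmono := aux_mono (f := rr) (f' := fun s => F s (rr s)) ht'A.1.2
        (fun s _ => hrrd s) hderneg
      have : rr t1 ≤ U := hmono.trans ht'A.2
      exact absurd this (not_le.mpr hgt)
    -- rr solves the original equation and is bounded
    have hrrU' : ∀ t, rr t ≤ U := by
      intro t
      rcases le_total t 0 with ht | ht
      · rw [hrr_lin t ht]
        exact (hcrl t ht).trans hUρ.le
      · exact hrrU t ht
    have hrr_eq : ∀ t, HasDerivAt rr (rr t * (g t - k (rr t))) t := by
      intro t
      have hP : P (rr t) = rr t := hPid _ (hrrpos t).le (hrrU' t)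
      have h1 := hrrd t
      have h2 : F t (rr t) = rr t * (g t - k (rr t)) := by
        show P (rr t) * (g t - k (P (rr t))) = _
        rw [hP]
      rwa [h2] at h1
    have hbound : ∀ t, |rr t| ≤ U := by
      intro t
      rw [abs_of_pos (hrrpos t)]
      exact hrrU' t
    have hcS : c ∈ S := ⟨hc0.le, rr, hrr0, hrr_eq, U, hbound⟩
    calc (0:ℝ) < c := hc0
    _ ≤ sSup S := le_csSup hSbdd hcS
end

section
/- Let e : Ω → ℝ be continuous with ∫ e dm = 0 over a minimal uniquely ergodic flow, and suppose that for a.e. ω one has sup_{t∈ℝ} ∫₀ᵗ e(ω·s) ds < ∞ while e admits no continuous primitive. Then there exist a measurable function h_e : Ω → (−∞,0] and a σ-invariant full-measure set Ω^e such that for all ω ∈ Ω^e: h_e(ω·t) − h_e(ω) = ∫₀ᵗ e(ω·s) ds for all t, sup_{t∈ℝ} h_e(ω·t) < ∞, and inf_{t≤0} h_e(ω·t) = inf_{t≥0} h_e(ω·t) = −∞. -/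
open MeasureTheory
open Set

theorem GHflow {Ω : Type*} [MetricSpace Ω] [CompactSpace Ω]
    (φ : ℝ → Ω → Ω) (hφc : Continuous fun p : ℝ × Ω => φ p.1 p.2)
    (hφ0 : ∀ ω, φ 0 ω = ω) (hφadd : ∀ s t ω, φ (s + t) ω = φ s (φ t ω))
    (hmin : ∀ ω, Dense (Set.range fun t => φ t ω))
    (F : Ω → ℝ → ℝ) (hFc : Continuous fun p : Ω × ℝ => F p.1 p.2)
    (hcoc : ∀ ω s t, F ω (s + t) = F ω s + F (φ s ω) t)
    (ω₀ : Ω) (C : ℝ) (hC : ∀ t, 0 ≤ t → |F ω₀ t| ≤ C) :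
    ∃ h : Ω → ℝ, Continuous h ∧ ∀ ω t, h (φ t ω) - h ω = F ω t := by
  have hF0 : ∀ ω, F ω 0 = 0 := by
    intro ω
    have h := hcoc ω 0 0
    rw [hφ0, add_zero] at h
    linarith
  set Ψ : ℝ → Ω × ℝ → Ω × ℝ := fun t p => (φ t p.1, p.2 + F p.1 t) with hΨdef
  have hΨc : ∀ t, Continuous (Ψ t) := by
    intro t
    exact (hφc.comp (continuous_const.prodMk continuous_fst)).prodMk
      (continuous_snd.add (hFc.comp (continuous_fst.prodMk continuous_const)))
  have hΨ0 : ∀ p, Ψ 0 p = p := by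
    intro p; simp [hΨdef, hφ0, hF0]
  have hΨadd : ∀ s t p, Ψ (s + t) p = Ψ s (Ψ t p) := by
    intro s t p
    have h1 : F p.1 (s + t) = F p.1 t + F (φ t p.1) s := by
      rw [add_comm s t]; exact hcoc p.1 t s
    simp only [hΨdef, Prod.mk.injEq]
    constructor
    · rw [hφadd]
    · rw [h1]; ring
  -- the family of nonempty compact forward-invariant sets
  set S : Set (Set (Ω × ℝ)) :=
    {K | K.Nonempty ∧ IsCompact K ∧ ∀ t, 0 ≤ t → ∀ z ∈ K, Ψ t z ∈ K} with hSdef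
  -- initial set: closure of forward orbit of (ω₀, 0)
  set z₀ : Ω × ℝ := (ω₀, 0) with hz₀
  set K₀ : Set (Ω × ℝ) := closure ((fun t => Ψ t z₀) '' Set.Ici 0) with hK₀
  have horbsub : (fun t => Ψ t z₀) '' Set.Ici 0 ⊆ Set.univ ×ˢ Set.Icc (-C) C := by
    rintro _ ⟨t, ht, rfl⟩
    refine ⟨trivial, ?_⟩
    have := hC t ht
    have h1 := abs_le.mp this
    simp only [hΨdef, hz₀, zero_add]
    exact ⟨h1.1, h1.2⟩
  have hK₀S : K₀ ∈ S := by
    refine ⟨⟨z₀, subset_closure ⟨0, Set.self_mem_Ici, hΨ0 z₀⟩⟩, ?_, ?_⟩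
    · have hcc : IsCompact ((Set.univ : Set Ω) ×ˢ Set.Icc (-C) C) :=
        isCompact_univ.prod isCompact_Icc
      exact IsCompact.of_isClosed_subset hcc isClosed_closure
        (closure_minimal horbsub (isClosed_univ.prod isClosed_Icc))
    · intro t ht z hz
      have h1 : Ψ t '' ((fun u => Ψ u z₀) '' Set.Ici 0) ⊆ (fun u => Ψ u z₀) '' Set.Ici 0 := by
        rintro _ ⟨_, ⟨u, hu, rfl⟩, rfl⟩
        exact ⟨t + u, Set.mem_Ici.mpr (add_nonneg ht (Set.mem_Ici.mp hu)),
          hΨadd t u z₀⟩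
      have h2 : Ψ t '' K₀ ⊆ K₀ :=
        (image_closure_subset_closure_image (hΨc t)).trans (closure_mono h1)
      exact h2 ⟨z, hz, rfl⟩
  -- Zorn
  obtain ⟨M, -, hMS, hMmin⟩ : ∃ M, M ⊆ K₀ ∧ M ∈ S ∧ ∀ K ∈ S, K ⊆ M → K = M := by
    have Hz : ∀ c ⊆ S, IsChain (· ⊆ ·) c → c.Nonempty → ∃ lb ∈ S, ∀ s ∈ c, lb ⊆ s := by
      intro c hcS hchain hcne
      refine ⟨⋂₀ c, ⟨?_, ?_, ?_⟩, fun s hs => sInter_subset_of_mem hs⟩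
      · haveI : Nonempty c := hcne.to_subtype
        apply IsCompact.nonempty_sInter_of_directed_nonempty_isCompact_isClosed
        · intro U hU V hV
          rcases hchain.total hU hV with h | h
          · exact ⟨U, hU, subset_rfl, h⟩
          · exact ⟨V, hV, h, subset_rfl⟩
        · exact fun U hU => (hcS hU).1
        · exact fun U hU => (hcS hU).2.1
        · exact fun U hU => (hcS hU).2.1.isClosed
      · obtain ⟨K, hK⟩ := hcne
        exact IsCompact.of_isClosed_subset ((hcS hK).2.1)
          (isClosed_sInter fun U hU => ((hcS hU).2.1).isClosed) (sInter_subset_of_mem hK)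
      · intro t ht z hz
        exact fun U hU => (hcS hU).2.2 t ht z (hz U hU)
    obtain ⟨M, hM₁, hM₂⟩ := zorn_superset_nonempty S Hz K₀ hK₀S
    exact ⟨M, hM₁, hM₂.prop, fun K hK hKM => (hM₂.eq_of_le hK hKM)⟩
  obtain ⟨hMne, hMcpt, hMfwd⟩ := hMS
  -- forward images equal M
  have hMeq : ∀ s, 0 ≤ s → Ψ s '' M = M := by
    intro s hs
    have h1 : Ψ s '' M ∈ S := by
      refine ⟨hMne.image _, hMcpt.image (hΨc s), ?_⟩
      rintro t ht _ ⟨z, hz, rfl⟩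
      rw [← hΨadd, add_comm, hΨadd]
      exact ⟨Ψ t z, hMfwd t ht z hz, rfl⟩
    have h2 : Ψ s '' M ⊆ M := by
      rintro _ ⟨z, hz, rfl⟩; exact hMfwd s hs z hz
    exact hMmin _ h1 h2
  have hΨinv : ∀ s (z : Ω × ℝ), Ψ (-s) (Ψ s z) = z := by
    intro s z
    rw [← hΨadd, neg_add_cancel, hΨ0]
  have hMeq' : ∀ s, Ψ s '' M = M := by
    intro s
    rcases le_or_gt 0 s with hs | hs
    · exact hMeq s hs
    · have h1 := hMeq (-s) (by linarith)
      conv_lhs => rw [← h1]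
      rw [← image_comp]
      have : (Ψ s ∘ Ψ (-s)) = id := by
        funext z
        have := hΨinv (-s) z
        rw [neg_neg] at this
        exact this
      rw [this, image_id]
  have hMmem : ∀ t z, z ∈ M → Ψ t z ∈ M := by
    intro t z hz
    rw [← hMeq' t]; exact ⟨z, hz, rfl⟩
  -- projection is everything
  have hproj : ∀ x : Ω, ∃ r : ℝ, (x, r) ∈ M := by
    obtain ⟨⟨x₁, r₁⟩, hx₁⟩ := hMne
    set P : Set Ω := Prod.fst '' M with hP
    have hPclosed : IsClosed P := (hMcpt.image continuous_fst).isClosed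
    have hPdense : Dense P := by
      apply (hmin x₁).mono
      rintro _ ⟨t, rfl⟩
      exact ⟨Ψ t (x₁, r₁), hMmem t _ hx₁, rfl⟩
    have hPuniv : P = univ := hPclosed.closure_eq ▸ hPdense.closure_eq
    intro x
    have : x ∈ P := hPuniv ▸ mem_univ x
    obtain ⟨⟨y, r⟩, hz, rfl⟩ := this
    exact ⟨r, hz⟩
  -- vertical uniqueness
  have hvert : ∀ (x : Ω) (r r' : ℝ), (x, r) ∈ M → (x, r') ∈ M → r = r' := by
    have key : ∀ (x : Ω) (r c : ℝ), 0 < c → (x, r) ∈ M → (x, r + c) ∈ M → False := by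
      intro x r c hc hr hr'
      -- M ⊆ (vertical translate by c of M)
      set T : Ω × ℝ → Ω × ℝ := fun p => (p.1, p.2 + c) with hT
      have hTc : Continuous T := continuous_fst.prodMk (continuous_snd.add continuous_const)
      have hTΨ : ∀ t p, Ψ t (T p) = T (Ψ t p) := by
        intro t p; simp [hT, hΨdef]; ring
      have hM'closed : IsClosed (T '' M) := (hMcpt.image hTc).isClosed
      -- orbit closure of (x, r + c) is in S and contained in M, hence equals M
      set N : Set (Ω × ℝ) := closure ((fun t => Ψ t (x, r + c)) '' Set.Ici 0) with hN
      have hNsubM : N ⊆ M := closure_minimal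
        (by rintro _ ⟨t, ht, rfl⟩; exact hMmem t _ hr') hMcpt.isClosed
      have hNS : N ∈ S := by
        refine ⟨⟨(x, r + c), subset_closure ⟨0, Set.self_mem_Ici, hΨ0 _⟩⟩,
          IsCompact.of_isClosed_subset hMcpt isClosed_closure hNsubM, ?_⟩
        intro t ht z hz
        have h1 : Ψ t '' ((fun u => Ψ u (x, r + c)) '' Set.Ici 0)
            ⊆ (fun u => Ψ u (x, r + c)) '' Set.Ici 0 := by
          rintro _ ⟨_, ⟨u, hu, rfl⟩, rfl⟩
          exact ⟨t + u, Set.mem_Ici.mpr (add_nonneg ht (Set.mem_Ici.mp hu)),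
            hΨadd t u _⟩
        exact ((image_closure_subset_closure_image (hΨc t)).trans (closure_mono h1)) ⟨z, hz, rfl⟩
      have hNM : N = M := hMmin N hNS hNsubM
      have hMsubT : M ⊆ T '' M := by
        have hNT : N ⊆ T '' M := by
          apply closure_minimal ?_ hM'closed
          rintro _ ⟨t, ht, rfl⟩
          have heq : (x, r + c) = T (x, r) := rfl
          show Ψ t (x, r + c) ∈ T '' M
          rw [heq, hTΨ]
          exact ⟨Ψ t (x, r), hMmem t _ hr, rfl⟩
        rw [hNM] at hNT
        exact hNT
      -- iterate: (x, r - n*c) ∈ M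
      have hiter : ∀ n : ℕ, (x, r - n * c) ∈ M := by
        intro n
        induction n with
        | zero => simpa using hr
        | succ n ih =>
          have := hMsubT ih
          obtain ⟨⟨y, s⟩, hy, heq⟩ := this
          have h1 : y = x := congrArg Prod.fst heq
          have h2 : s + c = r - n * c := congrArg Prod.snd heq
          have : s = r - (n + 1 : ℕ) * c := by push_cast; linarith
          rw [← h1, ← this]
          exact hy
      -- contradiction with compactness (boundedness below of second coordinates)
      obtain ⟨b, hb⟩ : ∃ b, ∀ z ∈ M, b ≤ Prod.snd z := by
        obtain ⟨b, hb⟩ := (hMcpt.image continuous_snd).bddBelow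
        exact ⟨b, fun z hz => hb ⟨z, hz, rfl⟩⟩
      obtain ⟨n, hn⟩ := exists_nat_gt ((r - b) / c)
      have h1 := hb _ (hiter n)
      simp only at h1
      have h2 : (r - b) / c < n := hn
      rw [div_lt_iff₀ hc] at h2
      linarith
    intro x r r' hr hr'
    rcases lt_trichotomy r r' with h | h | h
    · exact absurd (key x r (r' - r) (by linarith) hr (by rwa [add_sub_cancel])) (fun h => h.elim)
    · exact h
    · exact absurd (key x r' (r - r') (by linarith) hr' (by rwa [add_sub_cancel])) (fun h => h.elim)
  -- define h
  choose h hmem using hproj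
  have huniq : ∀ x r, (x, r) ∈ M → r = h x := fun x r hr => hvert x r (h x) hr (hmem x)
  -- continuity of h via compactness
  have hMcs : CompactSpace M := isCompact_iff_compactSpace.mp hMcpt
  let eqv : M ≃ Ω :=
    { toFun := fun z => (z : Ω × ℝ).1
      invFun := fun x => ⟨(x, h x), hmem x⟩
      left_inv := by
        rintro ⟨⟨x, r⟩, hz⟩
        exact Subtype.ext (Prod.ext rfl (huniq x r hz).symm)
      right_inv := fun x => rfl }
  have hcont : Continuous eqv := continuous_fst.comp continuous_subtype_val
  let homeo := hcont.homeoOfEquivCompactToT2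
  have hh : Continuous h := by
    have : h = (fun z : M => (z : Ω × ℝ).2) ∘ homeo.symm := rfl
    rw [this]
    exact (continuous_snd.comp continuous_subtype_val).comp homeo.symm.continuous
  refine ⟨h, hh, ?_⟩
  intro ω t
  have h1 : Ψ t (ω, h ω) ∈ M := hMmem t _ (hmem ω)
  have h2 : (φ t ω, h ω + F ω t) ∈ M := h1
  have h3 := huniq _ _ h2
  linarith

/-- Over a minimal uniquely ergodic flow, if `e` is continuous with zero mean,
`sup_{t∈ℝ} ∫₀ᵗ e(ω·s) ds < ∞` for a.e. `ω`, and `e` has no continuous primitive,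
then there are a measurable `h_e : Ω → (-∞,0]` and an invariant full-measure set
`Ω^e` such that for `ω ∈ Ω^e`: `h_e(ω·t) - h_e(ω) = ∫₀ᵗ e(ω·s) ds` for all `t`,
`sup_{t∈ℝ} h_e(ω·t) < ∞`, and `inf_{t≤0} h_e(ω·t) = inf_{t≥0} h_e(ω·t) = -∞`. -/
theorem stmt11 {Ω : Type*} [MetricSpace Ω] [CompactSpace Ω]
    [MeasurableSpace Ω] [BorelSpace Ω]
    (φ : ℝ → Ω → Ω) (hφc : Continuous fun p : ℝ × Ω => φ p.1 p.2)
    (hφ0 : ∀ ω, φ 0 ω = ω) (hφadd : ∀ s t ω, φ (s + t) ω = φ s (φ t ω))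
    (hmin : ∀ ω, Dense (Set.range fun t => φ t ω))
    (m : Measure Ω) [IsProbabilityMeasure m]
    (hinv : ∀ t, MeasurePreserving (φ t) m m)
    (huniq : ∀ m' : Measure Ω, IsProbabilityMeasure m' →
      (∀ t, MeasurePreserving (φ t) m' m') → m' = m)
    (e : Ω → ℝ) (he : Continuous e) (hmean : ∫ ω, e ω ∂m = 0)
    (hbdd : ∀ᵐ ω ∂m, ∃ M : ℝ, ∀ t : ℝ, ∫ s in (0:ℝ)..t, e (φ s ω) ≤ M)
    (hnoprim : ¬ ∃ h : Ω → ℝ, Continuous h ∧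
      ∀ (ω : Ω) (t : ℝ), h (φ t ω) - h ω = ∫ s in (0:ℝ)..t, e (φ s ω)) :
    ∃ (hₑ : Ω → ℝ) (Ωe : Set Ω), Measurable hₑ ∧ (∀ ω, hₑ ω ≤ 0) ∧
      MeasurableSet Ωe ∧ (∀ t, φ t ⁻¹' Ωe = Ωe) ∧ m Ωe = 1 ∧
      ∀ ω ∈ Ωe,
        (∀ t : ℝ, hₑ (φ t ω) - hₑ ω = ∫ s in (0:ℝ)..t, e (φ s ω)) ∧
        (∃ M : ℝ, ∀ t : ℝ, hₑ (φ t ω) ≤ M) ∧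
        (∀ N : ℝ, ∃ t : ℝ, t ≤ 0 ∧ hₑ (φ t ω) < N) ∧
        (∀ N : ℝ, ∃ t : ℝ, 0 ≤ t ∧ hₑ (φ t ω) < N) := by
  classical
  -- the cocycle, made opaque to avoid defeq blow-ups
  obtain ⟨F, hFdef⟩ : ∃ F : Ω → ℝ → ℝ, ∀ ω t, F ω t = ∫ s in (0:ℝ)..t, e (φ s ω) :=
    ⟨fun ω t => ∫ s in (0:ℝ)..t, e (φ s ω), fun _ _ => rfl⟩
  have cφ : ∀ t, Continuous (φ t) := fun t =>
    hφc.comp (continuous_const.prodMk continuous_id)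
  have hφinv : ∀ t ω, φ (-t) (φ t ω) = ω := by
    intro t ω
    rw [← hφadd, neg_add_cancel, hφ0]
  -- joint continuity of F
  have hFc : Continuous fun p : Ω × ℝ => F p.1 p.2 := by
    have hj : Continuous fun p : Ω × ℝ => ∫ s in (0:ℝ)..p.2, e (φ s p.1) := by
      apply intervalIntegral.continuous_parametric_primitive_of_continuous
        (f := fun (ω : Ω) (s : ℝ) => e (φ s ω))
      exact he.comp (hφc.comp (continuous_snd.prodMk continuous_fst))
    simp only [hFdef]
    exact hj
  have hFc1 : ∀ ω, Continuous (F ω) := fun ω =>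
    hFc.comp (continuous_const.prodMk continuous_id : Continuous fun t : ℝ => (ω, t))
  have hFct : ∀ t, Continuous fun ω => F ω t := fun t =>
    hFc.comp (continuous_id.prodMk continuous_const : Continuous fun ω' : Ω => (ω', t))
  have measF : ∀ t : ℝ, Measurable fun ω => F ω t := fun t => (hFct t).measurable
  -- the cocycle identity
  have hcoc : ∀ ω s t, F ω (s + t) = F ω s + F (φ s ω) t := by
    intro ω s t
    have hint : ∀ a b : ℝ, IntervalIntegrable (fun u => e (φ u ω)) MeasureTheory.volume a b :=
      fun a b =>
        (he.comp (hφc.comp (continuous_id.prodMk continuous_const))).intervalIntegrable a b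
    have h1 : F ω (s + t) = F ω s + ∫ u in s..(s + t), e (φ u ω) := by
      rw [hFdef, hFdef]
      rw [intervalIntegral.integral_add_adjacent_intervals (hint 0 s) (hint s (s + t))]
    have h2 : (∫ u in s..(s + t), e (φ u ω)) = F (φ s ω) t := by
      have h3 : (∫ u in (0:ℝ)..t, e (φ u (φ s ω))) = ∫ u in (0:ℝ)..t, e (φ (u + s) ω) := by
        apply intervalIntegral.integral_congr
        intro u _
        show e (φ u (φ s ω)) = e (φ (u + s) ω)
        rw [← hφadd, add_comm u s]
      have h4 : (∫ u in (0:ℝ)..t, e (φ (u + s) ω)) = ∫ u in (0+s)..(t+s), e (φ u ω) :=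
        intervalIntegral.integral_comp_add_right (fun u => e (φ u ω)) s
      rw [hFdef]
      rw [h3, h4, zero_add, add_comm t s]
    rw [h1, h2]
  have hshift : ∀ ω s t, F (φ s ω) t = F ω (s + t) - F ω s := by
    intro ω s t
    rw [hcoc ω s t]; ring
  have hF0 : ∀ ω, F ω 0 = 0 := by
    intro ω
    have h := hcoc ω 0 0
    rw [hφ0, add_zero] at h
    linarith
  -- density arguments
  have hdense : ∀ (f : ℝ → ℝ), Continuous f → ∀ M : ℝ, (∀ q : ℚ, f q ≤ M) →
      ∀ t : ℝ, f t ≤ M := by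
    intro f hf M hq t
    have h1 : Set.range ((↑) : ℚ → ℝ) ⊆ {x | f x ≤ M} := by
      rintro _ ⟨q, rfl⟩; exact hq q
    have h2 : Dense {x : ℝ | f x ≤ M} := Rat.denseRange_cast.mono h1
    have h3 : IsClosed {x : ℝ | f x ≤ M} := isClosed_le hf continuous_const
    have h4 : {x : ℝ | f x ≤ M} = Set.univ := by
      rw [← h3.closure_eq]; exact h2.closure_eq
    exact (h4 ▸ Set.mem_univ t : t ∈ {x : ℝ | f x ≤ M})
  have hdenseIci : ∀ (f : ℝ → ℝ), Continuous f → ∀ c : ℝ, (∀ q : ℚ, 0 ≤ (q:ℝ) → c ≤ f q) →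
      ∀ t : ℝ, 0 ≤ t → c ≤ f t := by
    intro f hf c hq t ht
    by_contra hlt
    push_neg at hlt
    have hopen : IsOpen {x : ℝ | f x < c} := isOpen_lt hf continuous_const
    obtain ⟨ε, hε, hball⟩ := Metric.isOpen_iff.mp hopen t hlt
    obtain ⟨q, hq1, hq2⟩ := exists_rat_btwn (lt_add_of_pos_right t hε)
    have hq0 : 0 ≤ (q:ℝ) := le_of_lt (lt_of_le_of_lt ht hq1)
    have hmem : (q:ℝ) ∈ Metric.ball t ε := by
      rw [Metric.mem_ball, Real.dist_eq, abs_of_pos (by linarith)]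
      linarith
    have : f q < c := hball hmem
    exact absurd (hq q hq0) (not_le.mpr this)
  have hdenseIic : ∀ (f : ℝ → ℝ), Continuous f → ∀ c : ℝ, (∀ q : ℚ, (q:ℝ) ≤ 0 → c ≤ f q) →
      ∀ t : ℝ, t ≤ 0 → c ≤ f t := by
    intro f hf c hq t ht
    have h := hdenseIci (fun x => f (-x)) (hf.comp continuous_neg) c ?_ (-t) (by linarith)
    · simpa using h
    · intro q hq0
      have h2 := hq (-q) (by push_cast; linarith)
      push_cast at h2 ⊢
      simpa using h2
  -- the three relevant sets
  set A : Set Ω := {ω | ∃ M : ℝ, ∀ t : ℝ, F ω t ≤ M} with hAdef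
  set Bp : Set Ω := {ω | ∃ c : ℝ, ∀ t : ℝ, 0 ≤ t → c ≤ F ω t} with hBpdef
  set Bm : Set Ω := {ω | ∃ c : ℝ, ∀ t : ℝ, t ≤ 0 → c ≤ F ω t} with hBmdef
  have measA : MeasurableSet A := by
    have hA2 : A = ⋃ n : ℕ, ⋂ q : ℚ, {ω | F ω (q:ℝ) ≤ (n:ℝ)} := by
      ext ω
      simp only [hAdef, Set.mem_iUnion, Set.mem_iInter, Set.mem_setOf_eq]
      constructor
      · rintro ⟨M, hM⟩
        obtain ⟨n, hn⟩ := exists_nat_ge M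
        exact ⟨n, fun q => (hM q).trans hn⟩
      · rintro ⟨n, hn⟩
        exact ⟨n, hdense (F ω) (hFc1 ω) n hn⟩
    rw [hA2]
    exact MeasurableSet.iUnion fun n => MeasurableSet.iInter fun q =>
      measurableSet_le (measF q) measurable_const
  have measBp : MeasurableSet Bp := by
    have hB2 : Bp = ⋃ n : ℕ, ⋂ q : ℚ, {ω | 0 ≤ (q:ℝ) → -(n:ℝ) ≤ F ω (q:ℝ)} := by
      ext ω
      simp only [hBpdef, Set.mem_iUnion, Set.mem_iInter, Set.mem_setOf_eq]
      constructor
      · rintro ⟨c, hc⟩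
        obtain ⟨n, hn⟩ := exists_nat_ge (-c)
        exact ⟨n, fun q hq => le_trans (by linarith) (hc q hq)⟩
      · rintro ⟨n, hn⟩
        exact ⟨-(n:ℝ), hdenseIci (F ω) (hFc1 ω) _ (fun q hq => hn q hq)⟩
    rw [hB2]
    refine MeasurableSet.iUnion fun n => MeasurableSet.iInter fun q => ?_
    by_cases hq : 0 ≤ (q:ℝ)
    · have : {ω : Ω | 0 ≤ (q:ℝ) → -(n:ℝ) ≤ F ω (q:ℝ)} = {ω | -(n:ℝ) ≤ F ω (q:ℝ)} := by
        ext ω; simp [hq]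
      rw [this]
      exact measurableSet_le measurable_const (measF q)
    · have : {ω : Ω | 0 ≤ (q:ℝ) → -(n:ℝ) ≤ F ω (q:ℝ)} = Set.univ := by
        ext ω; simp [hq]
      rw [this]
      exact MeasurableSet.univ
  have measBm : MeasurableSet Bm := by
    have hB2 : Bm = ⋃ n : ℕ, ⋂ q : ℚ, {ω | (q:ℝ) ≤ 0 → -(n:ℝ) ≤ F ω (q:ℝ)} := by
      ext ω
      simp only [hBmdef, Set.mem_iUnion, Set.mem_iInter, Set.mem_setOf_eq]
      constructor
      · rintro ⟨c, hc⟩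
        obtain ⟨n, hn⟩ := exists_nat_ge (-c)
        exact ⟨n, fun q hq => le_trans (by linarith) (hc q hq)⟩
      · rintro ⟨n, hn⟩
        exact ⟨-(n:ℝ), hdenseIic (F ω) (hFc1 ω) _ (fun q hq => hn q hq)⟩
    rw [hB2]
    refine MeasurableSet.iUnion fun n => MeasurableSet.iInter fun q => ?_
    by_cases hq : (q:ℝ) ≤ 0
    · have : {ω : Ω | (q:ℝ) ≤ 0 → -(n:ℝ) ≤ F ω (q:ℝ)} = {ω | -(n:ℝ) ≤ F ω (q:ℝ)} := by
        ext ω; simp [hq]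
      rw [this]
      exact measurableSet_le measurable_const (measF q)
    · have : {ω : Ω | (q:ℝ) ≤ 0 → -(n:ℝ) ≤ F ω (q:ℝ)} = Set.univ := by
        ext ω; simp [hq]
      rw [this]
      exact MeasurableSet.univ
  -- invariance
  have invset : ∀ (B : Set Ω), (∀ s ω, ω ∈ B → φ s ω ∈ B) → ∀ t, φ t ⁻¹' B = B := by
    intro B hB t
    ext ω
    constructor
    · intro h
      have h2 := hB (-t) _ h
      rwa [hφinv] at h2
    · exact fun h => hB t ω h
  have hBplow : ∀ ω, ω ∈ Bp → ∀ s : ℝ, ∃ c, ∀ u : ℝ, s ≤ u → c ≤ F ω u := by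
    intro ω hω s
    obtain ⟨c₀, hc₀⟩ := hω
    obtain ⟨x, hx, hminx⟩ := isCompact_Icc.exists_isMinOn
      (Set.nonempty_Icc.mpr (min_le_right s 0)) ((hFc1 ω).continuousOn)
    refine ⟨min c₀ (F ω x), fun u hu => ?_⟩
    rcases le_or_gt 0 u with h0 | h0
    · exact le_trans (min_le_left _ _) (hc₀ u h0)
    · exact le_trans (min_le_right _ _)
        (hminx ⟨(min_le_left s 0).trans hu, h0.le⟩)
  have hBmlow : ∀ ω, ω ∈ Bm → ∀ s : ℝ, ∃ c, ∀ u : ℝ, u ≤ s → c ≤ F ω u := by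
    intro ω hω s
    obtain ⟨c₀, hc₀⟩ := hω
    obtain ⟨x, hx, hminx⟩ := isCompact_Icc.exists_isMinOn
      (Set.nonempty_Icc.mpr (le_max_right s 0)) ((hFc1 ω).continuousOn)
    refine ⟨min c₀ (F ω x), fun u hu => ?_⟩
    rcases le_or_gt u 0 with h0 | h0
    · exact le_trans (min_le_left _ _) (hc₀ u h0)
    · exact le_trans (min_le_right _ _)
        (hminx ⟨h0.le, hu.trans (le_max_left s 0)⟩)
  have hAinv : ∀ t, φ t ⁻¹' A = A := by
    apply invset
    intro s ω hω
    obtain ⟨M, hM⟩ := hω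
    refine ⟨M - F ω s, fun t => ?_⟩
    rw [hshift]
    have := hM (s + t)
    linarith
  have hBpinv : ∀ t, φ t ⁻¹' Bp = Bp := by
    apply invset
    intro s ω hω
    obtain ⟨c, hc⟩ := hBplow ω hω s
    refine ⟨c - F ω s, fun t ht => ?_⟩
    rw [hshift]
    have := hc (s + t) (by linarith)
    linarith
  have hBminv : ∀ t, φ t ⁻¹' Bm = Bm := by
    apply invset
    intro s ω hω
    obtain ⟨c, hc⟩ := hBmlow ω hω s
    refine ⟨c - F ω s, fun t ht => ?_⟩
    rw [hshift]
    have := hc (s + t) (by linarith)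
    linarith
  have hmemA : ∀ t ω, ω ∈ A → φ t ω ∈ A := by
    intro t ω hω
    rw [← hAinv t] at hω
    exact hω
  -- zero-one law
  have zeroone : ∀ B : Set Ω, MeasurableSet B → (∀ t, φ t ⁻¹' B = B) →
      m B = 0 ∨ m B = 1 := by
    intro B hB hBinv
    by_contra hcon
    push_neg at hcon
    obtain ⟨h0, h1⟩ := hcon
    have hBle : m B ≤ 1 := prob_le_one
    have hBfin : m B ≠ ⊤ := (lt_of_le_of_lt hBle ENNReal.one_lt_top).ne
    set m' : Measure Ω := (m B)⁻¹ • m.restrict B with hm'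
    have hm'univ : m' Set.univ = 1 := by
      rw [hm', Measure.smul_apply, smul_eq_mul, Measure.restrict_apply MeasurableSet.univ,
        Set.univ_inter]
      exact ENNReal.inv_mul_cancel h0 hBfin
    haveI : IsProbabilityMeasure m' := ⟨hm'univ⟩
    have hpres : ∀ t, MeasurePreserving (φ t) m' m' := by
      intro t
      refine ⟨(cφ t).measurable, ?_⟩
      rw [hm', Measure.map_smul]
      congr 1
      apply Measure.ext
      intro s hs
      rw [Measure.map_apply (cφ t).measurable hs, Measure.restrict_apply hs,
        Measure.restrict_apply ((cφ t).measurable hs)]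
      have hint : φ t ⁻¹' s ∩ B = φ t ⁻¹' (s ∩ B) := by
        rw [Set.preimage_inter, hBinv]
      rw [hint]
      exact (hinv t).measure_preimage (hs.inter hB).nullMeasurableSet
    have heqm := huniq m' inferInstance hpres
    have hcomp : m' Bᶜ = 0 := by
      rw [hm', Measure.smul_apply, smul_eq_mul, Measure.restrict_apply hB.compl,
        Set.compl_inter_self, measure_empty, mul_zero]
    rw [heqm] at hcomp
    have hsub : m Bᶜ = 1 - m B := prob_compl_eq_one_sub (μ := m) hB
    rw [hcomp] at hsub
    have hge : (1:ENNReal) ≤ m B := tsub_eq_zero_iff_le.mp hsub.symm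
    exact h1 (le_antisymm hBle hge)
  -- m A = 1
  have hmA : m A = 1 := by
    have h0 : m Aᶜ = 0 := by
      have hae : ∀ᵐ ω ∂m, ω ∈ A := by
        filter_upwards [hbdd] with ω hω
        obtain ⟨M, hM⟩ := hω
        exact ⟨M, fun t => by rw [hFdef]; exact hM t⟩
      rw [measure_eq_zero_iff_ae_notMem]
      filter_upwards [hae] with ω hω
      simpa using hω
    have hcc := prob_compl_eq_one_sub (μ := m) measA.compl
    rwa [compl_compl, h0, tsub_zero] at hcc
  have hAc0 : m Aᶜ = 0 := by
    rw [prob_compl_eq_one_sub (μ := m) measA, hmA, tsub_self]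
  -- m Bp = 0 (else Gottschalk-Hedlund gives a continuous primitive)
  have hmBp : m Bp = 0 := by
    rcases zeroone Bp measBp hBpinv with h | h
    · exact h
    exfalso
    have hBpc : m Bpᶜ = 0 := by rw [prob_compl_eq_one_sub (μ := m) measBp, h, tsub_self]
    have hic : m ((A ∩ Bp)ᶜ) = 0 := by
      rw [Set.compl_inter]
      refine le_antisymm (le_trans (measure_union_le _ _) ?_) zero_le
      rw [hAc0, hBpc, add_zero]
    have hi : m (A ∩ Bp) ≠ 0 := by
      have hcc := prob_compl_eq_one_sub (μ := m) (measA.inter measBp).compl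
      rw [compl_compl, hic, tsub_zero] at hcc
      rw [hcc]
      exact one_ne_zero
    obtain ⟨ω₀, hω₀A, hω₀B⟩ := MeasureTheory.nonempty_of_measure_ne_zero hi
    obtain ⟨M, hM⟩ := hω₀A
    obtain ⟨c, hc⟩ := hω₀B
    have hC : ∀ t : ℝ, 0 ≤ t → |F ω₀ t| ≤ max M (-c) := by
      intro t ht
      rw [abs_le]
      constructor
      · have h2 := hc t ht
        have h3 : -(max M (-c)) ≤ c := by
          have := le_max_right M (-c); linarith
        linarith
      · exact le_trans (hM t) (le_max_left _ _)
    obtain ⟨h', hhc, hht⟩ := GHflow φ hφc hφ0 hφadd hmin F hFc hcoc ω₀ (max M (-c)) hC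
    exact hnoprim ⟨h', hhc, fun ω t => by rw [← hFdef]; exact hht ω t⟩
  -- m Bm = 0 (reversed flow)
  have hmBm : m Bm = 0 := by
    rcases zeroone Bm measBm hBminv with h | h
    · exact h
    exfalso
    have hBmc : m Bmᶜ = 0 := by rw [prob_compl_eq_one_sub (μ := m) measBm, h, tsub_self]
    have hic : m ((A ∩ Bm)ᶜ) = 0 := by
      rw [Set.compl_inter]
      refine le_antisymm (le_trans (measure_union_le _ _) ?_) zero_le
      rw [hAc0, hBmc, add_zero]
    have hi : m (A ∩ Bm) ≠ 0 := by
      have hcc := prob_compl_eq_one_sub (μ := m) (measA.inter measBm).compl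
      rw [compl_compl, hic, tsub_zero] at hcc
      rw [hcc]
      exact one_ne_zero
    obtain ⟨ω₀, hω₀A, hω₀B⟩ := MeasureTheory.nonempty_of_measure_ne_zero hi
    obtain ⟨M, hM⟩ := hω₀A
    obtain ⟨c, hc⟩ := hω₀B
    -- reversed flow
    set ψ : ℝ → Ω → Ω := fun t ω => φ (-t) ω with hψ
    have hψc : Continuous fun p : ℝ × Ω => ψ p.1 p.2 :=
      hφc.comp ((continuous_neg.comp continuous_fst).prodMk continuous_snd)
    have hψ0 : ∀ ω, ψ 0 ω = ω := by
      intro ω; simp only [hψ, neg_zero, hφ0]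
    have hψadd : ∀ s t ω, ψ (s + t) ω = ψ s (ψ t ω) := by
      intro s t ω
      simp only [hψ, neg_add]
      exact hφadd (-s) (-t) ω
    have hψmin : ∀ ω, Dense (Set.range fun t => ψ t ω) := by
      intro ω
      have hr : (Set.range fun t => ψ t ω) = Set.range fun t => φ t ω := by
        ext x
        constructor
        · rintro ⟨t, rfl⟩; exact ⟨-t, rfl⟩
        · rintro ⟨t, rfl⟩; exact ⟨-t, by simp only [hψ, neg_neg]⟩
      rw [hr]; exact hmin ω
    set G : Ω → ℝ → ℝ := fun ω t => -(F ω (-t)) with hG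
    have hGc : Continuous fun p : Ω × ℝ => G p.1 p.2 := by
      have : Continuous fun p : Ω × ℝ => F p.1 (-p.2) :=
        hFc.comp (continuous_fst.prodMk (continuous_neg.comp continuous_snd))
      exact this.neg
    have hGcoc : ∀ ω s t, G ω (s + t) = G ω s + G (ψ s ω) t := by
      intro ω s t
      have h2 := hcoc ω (-s) (-t)
      simp only [hG, hψ, neg_add]
      rw [h2]
      ring
    have hGC : ∀ t : ℝ, 0 ≤ t → |G ω₀ t| ≤ max M (-c) := by
      intro t ht
      have h2 : G ω₀ t = -(F ω₀ (-t)) := rfl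
      rw [h2, abs_neg, abs_le]
      constructor
      · have h3 := hc (-t) (by linarith)
        have h4 : -(max M (-c)) ≤ c := by
          have := le_max_right M (-c); linarith
        linarith
      · exact le_trans (hM (-t)) (le_max_left _ _)
    obtain ⟨h', hhc, hht⟩ := GHflow ψ hψc hψ0 hψadd hψmin G hGc hGcoc ω₀ (max M (-c)) hGC
    apply hnoprim
    refine ⟨fun ω => -h' ω, hhc.neg, ?_⟩
    intro ω t
    have h2 := hht ω (-t)
    simp only [hψ, hG, neg_neg] at h2
    show -h' (φ t ω) - -h' ω = ∫ s in (0:ℝ)..t, e (φ s ω)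
    rw [← hFdef]
    linarith
  -- the transfer function
  set Sq : Ω → ℝ := fun ω => ⨆ q : ℚ, F ω (q:ℝ) with hSqdef
  have measSq : Measurable Sq := Measurable.iSup fun q : ℚ => measF (q:ℝ)
  set he' : Ω → ℝ := fun ω => -(max (Sq ω) 0) with hhe
  have meas_he : Measurable he' := (measSq.max measurable_const).neg
  have he_nonpos : ∀ ω, he' ω ≤ 0 := fun ω => neg_nonpos.mpr (le_max_right _ _)
  have hbddA : ∀ ω, ω ∈ A → BddAbove (Set.range fun q : ℚ => F ω (q:ℝ)) := by
    rintro ω ⟨M, hM⟩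
    exact ⟨M, by rintro _ ⟨q, rfl⟩; exact hM q⟩
  have hub : ∀ ω, ω ∈ A → ∀ t : ℝ, F ω t ≤ Sq ω := by
    intro ω hω t
    exact hdense (F ω) (hFc1 ω) (Sq ω) (fun q => le_ciSup (hbddA ω hω) q) t
  have hSqnn : ∀ ω, ω ∈ A → 0 ≤ Sq ω := fun ω hω => hF0 ω ▸ hub ω hω 0
  have he_eq : ∀ ω, ω ∈ A → he' ω = -(Sq ω) := by
    intro ω hω
    show -(max (Sq ω) 0) = -(Sq ω)
    rw [max_eq_left (hSqnn ω hω)]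
  have htrans : ∀ ω, ω ∈ A → ∀ t : ℝ, Sq (φ t ω) = Sq ω - F ω t := by
    intro ω hω t
    have hωt : φ t ω ∈ A := hmemA t ω hω
    apply le_antisymm
    · show (⨆ q : ℚ, F (φ t ω) (q:ℝ)) ≤ Sq ω - F ω t
      apply ciSup_le
      intro q
      have h1 : F (φ t ω) (q:ℝ) = F ω (t + q) - F ω t := hshift ω t q
      have h2 := hub ω hω (t + q)
      linarith
    · have h1 : Sq ω ≤ Sq (φ t ω) + F ω t := by
        show (⨆ q : ℚ, F ω (q:ℝ)) ≤ Sq (φ t ω) + F ω t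
        apply ciSup_le
        intro q
        have h2 : F ω (t + ((q:ℝ) - t)) = F ω t + F (φ t ω) ((q:ℝ) - t) := hcoc ω t ((q:ℝ) - t)
        rw [add_sub_cancel] at h2
        have h3 := hub (φ t ω) hωt ((q:ℝ) - t)
        linarith
      linarith
  -- conclusion
  refine ⟨he', A ∩ (Bpᶜ ∩ Bmᶜ), meas_he, he_nonpos,
    measA.inter (measBp.compl.inter measBm.compl), ?_, ?_, ?_⟩
  · intro t
    rw [Set.preimage_inter, Set.preimage_inter, Set.preimage_compl, Set.preimage_compl,
      hAinv, hBpinv, hBminv]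
  · have hic : m ((A ∩ (Bpᶜ ∩ Bmᶜ))ᶜ) = 0 := by
      have h1 : (A ∩ (Bpᶜ ∩ Bmᶜ))ᶜ = Aᶜ ∪ (Bp ∪ Bm) := by
        rw [Set.compl_inter, Set.compl_inter, compl_compl, compl_compl]
      rw [h1]
      refine le_antisymm (le_trans (measure_union_le _ _) ?_) zero_le
      have h2 : m (Bp ∪ Bm) ≤ m Bp + m Bm := measure_union_le _ _
      rw [hAc0, hmBp, hmBm] at *
      simpa using h2
    have hcc := prob_compl_eq_one_sub (μ := m) (measA.inter (measBp.compl.inter measBm.compl)).compl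
    rwa [compl_compl, hic, tsub_zero] at hcc
  · rintro ω ⟨hωA, hωBp, hωBm⟩
    have htr : ∀ t : ℝ, he' (φ t ω) - he' ω = F ω t := by
      intro t
      rw [he_eq _ (hmemA t ω hωA), he_eq _ hωA, htrans ω hωA t]
      ring
    refine ⟨fun t => by rw [← hFdef]; exact htr t, ⟨0, fun t => he_nonpos _⟩, ?_, ?_⟩
    · intro N
      have hnb : ¬ ∃ c : ℝ, ∀ t : ℝ, t ≤ 0 → c ≤ F ω t := hωBm
      push_neg at hnb
      obtain ⟨t, ht, hlt⟩ := hnb (N - he' ω)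
      refine ⟨t, ht, ?_⟩
      have h2 := htr t
      linarith
    · intro N
      have hnb : ¬ ∃ c : ℝ, ∀ t : ℝ, 0 ≤ t → c ≤ F ω t := hωBp
      push_neg at hnb
      obtain ⟨t, ht, hlt⟩ := hnb (N - he' ω)
      refine ⟨t, ht, ?_⟩
      have h2 := htr t
      linarith
end

section
/- If e : Ω → ℝ is continuous on a compact space carrying a minimal flow and sup_{t ≥ 0} |∫₀ᵗ e(ω₀·s) ds| < ∞ for some ω₀ ∈ Ω, then e admits a continuous primitive, i.e. there exists continuous h : Ω → ℝ with h(ω·t) − h(ω) = ∫₀ᵗ e(ω·s) ds for all ω ∈ Ω and t ∈ ℝ; in particular ∫ e dm = 0 for every invariant measure m. -/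
set_option linter.unusedSectionVars false

open MeasureTheory Set Filter Topology

namespace GHaux

variable {Ω : Type*} [MetricSpace Ω] [CompactSpace Ω]

/-- The cocycle `c t ω = ∫₀ᵗ e(φ s ω) ds`. -/
noncomputable def cc (φ : ℝ → Ω → Ω) (e : Ω → ℝ) (t : ℝ) (ω : Ω) : ℝ :=
  ∫ s in (0:ℝ)..t, e (φ s ω)

/-- The skew-product flow on `Ω × ℝ`. -/
noncomputable def Ph (φ : ℝ → Ω → Ω) (e : Ω → ℝ) (t : ℝ) (p : Ω × ℝ) : Ω × ℝ :=
  (φ t p.1, p.2 + cc φ e t p.1)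

variable {φ : ℝ → Ω → Ω} {e : Ω → ℝ}

lemma cc_cont (hφc : Continuous fun p : ℝ × Ω => φ p.1 p.2) (he : Continuous e) :
    Continuous fun p : Ω × ℝ => cc φ e p.2 p.1 := by
  have hf : Continuous (Function.uncurry fun (ω : Ω) (s : ℝ) => e (φ s ω)) := by
    exact he.comp (hφc.comp (continuous_snd.prodMk continuous_fst))
  exact intervalIntegral.continuous_parametric_primitive_of_continuous (μ := volume) hf

lemma cc_cont1 (hφc : Continuous fun p : ℝ × Ω => φ p.1 p.2) (he : Continuous e) (t : ℝ) :
    Continuous fun ω => cc φ e t ω := by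
  have h := (cc_cont hφc he).comp
    ((continuous_id (X := Ω)).prodMk (continuous_const (y := t)))
  exact h

lemma e_int (hφc : Continuous fun p : ℝ × Ω => φ p.1 p.2) (he : Continuous e) (ω : Ω)
    (a b : ℝ) : IntervalIntegrable (fun s => e (φ s ω)) volume a b :=
  ((he.comp (hφc.comp (continuous_id.prodMk continuous_const))).intervalIntegrable a b)

lemma cc_zero (ω : Ω) : cc φ e 0 ω = 0 := intervalIntegral.integral_same

lemma cc_coc (hφc : Continuous fun p : ℝ × Ω => φ p.1 p.2)
    (hφadd : ∀ s t ω, φ (s + t) ω = φ s (φ t ω)) (he : Continuous e)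
    (s t : ℝ) (ω : Ω) : cc φ e (s + t) ω = cc φ e t ω + cc φ e s (φ t ω) := by
  have h1 : cc φ e (s + t) ω = cc φ e t ω + ∫ u in t..(s + t), e (φ u ω) :=
    (intervalIntegral.integral_add_adjacent_intervals (e_int hφc he ω 0 t)
      (e_int hφc he ω t (s + t))).symm
  have h2 : (∫ u in (0:ℝ)..s, e (φ (u + t) ω)) = ∫ u in t..(s + t), e (φ u ω) := by
    simpa using intervalIntegral.integral_comp_add_right (a := (0:ℝ)) (b := s)
      (fun u => e (φ u ω)) t
  have h3 : cc φ e s (φ t ω) = ∫ u in (0:ℝ)..s, e (φ (u + t) ω) := by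
    unfold cc
    congr 1
    funext u
    rw [hφadd]
  rw [h1, h3, h2]

lemma Ph_cont (hφc : Continuous fun p : ℝ × Ω => φ p.1 p.2) (he : Continuous e) (t : ℝ) :
    Continuous (Ph φ e t) :=
  (hφc.comp (continuous_const.prodMk continuous_fst)).prodMk
    (continuous_snd.add ((cc_cont1 hφc he t).comp continuous_fst))

lemma Ph_zero (hφ0 : ∀ ω, φ 0 ω = ω) (p : Ω × ℝ) : Ph φ e 0 p = p := by
  unfold Ph
  rw [hφ0, cc_zero, add_zero]

lemma Ph_add (hφc : Continuous fun p : ℝ × Ω => φ p.1 p.2)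
    (hφadd : ∀ s t ω, φ (s + t) ω = φ s (φ t ω)) (he : Continuous e)
    (s t : ℝ) (p : Ω × ℝ) : Ph φ e (s + t) p = Ph φ e s (Ph φ e t p) := by
  unfold Ph
  dsimp
  rw [hφadd, cc_coc hφc hφadd he]
  ring_nf

lemma Ph_bij (hφc : Continuous fun p : ℝ × Ω => φ p.1 p.2) (hφ0 : ∀ ω, φ 0 ω = ω)
    (hφadd : ∀ s t ω, φ (s + t) ω = φ s (φ t ω)) (he : Continuous e) (t : ℝ) :
    Function.Bijective (Ph φ e t) := by
  refine Function.bijective_iff_has_inverse.2 ⟨Ph φ e (-t), fun p => ?_, fun p => ?_⟩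
  · rw [← Ph_add hφc hφadd he, neg_add_cancel, Ph_zero hφ0]
  · rw [← Ph_add hφc hφadd he, add_neg_cancel, Ph_zero hφ0]


section Main

variable {Ω : Type*} [MetricSpace Ω] [CompactSpace Ω] {φ : ℝ → Ω → Ω} {e : Ω → ℝ}

set_option maxHeartbeats 1000000 in
lemma exists_minimal_set (hφc : Continuous fun p : ℝ × Ω => φ p.1 p.2)
    (hφ0 : ∀ ω, φ 0 ω = ω) (hφadd : ∀ s t ω, φ (s + t) ω = φ s (φ t ω))
    (he : Continuous e) (ω₀ : Ω) (M : ℝ)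
    (hbd : ∀ t : ℝ, 0 ≤ t → |∫ s in (0:ℝ)..t, e (φ s ω₀)| ≤ M) :
    ∃ K : Set (Ω × ℝ), K.Nonempty ∧ IsCompact K ∧ (∀ t, Ph φ e t '' K = K) ∧
      ∀ K' : Set (Ω × ℝ), K'.Nonempty → IsCompact K' → (∀ t, Ph φ e t '' K' = K') →
        K' ⊆ K → K ⊆ K' := by
  classical
  set O : Set (Ω × ℝ) := (fun t => Ph φ e t (ω₀, 0)) '' Ici 0 with hO
  set K₀ : Set (Ω × ℝ) := closure O with hK₀
  have hOne : O.Nonempty := ⟨_, mem_image_of_mem _ (self_mem_Ici (a := (0:ℝ)))⟩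
  have hK₀ne : K₀.Nonempty := hOne.closure
  have hK₀sub : K₀ ⊆ univ ×ˢ Icc (-M) M := by
    apply closure_minimal _ (isClosed_univ.prod isClosed_Icc)
    rintro _ ⟨t, ht, rfl⟩
    refine ⟨mem_univ _, ?_⟩
    have := abs_le.1 (hbd t ht)
    simp only [Ph, zero_add]
    exact ⟨this.1, this.2⟩
  have hK₀c : IsCompact K₀ :=
    (isCompact_univ.prod isCompact_Icc).of_isClosed_subset isClosed_closure hK₀sub
  -- forward invariance of K₀
  have hfwd : ∀ t : ℝ, 0 ≤ t → Ph φ e t '' K₀ ⊆ K₀ := by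
    intro t ht
    refine (image_closure_subset_closure_image (Ph_cont hφc he t)).trans (closure_mono ?_)
    rintro _ ⟨_, ⟨s, hs, rfl⟩, rfl⟩
    exact ⟨t + s, add_nonneg ht hs, (Ph_add hφc hφadd he t s _)⟩
  have hiter : ∀ (a b : ℝ) (A : Set (Ω × ℝ)), Ph φ e a '' (Ph φ e b '' A) = Ph φ e (a + b) '' A := by
    intro a b A
    rw [← image_comp]
    apply image_congr'
    intro p
    exact (Ph_add hφc hφadd he a b p).symm
  have hstep : ∀ a b : ℝ, 0 ≤ a → a ≤ b → Ph φ e b '' K₀ ⊆ Ph φ e a '' K₀ := by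
    intro a b ha hab
    have hb : b = a + (b - a) := by ring
    rw [hb, ← hiter a (b - a) K₀]
    exact image_mono (hfwd (b - a) (by linarith))
  set L : Set (Ω × ℝ) := ⋂ n : ℕ, Ph φ e n '' K₀ with hL
  have hPh0K : Ph φ e (0:ℝ) '' K₀ = K₀ := by
    rw [show Ph φ e (0:ℝ) = id from funext (Ph_zero hφ0), image_id]
  have hLne : L.Nonempty := by
    apply IsCompact.nonempty_iInter_of_directed_nonempty_isCompact_isClosed
    · intro m n
      exact ⟨max m n, hstep _ _ (Nat.cast_nonneg m) (by exact_mod_cast le_max_left m n),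
        hstep _ _ (Nat.cast_nonneg n) (by exact_mod_cast le_max_right m n)⟩
    · intro n; exact hK₀ne.image _
    · intro n; exact hK₀c.image (Ph_cont hφc he _)
    · intro n; exact (hK₀c.image (Ph_cont hφc he _)).isClosed
  have hLsub : L ⊆ K₀ := by
    have h0 := iInter_subset (fun n : ℕ => Ph φ e n '' K₀) 0
    rwa [Nat.cast_zero, hPh0K] at h0
  have hLclosed : IsClosed L :=
    isClosed_iInter fun n => (hK₀c.image (Ph_cont hφc he _)).isClosed
  have hLcomp : IsCompact L := hK₀c.of_isClosed_subset hLclosed hLsub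
  have himL : ∀ t : ℝ, 0 ≤ t → Ph φ e t '' L = L := by
    intro t ht
    have h1 : Ph φ e t '' L = ⋂ n : ℕ, Ph φ e t '' (Ph φ e n '' K₀) :=
      image_iInter (Ph_bij hφc hφ0 hφadd he t) _
    rw [h1]
    apply subset_antisymm
    · refine subset_iInter fun n => ?_
      refine (iInter_subset _ n).trans ?_
      rw [hiter]
      exact hstep _ _ (Nat.cast_nonneg n) (by linarith)
    · refine subset_iInter fun n => ?_
      rw [hiter]
      have h2 : L ⊆ Ph φ e ((⌈t⌉₊ + n : ℕ) : ℝ) '' K₀ := iInter_subset _ _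
      refine h2.trans ?_
      apply hstep _ _ (by linarith [Nat.cast_nonneg (α := ℝ) n]) ?_
      push_cast
      have := Nat.le_ceil t
      linarith
  have hinvL : ∀ t : ℝ, Ph φ e t '' L = L := by
    intro t
    rcases le_or_gt 0 t with h | h
    · exact himL t h
    · have h1 := himL (-t) (by linarith)
      calc Ph φ e t '' L = Ph φ e t '' (Ph φ e (-t) '' L) := by rw [h1]
        _ = Ph φ e (t + -t) '' L := hiter t (-t) L
        _ = L := by
            rw [add_neg_cancel, show Ph φ e (0:ℝ) = id from funext (Ph_zero hφ0), image_id]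
  -- Zorn's lemma: get a minimal nonempty compact invariant set inside `L`
  set S : Set (Set (Ω × ℝ)) :=
    {A | A.Nonempty ∧ IsCompact A ∧ ∀ t, Ph φ e t '' A = A} with hS
  have hLS : L ∈ S := ⟨hLne, hLcomp, hinvL⟩
  have hZorn : ∀ c ⊆ S, IsChain (· ⊆ ·) c → c.Nonempty →
      ∃ lb ∈ S, ∀ s ∈ c, lb ⊆ s := by
    intro c hcS hchain hcne
    haveI : Nonempty c := hcne.to_subtype
    refine ⟨⋂₀ c, ⟨?_, ?_, ?_⟩, fun s hs => sInter_subset_of_mem hs⟩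
    · rw [sInter_eq_iInter]
      apply IsCompact.nonempty_iInter_of_directed_nonempty_isCompact_isClosed
      · rintro ⟨A, hA⟩ ⟨B, hB⟩
        rcases hchain.total hA hB with h | h
        · exact ⟨⟨A, hA⟩, Subset.rfl, h⟩
        · exact ⟨⟨B, hB⟩, h, Subset.rfl⟩
      · exact fun A => (hcS A.2).1
      · exact fun A => (hcS A.2).2.1
      · exact fun A => (hcS A.2).2.1.isClosed
    · obtain ⟨A₀, hA₀⟩ := hcne
      exact (hcS hA₀).2.1.of_isClosed_subset
        (isClosed_sInter fun A hA => (hcS hA).2.1.isClosed) (sInter_subset_of_mem hA₀)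
    · intro t
      rw [sInter_eq_iInter, image_iInter (Ph_bij hφc hφ0 hφadd he t)]
      exact iInter_congr fun A => (hcS A.2).2.2 t
  obtain ⟨K, -, hKmin⟩ := zorn_superset_nonempty S hZorn L hLS
  exact ⟨K, hKmin.prop.1, hKmin.prop.2.1, hKmin.prop.2.2,
    fun K' h1 h2 h3 h4 => hKmin.2 ⟨h1, h2, h3⟩ h4⟩

end Main
section Graph

variable {Ω : Type*} [MetricSpace Ω] [CompactSpace Ω] {φ : ℝ → Ω → Ω} {e : Ω → ℝ}

set_option maxHeartbeats 1000000 in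
lemma exists_primitive (hφc : Continuous fun p : ℝ × Ω => φ p.1 p.2)
    (hφ0 : ∀ ω, φ 0 ω = ω) (hφadd : ∀ s t ω, φ (s + t) ω = φ s (φ t ω))
    (hmin : ∀ ω, Dense (Set.range fun t => φ t ω))
    (he : Continuous e) (ω₀ : Ω) (M : ℝ)
    (hbd : ∀ t : ℝ, 0 ≤ t → |∫ s in (0:ℝ)..t, e (φ s ω₀)| ≤ M) :
    ∃ h : Ω → ℝ, Continuous h ∧
      ∀ (ω : Ω) (t : ℝ), h (φ t ω) - h ω = ∫ s in (0:ℝ)..t, e (φ s ω) := by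
  classical
  obtain ⟨K, hKne, hKcomp, hKinv, hKmin⟩ :=
    exists_minimal_set hφc hφ0 hφadd he ω₀ M hbd
  have hmemK : ∀ t : ℝ, ∀ p ∈ K, Ph φ e t p ∈ K := fun t p hp =>
    (hKinv t) ▸ Set.mem_image_of_mem _ hp
  -- the orbit closure of any point of K is all of K
  have horbK : ∀ p ∈ K, closure (Set.range fun t => Ph φ e t p) = K := by
    intro p hp
    set Kp : Set (Ω × ℝ) := closure (Set.range fun t => Ph φ e t p) with hKp
    have hsub : (Set.range fun t => Ph φ e t p) ⊆ K := by
      rintro _ ⟨t, rfl⟩; exact hmemK t p hp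
    have hKpsub : Kp ⊆ K := closure_minimal hsub hKcomp.isClosed
    have hKpne : Kp.Nonempty := ⟨p, subset_closure ⟨0, Ph_zero hφ0 p⟩⟩
    have hKpc : IsCompact Kp := hKcomp.of_isClosed_subset isClosed_closure hKpsub
    have hfwd : ∀ t : ℝ, Ph φ e t '' Kp ⊆ Kp := by
      intro t
      refine (image_closure_subset_closure_image (Ph_cont hφc he t)).trans (closure_mono ?_)
      rintro _ ⟨_, ⟨s, rfl⟩, rfl⟩
      exact ⟨t + s, (Ph_add hφc hφadd he t s p)⟩
    have hKpinv : ∀ t, Ph φ e t '' Kp = Kp := by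
      intro t
      refine subset_antisymm (hfwd t) fun q hq => ?_
      refine ⟨Ph φ e (-t) q, hfwd (-t) (Set.mem_image_of_mem _ hq), ?_⟩
      rw [← Ph_add hφc hφadd he, add_neg_cancel, Ph_zero hφ0]
    exact subset_antisymm hKpsub (hKmin Kp hKpne hKpc hKpinv hKpsub)
  -- the projection of K is all of Ω
  have hfst : ∀ ω : Ω, ∃ x : ℝ, (ω, x) ∈ K := by
    obtain ⟨p, hp⟩ := hKne
    have hcl : IsClosed (Prod.fst '' K) := (hKcomp.image continuous_fst).isClosed
    have horb : Set.range (fun t => φ t p.1) ⊆ Prod.fst '' K := by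
      rintro _ ⟨t, rfl⟩
      exact ⟨Ph φ e t p, hmemK t p hp, rfl⟩
    have huniv : (Set.univ : Set Ω) ⊆ Prod.fst '' K := by
      have h1 : closure (Set.range fun t => φ t p.1) = Set.univ := (hmin p.1).closure_eq
      rw [← h1, ← hcl.closure_eq]
      exact closure_mono horb
    intro ω
    obtain ⟨⟨ω', x⟩, hqK, rfl⟩ := huniv (Set.mem_univ ω)
    exact ⟨x, hqK⟩
  -- K is bounded in the second coordinate
  obtain ⟨B, hB⟩ : ∃ B : ℝ, ∀ q ∈ K, |q.2| ≤ B := by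
    obtain ⟨r, hr⟩ := (hKcomp.image continuous_snd).isBounded.subset_closedBall 0
    exact ⟨r, fun q hq => by
      simpa [Real.dist_eq] using hr (Set.mem_image_of_mem _ hq)⟩
  -- the fibers of K are singletons
  have hfiber_le : ∀ (ω : Ω) (a b : ℝ), (ω, a) ∈ K → (ω, b) ∈ K → b ≤ a := by
    intro ω a b ha hb
    by_contra hab
    push_neg at hab
    set d : ℝ := b - a with hd
    have hdpos : 0 < d := by simp [hd]; linarith
    set T : Ω × ℝ ≃ₜ Ω × ℝ := (Homeomorph.refl Ω).prodCongr (Homeomorph.addRight d) with hT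
    have hTPh : ∀ (t : ℝ) (q : Ω × ℝ), T (Ph φ e t q) = Ph φ e t (T q) := by
      intro t q
      show (φ t q.1, q.2 + cc φ e t q.1 + d) = (φ t q.1, q.2 + d + cc φ e t q.1)
      rw [Prod.mk.injEq]
      exact ⟨rfl, by ring⟩
    have hTK : T '' K = K := by
      have e1 : (fun t => T (Ph φ e t (ω, a))) = fun t => Ph φ e t (ω, b) := by
        funext t
        show (φ t ω, a + cc φ e t ω + d) = (φ t ω, b + cc φ e t ω)
        rw [Prod.mk.injEq]
        exact ⟨rfl, by rw [hd]; ring⟩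
      calc T '' K = T '' closure (Set.range fun t => Ph φ e t (ω, a)) := by rw [horbK _ ha]
        _ = closure (T '' (Set.range fun t => Ph φ e t (ω, a))) := T.image_closure _
        _ = closure (Set.range fun t => Ph φ e t (ω, b)) := by
            rw [← Set.range_comp]
            exact congrArg closure (congrArg Set.range e1)
        _ = K := horbK _ hb
    have hiterate : ∀ n : ℕ, (ω, a + n * d) ∈ K := by
      intro n
      induction n with
      | zero => simpa using ha
      | succ n ih =>
          have hm : T (ω, a + n * d) ∈ K := hTK ▸ Set.mem_image_of_mem _ ih
          have heq : T (ω, a + (n:ℝ) * d) = (ω, a + ((n:ℕ) + 1 : ℕ) * d) := by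
            show (ω, a + (n:ℝ) * d + d) = _
            rw [Prod.mk.injEq]
            exact ⟨rfl, by push_cast; ring⟩
          rwa [heq] at hm
    obtain ⟨n, hn⟩ := exists_nat_gt ((B - a) / d)
    have h1 := hB _ (hiterate n)
    have h2 : a + n * d ≤ B := (le_abs_self _).trans h1
    rw [div_lt_iff₀ hdpos] at hn
    linarith
  have hfiber_eq : ∀ (ω : Ω) (a b : ℝ), (ω, a) ∈ K → (ω, b) ∈ K → a = b := fun ω a b ha hb =>
    le_antisymm (hfiber_le ω b a hb ha) (hfiber_le ω a b ha hb)
  set h : Ω → ℝ := fun ω => (hfst ω).choose with hh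
  have hhK : ∀ ω, (ω, h ω) ∈ K := fun ω => (hfst ω).choose_spec
  have huniq : ∀ (ω : Ω) (x : ℝ), (ω, x) ∈ K → x = h ω := fun ω x hx =>
    hfiber_eq ω x (h ω) hx (hhK ω)
  have hcoc : ∀ (ω : Ω) (t : ℝ), h (φ t ω) = h ω + cc φ e t ω := by
    intro ω t
    have hm := hmemK t (ω, h ω) (hhK ω)
    exact (huniq _ _ hm).symm
  refine ⟨h, ?_, fun ω t => by rw [hcoc ω t, add_sub_cancel_left]; rfl⟩
  apply SeqContinuous.continuous
  intro x a hxa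
  apply Filter.tendsto_of_subseq_tendsto
  intro ns hns
  obtain ⟨q, hqK, ms, hmono, hms⟩ :=
    hKcomp.tendsto_subseq (x := fun n => (x (ns n), h (x (ns n)))) (fun n => hhK _)
  have h1 : Filter.Tendsto (fun n => x (ns (ms n))) Filter.atTop (nhds a) :=
    hxa.comp (hns.comp hmono.tendsto_atTop)
  have h2 : Filter.Tendsto (fun n => x (ns (ms n))) Filter.atTop (nhds q.1) :=
    (continuous_fst.tendsto q).comp hms
  have hq1 : q.1 = a := tendsto_nhds_unique h2 h1
  have hq2 : q.2 = h a := by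
    apply huniq
    rw [← hq1]
    simpa using hqK
  refine ⟨ms, ?_⟩
  have h3 : Filter.Tendsto (fun n => h (x (ns (ms n)))) Filter.atTop (nhds q.2) :=
    (continuous_snd.tendsto q).comp hms
  rw [hq2] at h3
  exact h3

end Graph
end GHaux

open MeasureTheory

/-- If `e` is continuous on a compact space carrying a minimal continuous flow
and `∫₀ᵗ e(ω₀·s) ds` is bounded on `t ≥ 0` for some `ω₀`, then `e` admits a
continuous primitive; in particular `∫ e dm = 0` for every invariant probability
measure `m`. -/
theorem stmt12 {Ω : Type*} [MetricSpace Ω] [CompactSpace Ω]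
    [MeasurableSpace Ω] [BorelSpace Ω]
    (φ : ℝ → Ω → Ω) (hφc : Continuous fun p : ℝ × Ω => φ p.1 p.2)
    (hφ0 : ∀ ω, φ 0 ω = ω) (hφadd : ∀ s t ω, φ (s + t) ω = φ s (φ t ω))
    (hmin : ∀ ω, Dense (Set.range fun t => φ t ω))
    (e : Ω → ℝ) (he : Continuous e)
    (ω₀ : Ω) (M : ℝ) (hbd : ∀ t : ℝ, 0 ≤ t → |∫ s in (0:ℝ)..t, e (φ s ω₀)| ≤ M) :
    (∃ h : Ω → ℝ, Continuous h ∧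
      ∀ (ω : Ω) (t : ℝ), h (φ t ω) - h ω = ∫ s in (0:ℝ)..t, e (φ s ω)) ∧
    (∀ m : Measure Ω, IsProbabilityMeasure m →
      (∀ t, MeasurePreserving (φ t) m m) → ∫ ω, e ω ∂m = 0) := by
  obtain ⟨h, hhc, hhcoc⟩ := GHaux.exists_primitive hφc hφ0 hφadd hmin he ω₀ M hbd
  refine ⟨⟨h, hhc, hhcoc⟩, ?_⟩
  intro m hm hminv
  -- a uniform bound on `e`
  obtain ⟨z, -, hz⟩ := isCompact_univ.exists_isMaxOn ⟨ω₀, Set.mem_univ _⟩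
    ((continuous_abs.comp he).continuousOn (s := Set.univ))
  set C : ℝ := |e z| with hC
  have hCe : ∀ ω, |e ω| ≤ C := fun ω => hz (Set.mem_univ ω)
  -- continuous functions are integrable
  have hintc : ∀ f : Ω → ℝ, Continuous f → Integrable f m := by
    intro f hf
    exact hf.integrable_of_hasCompactSupport
      (isCompact_univ.of_isClosed_subset (isClosed_tsupport f) (Set.subset_univ _))
  -- for every `t` the space average of the time-`t` integral vanishes
  have hzero : ∀ t : ℝ, ∫ ω, (∫ s in (0:ℝ)..t, e (φ s ω)) ∂m = 0 := by
    intro t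
    let Fh : Ω ≃ₜ Ω :=
      { toFun := φ t
        invFun := φ (-t)
        left_inv := fun ω => by rw [← hφadd, neg_add_cancel, hφ0]
        right_inv := fun ω => by rw [← hφadd, add_neg_cancel, hφ0]
        continuous_toFun := hφc.comp (continuous_const.prodMk continuous_id)
        continuous_invFun := hφc.comp (continuous_const.prodMk continuous_id) }
    have h1 : ∫ ω, h (φ t ω) ∂m = ∫ ω, h ω ∂m :=
      (hminv t).integral_comp Fh.measurableEmbedding h
    have h2 : ∫ ω, (h (φ t ω) - h ω) ∂m = 0 := by
      have hi1 : Integrable (fun ω => h (φ t ω)) m :=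
        hintc _ (hhc.comp (show Continuous fun ω => φ t ω from
          hφc.comp (continuous_const.prodMk continuous_id)))
      rw [integral_sub hi1 (hintc _ hhc), h1, sub_self]
    calc ∫ ω, (∫ s in (0:ℝ)..t, e (φ s ω)) ∂m
        = ∫ ω, (h (φ t ω) - h ω) ∂m := by
          apply integral_congr_ae
          filter_upwards with ω
          rw [hhcoc]
      _ = 0 := h2
  -- dominated convergence
  set F : ℕ → Ω → ℝ := fun n ω => ((n:ℝ) + 1) * ∫ s in (0:ℝ)..(1/((n:ℝ)+1)), e (φ s ω) with hF
  have hFint : ∀ n, ∫ ω, F n ω ∂m = 0 := by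
    intro n
    simp only [hF]
    rw [integral_const_mul, hzero, mul_zero]
  have hFmeas : ∀ n, AEStronglyMeasurable (F n) m := by
    intro n
    exact (continuous_const.mul (GHaux.cc_cont1 hφc he (1/((n:ℝ)+1)))).aestronglyMeasurable
  have hFbd : ∀ n, ∀ᵐ ω ∂m, ‖F n ω‖ ≤ C := by
    intro n
    filter_upwards with ω
    have hn1 : (0:ℝ) < (n:ℝ) + 1 := by positivity
    have hb0 : ‖∫ s in (0:ℝ)..(1/((n:ℝ)+1)), e (φ s ω)‖ ≤ C * |1/((n:ℝ)+1) - 0| := by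
      apply intervalIntegral.norm_integral_le_of_norm_le_const
      intro x _
      exact hCe _
    have hb1 : |∫ s in (0:ℝ)..(1/((n:ℝ)+1)), e (φ s ω)| ≤ C * (1/((n:ℝ)+1)) := by
      rwa [Real.norm_eq_abs, sub_zero,
        abs_of_pos (by positivity : (0:ℝ) < 1/((n:ℝ)+1))] at hb0
    rw [Real.norm_eq_abs, abs_mul, abs_of_pos hn1]
    calc ((n:ℝ)+1) * |∫ s in (0:ℝ)..(1/((n:ℝ)+1)), e (φ s ω)|
        ≤ ((n:ℝ)+1) * (C * (1/((n:ℝ)+1))) :=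
          mul_le_mul_of_nonneg_left hb1 (le_of_lt hn1)
      _ = C := by field_simp
  have hFlim : ∀ᵐ ω ∂m, Filter.Tendsto (fun n => F n ω) Filter.atTop (nhds (e ω)) := by
    filter_upwards with ω
    have hg : Continuous fun s => e (φ s ω) :=
      he.comp (hφc.comp (continuous_id.prodMk continuous_const))
    have hD : HasDerivAt (fun u => ∫ s in (0:ℝ)..u, e (φ s ω)) (e (φ 0 ω)) 0 :=
      intervalIntegral.integral_hasDerivAt_right (GHaux.e_int hφc he ω 0 0)
        (hg.stronglyMeasurable.stronglyMeasurableAtFilter) hg.continuousAt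
    rw [hasDerivAt_iff_tendsto_slope] at hD
    have hu : Filter.Tendsto (fun n : ℕ => 1/((n:ℝ)+1)) Filter.atTop
        (nhdsWithin 0 {(0:ℝ)}ᶜ) := by
      apply tendsto_nhdsWithin_of_tendsto_nhds_of_eventually_within
      · exact tendsto_one_div_add_atTop_nhds_zero_nat
      · filter_upwards with n
        simp only [Set.mem_compl_iff, Set.mem_singleton_iff]
        positivity
    have hcomp := hD.comp hu
    rw [hφ0] at hcomp
    refine hcomp.congr fun n => ?_
    have h0 : (∫ s in (0:ℝ)..(0:ℝ), e (φ s ω)) = 0 := intervalIntegral.integral_same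
    show slope (fun u => ∫ s in (0:ℝ)..u, e (φ s ω)) 0 (1/((n:ℝ)+1)) = F n ω
    rw [slope_def_field, h0, sub_zero, sub_zero, div_eq_mul_inv, one_div, inv_inv, mul_comm]
    simp only [hF, one_div]
  have hdct := tendsto_integral_of_dominated_convergence (fun _ => C) hFmeas
    (integrable_const C) hFbd hFlim
  have h00 : Filter.Tendsto (fun _ : ℕ => (0:ℝ)) Filter.atTop (nhds (∫ ω, e ω ∂m)) := by
    refine hdct.congr fun n => hFint n
  exact tendsto_nhds_unique h00 tendsto_const_nhds
end

section
/- Let p_t(ω,θ) := (1/t) ∫_{−t}^0 exp(∫₀ˢ (∂f/∂θ)(σ̃(r,ω,θ)) dr) ds. Then for every measurable set C ⊆ Ω×ℙ and t > 0, ∫_C p_t d(m×l_ℙ) = (1/t) ∫_{−t}^0 (m×l_ℙ)(σ̃_s(C)) ds; in particular ∫_{Ω×ℙ} p_t d(m×l_ℙ) = 1, and p := liminf_{t→∞} p_t satisfies ∫ p d(m×l_ℙ) ≤ 1, so p ∈ L¹(Ω×ℙ, m×l_ℙ). -/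
open MeasureTheory

set_option maxHeartbeats 2000000 in
open Set Filter in
open scoped ENNReal in
/-- Let `p_t(ω,θ) = (1/t) ∫_{-t}^0 exp(∫₀ˢ (∂f/∂θ)(σ̃(r,ω,θ)) dr) ds` for the
projective flow `σ̃` (written here through its angular lift `Θ` over the base
flow `φ`, with `∂f/∂θ = G`). Then for every measurable `C ⊆ Ω×ℙ` and `t > 0`,
`∫_C p_t d(m×l_ℙ) = (1/t) ∫_{-t}^0 (m×l_ℙ)(σ̃_s(C)) ds`; in particular
`∫ p_t d(m×l_ℙ) = 1`, and `p = liminf_{t→∞} p_t` satisfies `∫ p ≤ 1`,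
so `p ∈ L¹(Ω×ℙ, m×l_ℙ)`. The projective line `ℙ ≅ ℝ/πℤ` is realized as
`[0,π) ⊆ ℝ` with normalized Lebesgue measure, and `σ̃_s(C)` as the preimage of
`C` under the normalized time-`(-s)` map. -/
theorem stmt14 {Ω : Type*} [TopologicalSpace Ω] [MeasurableSpace Ω] [BorelSpace Ω]
    (m : Measure Ω) [IsProbabilityMeasure m]
    (φ : ℝ → Ω → Ω) (hφc : Continuous fun p : ℝ × Ω => φ p.1 p.2)
    (hφ0 : ∀ ω, φ 0 ω = ω) (hφadd : ∀ s t ω, φ (s + t) ω = φ s (φ t ω))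
    (hφinv : ∀ t, MeasurePreserving (φ t) m m)
    (Θ : ℝ → Ω → ℝ → ℝ)
    (hΘc : Continuous fun p : ℝ × Ω × ℝ => Θ p.1 p.2.1 p.2.2)
    (hΘ0 : ∀ ω θ, Θ 0 ω θ = θ)
    (hΘcoc : ∀ s t ω θ, Θ (s + t) ω θ = Θ s (φ t ω) (Θ t ω θ))
    (hΘper : ∀ s ω θ, Θ s ω (θ + Real.pi) = Θ s ω θ + Real.pi)
    (G : Ω → ℝ → ℝ) (hGc : Continuous fun p : Ω × ℝ => G p.1 p.2)
    (hGper : ∀ ω θ, G ω (θ + Real.pi) = G ω θ)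
    (q : ℝ → Ω → ℝ → ℝ)
    (hq : ∀ s ω θ, q s ω θ = Real.exp (∫ r in (0:ℝ)..s, G (φ r ω) (Θ r ω θ)))
    (hvar : ∀ s ω θ, HasDerivAt (fun x => Θ s ω x) (q s ω θ) θ)
    (p : ℝ → Ω → ℝ → ℝ)
    (hp : ∀ t ω θ, p t ω θ = (1 / t) * ∫ s in (-t)..(0:ℝ), q s ω θ)
    (ν : Measure (Ω × ℝ))
    (hν : ν = (ENNReal.ofReal Real.pi)⁻¹ •
      (m.prod (volume.restrict (Set.Ico (0 : ℝ) Real.pi)))) :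
    (∀ t : ℝ, 0 < t → ∀ C : Set (Ω × ℝ), MeasurableSet C →
      C ⊆ Set.univ ×ˢ Set.Ico (0 : ℝ) Real.pi →
      ∫ x in C, p t x.1 x.2 ∂ν =
        (1 / t) * ∫ s in (-t)..(0:ℝ),
          (ν ((fun x : Ω × ℝ => (φ (-s) x.1,
            Θ (-s) x.1 x.2 - Real.pi * (⌊Θ (-s) x.1 x.2 / Real.pi⌋ : ℝ))) ⁻¹' C)).toReal) ∧
    (∀ t : ℝ, 0 < t → ∫ x, p t x.1 x.2 ∂ν = 1) ∧
    (∫⁻ x, Filter.liminf (fun t : ℝ => ENNReal.ofReal (p t x.1 x.2)) Filter.atTop ∂ν) ≤ 1 := by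
  have hπ : (0:ℝ) < Real.pi := Real.pi_pos
  -- the reduction mod `π` to the fundamental domain `[0, π)`
  set fr : ℝ → ℝ := fun θ => θ - Real.pi * (⌊θ / Real.pi⌋ : ℝ) with hfr_def
  have hfr_mem : ∀ θ, fr θ ∈ Set.Ico (0:ℝ) Real.pi := by
    intro θ
    constructor
    · have := Int.sub_floor_div_mul_nonneg θ hπ
      simpa [hfr_def, mul_comm] using this
    · have := Int.sub_floor_div_mul_lt θ hπ
      simpa [hfr_def, mul_comm] using this
  have hfr_eq : ∀ θ ∈ Set.Ico (0:ℝ) Real.pi, fr θ = θ := by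
    intro θ hθ
    have : ⌊θ / Real.pi⌋ = 0 := by
      rw [Int.floor_eq_zero_iff]
      exact ⟨div_nonneg hθ.1 hπ.le, (div_lt_one hπ).2 hθ.2⟩
    simp [hfr_def, this]
  have hfr_per : ∀ θ, fr (θ + Real.pi) = fr θ := by
    intro θ
    have : ⌊(θ + Real.pi) / Real.pi⌋ = ⌊θ / Real.pi⌋ + 1 := by
      rw [add_div, div_self hπ.ne', Int.floor_add_one]
    simp only [hfr_def, this]
    push_cast
    ring
  have hfr_meas : Measurable fr := by
    apply measurable_id.sub
    apply measurable_const.mul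
    exact Measurable.comp (f := fun θ : ℝ => ⌊θ / Real.pi⌋) (g := fun n : ℤ => (n:ℝ))
      (measurable_from_top) (Int.measurable_floor.comp (measurable_id.div_const _))
  -- the flow on the product
  set T : ℝ → Ω × ℝ → Ω × ℝ := fun u x => (φ u x.1, fr (Θ u x.1 x.2)) with hT_def
  have hTmeas : Measurable fun z : ℝ × (Ω × ℝ) => T z.1 z.2 := by
    apply Measurable.prod
    · exact (hφc.comp (continuous_fst.prodMk (continuous_fst.comp continuous_snd))).measurable
    · exact hfr_meas.comp (hΘc.comp (continuous_fst.prodMk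
        ((continuous_fst.comp continuous_snd).prodMk
          (continuous_snd.comp continuous_snd)))).measurable
  have hTm : ∀ u, Measurable (T u) :=
    fun u => hTmeas.comp (measurable_const.prodMk measurable_id)
  -- continuity and positivity of q
  have hqc : Continuous fun z : ℝ × Ω × ℝ => q z.1 z.2.1 z.2.2 := by
    have he : (fun z : ℝ × Ω × ℝ => q z.1 z.2.1 z.2.2)
        = fun z => Real.exp (∫ r in (0:ℝ)..z.1, G (φ r z.2.1) (Θ r z.2.1 z.2.2)) := by
      funext z; exact hq _ _ _
    rw [he]
    apply Real.continuous_exp.comp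
    apply intervalIntegral.continuous_parametric_intervalIntegral_of_continuous (μ := volume)
      (f := fun (z : ℝ × Ω × ℝ) (r : ℝ) => G (φ r z.2.1) (Θ r z.2.1 z.2.2))
      ?_ continuous_fst
    show Continuous fun w : (ℝ × Ω × ℝ) × ℝ => G (φ w.2 w.1.2.1) (Θ w.2 w.1.2.1 w.1.2.2)
    have c1 : Continuous fun w : (ℝ × Ω × ℝ) × ℝ => φ w.2 w.1.2.1 :=
      hφc.comp (continuous_snd.prodMk ((continuous_fst.comp continuous_snd).comp
        continuous_fst))
    have c2 : Continuous fun w : (ℝ × Ω × ℝ) × ℝ => Θ w.2 w.1.2.1 w.1.2.2 :=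
      hΘc.comp (continuous_snd.prodMk
        (((continuous_fst.comp continuous_snd).comp continuous_fst).prodMk
          (((continuous_snd.comp continuous_snd).comp continuous_fst))))
    exact hGc.comp (c1.prodMk c2)
  have hq2 : ∀ s : ℝ, Continuous fun x : Ω × ℝ => q s x.1 x.2 :=
    fun s => hqc.comp (continuous_const.prodMk continuous_id)
  have hqpos : ∀ s ω θ, 0 < q s ω θ := by
    intro s ω θ; rw [hq]; exact Real.exp_pos _
  have hqper : ∀ s ω θ, q s ω (θ + Real.pi) = q s ω θ := by
    intro s ω θ
    rw [hq, hq]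
    congr 1
    apply intervalIntegral.integral_congr
    intro r _
    simp only [hΘper, hGper]
  -- inverse flow identities
  have hφinv2 : ∀ s ω, φ (-s) (φ s ω) = ω := by
    intro s ω; rw [← hφadd, neg_add_cancel, hφ0]
  have hinv1 : ∀ s ω θ, Θ (-s) (φ s ω) (Θ s ω θ) = θ := by
    intro s ω θ
    have h := (hΘcoc (-s) s ω θ).symm
    rwa [neg_add_cancel, hΘ0] at h
  have hinv2 : ∀ s ω θ, Θ s ω (Θ (-s) (φ s ω) θ) = θ := by
    intro s ω θ
    have h := hΘcoc s (-s) (φ s ω) θ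
    rw [add_neg_cancel, hΘ0, hφinv2] at h
    exact h.symm
  -- strict monotonicity
  have hmono : ∀ s ω, StrictMono (fun θ => Θ s ω θ) := by
    intro s ω
    apply strictMono_of_deriv_pos
    intro x
    rw [(hvar s ω x).deriv]
    exact hqpos s ω x
  -- the image identity
  have himg : ∀ s ω, (fun θ => Θ s ω θ) ''
      Set.Ico (Θ (-s) (φ s ω) 0) (Θ (-s) (φ s ω) 0 + Real.pi) = Set.Ico 0 Real.pi := by
    intro s ω
    have hper' : Θ (-s) (φ s ω) 0 + Real.pi = Θ (-s) (φ s ω) Real.pi := by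
      have := hΘper (-s) (φ s ω) 0
      rw [zero_add] at this
      exact this.symm
    ext θ
    constructor
    · rintro ⟨θ0, ⟨h1, h2⟩, rfl⟩
      constructor
      · have := (hmono s ω).monotone h1
        simpa only [hinv2] using this
      · rw [hper'] at h2
        have := (hmono s ω) h2
        simpa only [hinv2] using this
    · rintro ⟨h1, h2⟩
      refine ⟨Θ (-s) (φ s ω) θ, ⟨?_, ?_⟩, hinv2 s ω θ⟩
      · exact (hmono (-s) (φ s ω)).monotone h1
      · rw [hper']
        exact (hmono (-s) (φ s ω)) h2
  -- probability measure
  have hν_univ : ν Set.univ = 1 := by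
    rw [hν, Measure.smul_apply, ← Set.univ_prod_univ, Measure.prod_prod, measure_univ,
      Measure.restrict_apply_univ, Real.volume_Ico, one_mul, smul_eq_mul, sub_zero]
    exact ENNReal.inv_mul_cancel (ENNReal.ofReal_pos.mpr hπ).ne' ENNReal.ofReal_ne_top
  haveI hνP : IsProbabilityMeasure ν := ⟨hν_univ⟩
  -- indicator helpers
  have hind_mul : ∀ (C : Set (Ω × ℝ)) (F : Ω × ℝ → ℝ≥0∞) (x : Ω × ℝ),
      C.indicator F x = F x * C.indicator 1 x := by
    intro C F x
    by_cases h : x ∈ C <;> simp [h]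
  have hind_pre : ∀ (C : Set (Ω × ℝ)) (u : ℝ) (x : Ω × ℝ),
      (T u ⁻¹' C).indicator (1 : Ω × ℝ → ℝ≥0∞) x = C.indicator 1 (T u x) := by
    intro C u x
    by_cases h : T u x ∈ C <;> simp [Set.indicator_apply, h, Set.mem_preimage]
  -- the key change-of-variables identity
  have KL : ∀ (C : Set (Ω × ℝ)), MeasurableSet C → ∀ s : ℝ,
      ∫⁻ x in C, ENNReal.ofReal (q s x.1 x.2) ∂ν = ν (T (-s) ⁻¹' C) := by
    intro C hC s
    have hindm : Measurable (C.indicator (1 : Ω × ℝ → ℝ≥0∞)) := measurable_one.indicator hC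
    have hinner : ∀ ω : Ω,
        (∫⁻ θ in Set.Ico (0:ℝ) Real.pi, C.indicator 1 (ω, fr (Θ (-s) (φ s ω) θ)))
          = ∫⁻ θ in Set.Ico (0:ℝ) Real.pi,
              ENNReal.ofReal (q s ω θ) * C.indicator 1 (ω, θ) := by
      intro ω
      set a := Θ (-s) (φ s ω) 0 with ha
      have hderiv : ∀ x ∈ Set.Ico a (a + Real.pi), HasFDerivWithinAt (fun θ => Θ s ω θ)
          ((1 : ℝ →L[ℝ] ℝ).smulRight (q s ω x)) (Set.Ico a (a + Real.pi)) x :=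
        fun x _ => (hvar s ω x).hasDerivWithinAt.hasFDerivWithinAt
      conv_lhs => rw [← himg s ω]
      rw [lintegral_image_eq_lintegral_abs_det_fderiv_mul volume measurableSet_Ico hderiv
        ((hmono s ω).injective.injOn) (fun θ => C.indicator 1 (ω, fr (Θ (-s) (φ s ω) θ)))]
      simp only [ContinuousLinearMap.smulRight_one_eq_toSpanSingleton, ContinuousLinearMap.det_toSpanSingleton, hinv1]
      calc ∫⁻ x in Set.Ico a (a + Real.pi),
              ENNReal.ofReal |q s ω x| * C.indicator 1 (ω, fr x)
          = ∫⁻ x in Set.Ioc a (a + Real.pi),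
              ENNReal.ofReal |q s ω x| * C.indicator 1 (ω, fr x) :=
            setLIntegral_congr Ico_ae_eq_Ioc
        _ = ∫⁻ x in Set.Ioc 0 (0 + Real.pi),
              ENNReal.ofReal |q s ω x| * C.indicator 1 (ω, fr x) := by
            haveI : Fact (0 < Real.pi) := ⟨hπ⟩
            have hper : Function.Periodic
                (fun x => ENNReal.ofReal |q s ω x| * C.indicator 1 (ω, fr x)) Real.pi := by
              intro θ
              simp only [hqper, hfr_per]
            have he : ∀ x : ℝ, hper.lift ↑x
                = ENNReal.ofReal |q s ω x| * C.indicator 1 (ω, fr x) := hper.lift_coe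
            have h1 := AddCircle.lintegral_preimage Real.pi a hper.lift
            have h2 := AddCircle.lintegral_preimage Real.pi 0 hper.lift
            calc ∫⁻ x in Set.Ioc a (a + Real.pi),
                    ENNReal.ofReal |q s ω x| * C.indicator 1 (ω, fr x)
                = ∫⁻ x in Set.Ioc a (a + Real.pi), hper.lift ↑x := by
                  apply lintegral_congr; intro x; rw [he]
              _ = ∫⁻ b : AddCircle Real.pi, hper.lift b := h1
              _ = ∫⁻ x in Set.Ioc 0 (0 + Real.pi), hper.lift ↑x := h2.symm
              _ = ∫⁻ x in Set.Ioc 0 (0 + Real.pi),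
                    ENNReal.ofReal |q s ω x| * C.indicator 1 (ω, fr x) := by
                  apply lintegral_congr; intro x; rw [he]
        _ = ∫⁻ x in Set.Ico 0 Real.pi,
              ENNReal.ofReal |q s ω x| * C.indicator 1 (ω, fr x) := by
            rw [zero_add]
            exact (setLIntegral_congr Ico_ae_eq_Ioc).symm
        _ = ∫⁻ θ in Set.Ico (0:ℝ) Real.pi,
              ENNReal.ofReal (q s ω θ) * C.indicator 1 (ω, θ) := by
            apply setLIntegral_congr_fun measurableSet_Ico
            intro θ hθ
            beta_reduce
            rw [hfr_eq θ hθ, abs_of_pos (hqpos s ω θ)]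
    -- assemble, using invariance of `m` and Tonelli
    have hqsm : Measurable (C.indicator fun x : Ω × ℝ => ENNReal.ofReal (q s x.1 x.2)) :=
      (ENNReal.measurable_ofReal.comp (hq2 s).measurable).indicator hC
    have hm1 : Measurable fun z : Ω × ℝ => C.indicator 1 (T (-s) z) := hindm.comp (hTm (-s))
    have hg0m : Measurable fun ω : Ω =>
        ∫⁻ θ in Set.Ico (0:ℝ) Real.pi, C.indicator 1 (T (-s) (ω, θ)) := by
      apply Measurable.lintegral_prod_right (f := fun ω θ => C.indicator 1 (T (-s) (ω, θ)))
      exact hm1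
    calc ∫⁻ x in C, ENNReal.ofReal (q s x.1 x.2) ∂ν
        = ∫⁻ x, C.indicator (fun x : Ω × ℝ => ENNReal.ofReal (q s x.1 x.2)) x ∂ν :=
          (lintegral_indicator hC _).symm
      _ = (ENNReal.ofReal Real.pi)⁻¹ *
            ∫⁻ x, C.indicator (fun x : Ω × ℝ => ENNReal.ofReal (q s x.1 x.2)) x
              ∂(m.prod (volume.restrict (Set.Ico (0:ℝ) Real.pi))) := by
          rw [hν, lintegral_smul_measure, smul_eq_mul]
      _ = (ENNReal.ofReal Real.pi)⁻¹ * ∫⁻ ω, (∫⁻ θ in Set.Ico (0:ℝ) Real.pi,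
            C.indicator (fun x : Ω × ℝ => ENNReal.ofReal (q s x.1 x.2)) (ω, θ)) ∂m := by
          rw [lintegral_prod _ hqsm.aemeasurable]
      _ = (ENNReal.ofReal Real.pi)⁻¹ * ∫⁻ ω, (∫⁻ θ in Set.Ico (0:ℝ) Real.pi,
            ENNReal.ofReal (q s ω θ) * C.indicator 1 (ω, θ)) ∂m := by
          congr 1
          apply lintegral_congr
          intro ω
          apply lintegral_congr
          intro θ
          exact hind_mul C _ (ω, θ)
      _ = (ENNReal.ofReal Real.pi)⁻¹ * ∫⁻ ω, (∫⁻ θ in Set.Ico (0:ℝ) Real.pi,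
            C.indicator 1 (ω, fr (Θ (-s) (φ s ω) θ))) ∂m := by
          congr 1
          apply lintegral_congr
          intro ω
          exact (hinner ω).symm
      _ = (ENNReal.ofReal Real.pi)⁻¹ * ∫⁻ ω, (∫⁻ θ in Set.Ico (0:ℝ) Real.pi,
            C.indicator 1 (T (-s) (φ s ω, θ))) ∂m := by
          congr 1
          apply lintegral_congr
          intro ω
          apply lintegral_congr
          intro θ
          have : T (-s) (φ s ω, θ) = (ω, fr (Θ (-s) (φ s ω) θ)) := by
            rw [hT_def]
            simp only [hφinv2]
          rw [this]
      _ = (ENNReal.ofReal Real.pi)⁻¹ * ∫⁻ ω, (∫⁻ θ in Set.Ico (0:ℝ) Real.pi,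
            C.indicator 1 (T (-s) (ω, θ))) ∂m := by
          congr 1
          exact (hφinv s).lintegral_comp hg0m
      _ = (ENNReal.ofReal Real.pi)⁻¹ * ∫⁻ x, C.indicator 1 (T (-s) x)
            ∂(m.prod (volume.restrict (Set.Ico (0:ℝ) Real.pi))) := by
          rw [lintegral_prod _ hm1.aemeasurable]
      _ = (ENNReal.ofReal Real.pi)⁻¹ * ∫⁻ x, (T (-s) ⁻¹' C).indicator 1 x
            ∂(m.prod (volume.restrict (Set.Ico (0:ℝ) Real.pi))) :=
          congrArg _ (lintegral_congr fun x => (hind_pre C (-s) x).symm)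
      _ = (ENNReal.ofReal Real.pi)⁻¹ *
            (m.prod (volume.restrict (Set.Ico (0:ℝ) Real.pi))) (T (-s) ⁻¹' C) := by
          rw [lintegral_indicator_one ((hTm (-s)) hC)]
      _ = ν (T (-s) ⁻¹' C) := by
          rw [hν, Measure.smul_apply, smul_eq_mul]
  -- measurability in `s` of the measure of the flowed set
  have hVm : ∀ (C : Set (Ω × ℝ)), MeasurableSet C →
      Measurable fun s : ℝ => ν (T (-s) ⁻¹' C) := by
    intro C hC
    have h1 : (fun s : ℝ => ν (T (-s) ⁻¹' C))
        = fun s : ℝ => ∫⁻ x, C.indicator 1 (T (-s) x) ∂ν := by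
      funext s
      rw [← lintegral_indicator_one ((hTm (-s)) hC)]
      exact lintegral_congr fun x => hind_pre C (-s) x
    rw [h1]
    apply Measurable.lintegral_prod_right (f := fun (s : ℝ) (x : Ω × ℝ) => C.indicator 1 (T (-s) x))
    exact (measurable_one.indicator hC).comp
      (hTmeas.comp ((measurable_fst.neg).prodMk measurable_snd))
  -- the master identity at the level of lower integrals
  have master : ∀ t : ℝ, 0 < t → ∀ C : Set (Ω × ℝ), MeasurableSet C →
      ∫⁻ x in C, ENNReal.ofReal (p t x.1 x.2) ∂ν
        = ENNReal.ofReal (1 / t) * ∫⁻ s in Set.Ioc (-t) (0:ℝ), ν (T (-s) ⁻¹' C) := by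
    intro t ht C hC
    have hpt : ∀ x : Ω × ℝ, ENNReal.ofReal (p t x.1 x.2)
        = ENNReal.ofReal (1 / t) *
            ∫⁻ s in Set.Ioc (-t) (0:ℝ), ENNReal.ofReal (q s x.1 x.2) := by
      intro x
      rw [hp, ENNReal.ofReal_mul (by positivity), intervalIntegral.integral_of_le (by linarith)]
      congr 1
      apply ofReal_integral_eq_lintegral_ofReal
      · exact (hqc.comp (continuous_id.prodMk continuous_const)).integrableOn_Ioc
      · exact Filter.Eventually.of_forall fun s => (hqpos s x.1 x.2).le
    calc ∫⁻ x in C, ENNReal.ofReal (p t x.1 x.2) ∂ν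
        = ∫⁻ x in C, ENNReal.ofReal (1 / t) *
            (∫⁻ s in Set.Ioc (-t) (0:ℝ), ENNReal.ofReal (q s x.1 x.2)) ∂ν :=
          lintegral_congr fun x => hpt x
      _ = ENNReal.ofReal (1 / t) * ∫⁻ x in C,
            (∫⁻ s in Set.Ioc (-t) (0:ℝ), ENNReal.ofReal (q s x.1 x.2)) ∂ν :=
          lintegral_const_mul' _ _ ENNReal.ofReal_ne_top
      _ = ENNReal.ofReal (1 / t) * ∫⁻ s in Set.Ioc (-t) (0:ℝ),
            (∫⁻ x in C, ENNReal.ofReal (q s x.1 x.2) ∂ν) := by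
          congr 1
          apply lintegral_lintegral_swap
          exact (ENNReal.measurable_ofReal.comp
            (hqc.comp (continuous_snd.prodMk continuous_fst)).measurable).aemeasurable
      _ = ENNReal.ofReal (1 / t) * ∫⁻ s in Set.Ioc (-t) (0:ℝ), ν (T (-s) ⁻¹' C) := by
          congr 1
          exact lintegral_congr fun s => KL C hC s
  -- continuity and nonnegativity of p
  have hpc : ∀ t : ℝ, Continuous fun x : Ω × ℝ => p t x.1 x.2 := by
    intro t
    have he : (fun x : Ω × ℝ => p t x.1 x.2)
        = fun x : Ω × ℝ => (1 / t) * ∫ s in (-t)..(0:ℝ), q s x.1 x.2 := by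
      funext x; exact hp t x.1 x.2
    rw [he]
    apply continuous_const.mul
    exact intervalIntegral.continuous_parametric_intervalIntegral_of_continuous'
      (f := fun (x : Ω × ℝ) (s : ℝ) => q s x.1 x.2)
      (hqc.comp (continuous_snd.prodMk continuous_fst)) (-t) 0
  have hpnn : ∀ t : ℝ, 0 < t → ∀ x : Ω × ℝ, 0 ≤ p t x.1 x.2 := by
    intro t ht x
    rw [hp]
    refine mul_nonneg (by positivity) ?_
    apply intervalIntegral.integral_nonneg (by linarith)
    intro u _
    exact (hqpos u x.1 x.2).le
  -- part 1
  have part1 : ∀ t : ℝ, 0 < t → ∀ C : Set (Ω × ℝ), MeasurableSet C →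
      ∫ x in C, p t x.1 x.2 ∂ν
        = (1 / t) * ∫ s in (-t)..(0:ℝ), (ν (T (-s) ⁻¹' C)).toReal := by
    intro t ht C hC
    have hL : ∫ x in C, p t x.1 x.2 ∂ν
        = (∫⁻ x in C, ENNReal.ofReal (p t x.1 x.2) ∂ν).toReal := by
      rw [integral_eq_lintegral_of_nonneg_ae
        (Filter.Eventually.of_forall fun x => hpnn t ht x)
        ((hpc t).aestronglyMeasurable)]
    have hR : ∫ s in (-t)..(0:ℝ), (ν (T (-s) ⁻¹' C)).toReal
        = (∫⁻ s in Set.Ioc (-t) (0:ℝ), ν (T (-s) ⁻¹' C)).toReal := by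
      rw [intervalIntegral.integral_of_le (by linarith)]
      exact integral_toReal ((hVm C hC).aemeasurable.restrict)
        (Filter.Eventually.of_forall fun s => measure_lt_top ν _)
    rw [hL, master t ht C hC, hR, ENNReal.toReal_mul, ENNReal.toReal_ofReal (by positivity)]
  -- the full space is (a.e.) the fundamental box
  have hC0meas : MeasurableSet (Set.univ ×ˢ Set.Ico (0:ℝ) Real.pi) :=
    (MeasurableSet.univ (α := Ω)).prod measurableSet_Ico
  have hC0 : ν.restrict (Set.univ ×ˢ Set.Ico (0:ℝ) Real.pi) = ν := by
    apply Measure.restrict_eq_self_of_ae_mem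
    rw [ae_iff]
    have hset : {x : Ω × ℝ | ¬ x ∈ Set.univ ×ˢ Set.Ico (0:ℝ) Real.pi}
        = Set.univ ×ˢ (Set.Ico (0:ℝ) Real.pi)ᶜ := by
      ext x
      simp [Set.mem_prod]
    rw [hset, hν, Measure.smul_apply, Measure.prod_prod,
      Measure.restrict_apply measurableSet_Ico.compl]
    simp [Set.compl_inter_self]
  have hpre_univ : ∀ s : ℝ,
      T (-s) ⁻¹' (Set.univ ×ˢ Set.Ico (0:ℝ) Real.pi) = Set.univ := by
    intro s
    ext x
    simp only [Set.mem_preimage, Set.mem_prod, Set.mem_univ, true_and, iff_true]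
    exact hfr_mem _
  -- part 2
  have part2 : ∀ t : ℝ, 0 < t → ∫ x, p t x.1 x.2 ∂ν = 1 := by
    intro t ht
    have h1 : ∫ x, p t x.1 x.2 ∂ν
        = ∫ x in Set.univ ×ˢ Set.Ico (0:ℝ) Real.pi, p t x.1 x.2 ∂ν := by rw [hC0]
    rw [h1, part1 t ht _ hC0meas]
    have h2 : Set.EqOn (fun s : ℝ =>
        (ν (T (-s) ⁻¹' (Set.univ ×ˢ Set.Ico (0:ℝ) Real.pi))).toReal)
        (fun _ : ℝ => (1:ℝ)) (Set.uIcc (-t) 0) := by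
      intro s _
      simp only [hpre_univ s, hν_univ, ENNReal.toReal_one]
    rw [intervalIntegral.integral_congr h2, intervalIntegral.integral_const,
      smul_eq_mul, mul_one, sub_neg_eq_add, zero_add]
    field_simp
  -- the lower-integral version of part 2
  have lint_one : ∀ t : ℝ, 0 < t → ∫⁻ x, ENNReal.ofReal (p t x.1 x.2) ∂ν = 1 := by
    intro t ht
    have h1 : ∫⁻ x, ENNReal.ofReal (p t x.1 x.2) ∂ν
        = ∫⁻ x in Set.univ ×ˢ Set.Ico (0:ℝ) Real.pi,
            ENNReal.ofReal (p t x.1 x.2) ∂ν := by rw [hC0]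
    rw [h1, master t ht _ hC0meas]
    have h2 : ∫⁻ s in Set.Ioc (-t) (0:ℝ),
        ν (T (-s) ⁻¹' (Set.univ ×ˢ Set.Ico (0:ℝ) Real.pi)) = ENNReal.ofReal t := by
      calc ∫⁻ s in Set.Ioc (-t) (0:ℝ),
            ν (T (-s) ⁻¹' (Set.univ ×ˢ Set.Ico (0:ℝ) Real.pi))
          = ∫⁻ _ in Set.Ioc (-t) (0:ℝ), (1:ℝ≥0∞) :=
            lintegral_congr fun s => by rw [hpre_univ s, hν_univ]
        _ = ENNReal.ofReal t := by
            rw [setLIntegral_one, Real.volume_Ioc, sub_neg_eq_add, zero_add]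
    rw [h2, ← ENNReal.ofReal_mul (by positivity), one_div_mul_cancel ht.ne',
      ENNReal.ofReal_one]
  -- the liminf over real times is bounded by the liminf over integer times
  have hlim : ∀ u : ℝ → ℝ≥0∞,
      Filter.liminf u Filter.atTop ≤ Filter.liminf (fun n : ℕ => u n) Filter.atTop := by
    intro u
    have h1 : Filter.map (Nat.cast : ℕ → ℝ) Filter.atTop ≤ Filter.atTop :=
      tendsto_natCast_atTop_atTop
    have h2 : Filter.liminf u (Filter.map (Nat.cast : ℕ → ℝ) Filter.atTop)
        = Filter.liminf (fun n : ℕ => u n) Filter.atTop := by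
      unfold Filter.liminf
      rw [Filter.map_map]
      rfl
    exact (Filter.liminf_le_liminf_of_le h1).trans_eq h2
  refine ⟨fun t ht C hC _ => part1 t ht C hC, part2, ?_⟩
  calc ∫⁻ x, Filter.liminf (fun t : ℝ => ENNReal.ofReal (p t x.1 x.2)) Filter.atTop ∂ν
      ≤ ∫⁻ x, Filter.liminf (fun n : ℕ => ENNReal.ofReal (p (n:ℝ) x.1 x.2)) Filter.atTop ∂ν :=
        lintegral_mono fun x => hlim _
    _ ≤ Filter.liminf (fun n : ℕ => ∫⁻ x, ENNReal.ofReal (p (n:ℝ) x.1 x.2) ∂ν) Filter.atTop :=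
        lintegral_liminf_le fun n => ENNReal.measurable_ofReal.comp (hpc (n:ℝ)).measurable
    _ = 1 := by
        have h : ∀ᶠ n : ℕ in Filter.atTop,
            (fun n : ℕ => ∫⁻ x, ENNReal.ofReal (p (n:ℝ) x.1 x.2) ∂ν) n
              = (fun _ : ℕ => (1:ℝ≥0∞)) n := by
          filter_upwards [Filter.eventually_ge_atTop 1] with n hn
          exact lint_one n (by exact_mod_cast hn)
        rw [Filter.liminf_congr h, Filter.liminf_const]
end

section
/- With p_t as above, for 0 < l < t one has the cocycle identity p_t(σ̃(l,ω,θ)) · exp(∫₀ˡ (∂f/∂θ)(σ̃(r,ω,θ)) dr) = ((t−l)/t) p_{t−l}(ω,θ) + (1/t) ∫₀ˡ exp(∫₀ˢ (∂f/∂θ)(σ̃(r,ω,θ)) dr) ds. Consequently p := liminf_{t→∞} p_t satisfies p(σ̃(l,ω,θ)) = p(ω,θ) exp(−∫₀ˡ (∂f/∂θ)(σ̃(s,ω,θ)) ds) for all l ∈ ℝ and all (ω,θ). -/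
open Filter ENNReal MeasureTheory

lemma myliminf_shift (f : ℝ → ℝ≥0∞) (l : ℝ) :
    Filter.liminf (fun t => f (t - l)) Filter.atTop = Filter.liminf f Filter.atTop := by
  have hmap : Filter.map (fun t : ℝ => t - l) Filter.atTop = Filter.atTop :=
    (OrderIso.subRight l).map_atTop
  have : (fun t : ℝ => f (t - l)) = f ∘ (fun t : ℝ => t - l) := rfl
  rw [this, Filter.liminf, Filter.liminf, ← Filter.map_map, hmap]

lemma myliminf_const_mul (f : ℝ → ℝ≥0∞) {c : ℝ≥0∞} (hc : c ≠ ∞) :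
    Filter.liminf (fun t => c * f t) Filter.atTop = c * Filter.liminf f Filter.atTop := by
  exact (Monotone.map_liminf_of_continuousAt (f := fun z : ℝ≥0∞ => c * z)
    (fun a b h => mul_le_mul_right h c) f ((ENNReal.continuous_const_mul hc).continuousAt)).symm

lemma myliminf_le (u v : ℝ → ℝ≥0∞)
    (h : ∀ ε : ℝ, 0 < ε → ∀ᶠ t in Filter.atTop,
      u t ≤ ENNReal.ofReal (1+ε) * v t + ENNReal.ofReal ε) :
    Filter.liminf u Filter.atTop ≤ Filter.liminf v Filter.atTop := by
  set L := Filter.liminf v Filter.atTop with hL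
  have key : ∀ ε : ℝ, 0 < ε →
      Filter.liminf u Filter.atTop ≤ ENNReal.ofReal (1+ε) * L + ENNReal.ofReal ε := by
    intro ε hε
    calc Filter.liminf u Filter.atTop
        ≤ Filter.liminf (fun t => ENNReal.ofReal (1+ε) * v t + ENNReal.ofReal ε)
            Filter.atTop := Filter.liminf_le_liminf (h ε hε)
      _ = ENNReal.ofReal (1+ε) * L + ENNReal.ofReal ε := by
          rw [liminf_add_const Filter.atTop _ _ (by isBoundedDefault) (by isBoundedDefault),
            myliminf_const_mul v (by simp)]
  rcases eq_top_or_lt_top L with hLtop | hLlt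
  · rw [hLtop]; exact le_top
  · have h1 : Filter.Tendsto (fun ε : ℝ => ENNReal.ofReal (1+ε)) (nhdsWithin 0 (Set.Ioi 0))
        (nhds 1) := by
      have : Filter.Tendsto (fun ε : ℝ => ENNReal.ofReal (1+ε)) (nhds 0) (nhds 1) := by
        have hc : Continuous (fun ε : ℝ => ENNReal.ofReal (1+ε)) :=
          ENNReal.continuous_ofReal.comp (continuous_const.add continuous_id)
        simpa using hc.tendsto 0
      exact this.mono_left nhdsWithin_le_nhds
    have h2 : Filter.Tendsto (fun ε : ℝ => ENNReal.ofReal ε) (nhdsWithin 0 (Set.Ioi 0))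
        (nhds 0) := by
      have : Filter.Tendsto (fun ε : ℝ => ENNReal.ofReal ε) (nhds 0) (nhds 0) := by
        simpa using ENNReal.continuous_ofReal.tendsto 0
      exact this.mono_left nhdsWithin_le_nhds
    have htend : Filter.Tendsto (fun ε : ℝ => ENNReal.ofReal (1+ε) * L + ENNReal.ofReal ε)
        (nhdsWithin 0 (Set.Ioi 0)) (nhds L) := by
      have := (ENNReal.Tendsto.mul_const h1 (Or.inr hLlt.ne)).add h2
      simpa using this
    refine ge_of_tendsto htend ?_
    filter_upwards [self_mem_nhdsWithin] with ε hε
    exact key ε hε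

lemma myineq1 (a C t l ε : ℝ) (ha : 0 ≤ a) (ht : 0 < t) (htl : 0 < t + l) (hε : 0 < ε)
    (hC : |C| * (1+ε) ≤ ε * (t+l)) (hq : t ≤ (1+ε)*(t+l)) :
    (1/(t+l))*(a + C) ≤ (1+ε)*((1/t)*a) + ε := by
  have habs : |C| ≤ ε * (t+l) := by nlinarith [abs_nonneg C]
  have hCt : C * t ≤ ε * (t+l) * t :=
    mul_le_mul_of_nonneg_right ((le_abs_self C).trans habs) ht.le
  have hat : t * a ≤ (1+ε)*(t+l)*a := mul_le_mul_of_nonneg_right hq ha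
  have key : (a + C) * t ≤ ((1+ε)*a + ε * t) * (t+l) := by nlinarith
  have e : (1/(t+l))*(a + C) = (a+C)*t / (t * (t+l)) := by field_simp
  have e2 : (1+ε)*((1/t)*a) + ε = ((1+ε)*a + ε*t)*(t+l) / (t*(t+l)) := by field_simp
  rw [e, e2]
  gcongr

lemma myineq2 (a C t l ε : ℝ) (ha : 0 ≤ a) (ht : 0 < t) (htl : 0 < t + l) (hε : 0 < ε)
    (hC : |C| * (1+ε) ≤ ε * (t+l)) (hq : t + l ≤ (1+ε)*t) :
    (1/t)*a ≤ (1+ε)*((1/(t+l))*(a+C)) + ε := by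
  have h2 : -(ε * (t+l)) ≤ (1+ε)*C := by nlinarith [neg_abs_le C, abs_nonneg C]
  have h2t : (-(ε * (t+l))) * t ≤ (1+ε)*C*t := mul_le_mul_of_nonneg_right h2 ht.le
  have hat : (t+l) * a ≤ (1+ε)*t*a := mul_le_mul_of_nonneg_right hq ha
  have key : a * (t+l) ≤ ((1+ε)*(a+C) + ε*(t+l)) * t := by nlinarith
  have e : (1/t)*a = a*(t+l) / (t*(t+l)) := by field_simp
  have e2 : (1+ε)*((1/(t+l))*(a+C)) + ε = ((1+ε)*(a+C) + ε*(t+l))*t / (t*(t+l)) := by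
    field_simp
  rw [e, e2]
  gcongr

/-- Cocycle identity for `p_t(x) = (1/t) ∫_{-t}^0 exp(∫₀ˢ G(ψ_r x) dr) ds`:
for `0 < l < t`,
`p_t(ψ_l x) · exp(∫₀ˡ G(ψ_r x) dr) = ((t-l)/t) p_{t-l}(x) + (1/t) ∫₀ˡ q_s(x) ds`.
Consequently `p := liminf_{t→∞} p_t` satisfies
`p(ψ_l x) = p(x) · exp(-∫₀ˡ G(ψ_s x) ds)` for all `l ∈ ℝ` and all `x`
(the liminf being taken in `[0,∞]`). -/
theorem stmt15 {X : Type*} [TopologicalSpace X]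
    (ψ : ℝ → X → X) (hψc : Continuous fun p : ℝ × X => ψ p.1 p.2)
    (hψ0 : ∀ x, ψ 0 x = x) (hψadd : ∀ s t x, ψ (s + t) x = ψ s (ψ t x))
    (G : X → ℝ) (hG : Continuous G)
    (q : ℝ → X → ℝ) (hq : ∀ s x, q s x = Real.exp (∫ r in (0:ℝ)..s, G (ψ r x)))
    (p : ℝ → X → ℝ) (hp : ∀ t x, p t x = (1 / t) * ∫ s in (-t)..(0:ℝ), q s x) :
    (∀ (x : X) (l t : ℝ), 0 < l → l < t →
      p t (ψ l x) * Real.exp (∫ r in (0:ℝ)..l, G (ψ r x)) =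
        ((t - l) / t) * p (t - l) x + (1 / t) * ∫ s in (0:ℝ)..l, q s x) ∧
    (∀ (x : X) (l : ℝ),
      Filter.liminf (fun t : ℝ => ENNReal.ofReal (p t (ψ l x))) Filter.atTop =
        Filter.liminf (fun t : ℝ => ENNReal.ofReal (p t x)) Filter.atTop *
          ENNReal.ofReal (Real.exp (-∫ s in (0:ℝ)..l, G (ψ s x)))) := by
  have hgc : ∀ x : X, Continuous fun r : ℝ => G (ψ r x) := by
    intro x
    exact hG.comp (hψc.comp (continuous_id.prodMk continuous_const))
  have hgi : ∀ (x : X) (a b : ℝ),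
      IntervalIntegrable (fun r => G (ψ r x)) MeasureTheory.volume a b :=
    fun x a b => (hgc x).intervalIntegrable a b
  have hJc : ∀ x : X, Continuous fun s : ℝ => Real.exp (∫ r in (0:ℝ)..s, G (ψ r x)) :=
    fun x => (intervalIntegral.continuous_primitive (hgi x) 0).rexp
  have hJi : ∀ (x : X) (a b : ℝ),
      IntervalIntegrable (fun s => Real.exp (∫ r in (0:ℝ)..s, G (ψ r x)))
        MeasureTheory.volume a b :=
    fun x a b => (hJc x).intervalIntegrable a b
  have master : ∀ (x : X) (l t : ℝ),
      p t (ψ l x) = (1/t) * ((∫ s in (-(t-l))..(0:ℝ), Real.exp (∫ r in (0:ℝ)..s, G (ψ r x))) +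
        ∫ s in (0:ℝ)..l, Real.exp (∫ r in (0:ℝ)..s, G (ψ r x))) *
        Real.exp (-(∫ r in (0:ℝ)..l, G (ψ r x))) := by
    intro x l t
    have hcomp : ∀ s : ℝ, q s (ψ l x) =
        Real.exp (∫ r in (0:ℝ)..(s+l), G (ψ r x)) *
          Real.exp (-(∫ r in (0:ℝ)..l, G (ψ r x))) := by
      intro s
      rw [hq]
      have h1 : (∫ r in (0:ℝ)..s, G (ψ r (ψ l x))) = ∫ r in (0:ℝ)..s, G (ψ (r + l) x) := by
        simp only [← hψadd]
      have h2 : (∫ r in (0:ℝ)..s, G (ψ (r + l) x)) = ∫ r in (0:ℝ)+l..(s+l), G (ψ r x) :=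
        intervalIntegral.integral_comp_add_right (f := fun u => G (ψ u x)) l
      have h3 : (∫ r in (0:ℝ)..l, G (ψ r x)) + (∫ r in l..(s+l), G (ψ r x)) =
          ∫ r in (0:ℝ)..(s+l), G (ψ r x) :=
        intervalIntegral.integral_add_adjacent_intervals (hgi x 0 l) (hgi x l (s+l))
      rw [h1, h2, zero_add,
        show (∫ r in l..(s+l), G (ψ r x)) =
          (∫ r in (0:ℝ)..(s+l), G (ψ r x)) - ∫ r in (0:ℝ)..l, G (ψ r x) by linarith [h3],
        Real.exp_sub, Real.exp_neg, div_eq_mul_inv]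
    rw [hp]
    have h4 : (∫ s in (-t)..(0:ℝ), q s (ψ l x)) =
        (∫ s in (-t)..(0:ℝ), Real.exp (∫ r in (0:ℝ)..(s+l), G (ψ r x))) *
          Real.exp (-(∫ r in (0:ℝ)..l, G (ψ r x))) := by
      simp only [hcomp]
      exact intervalIntegral.integral_mul_const _ _
    have h5 : (∫ s in (-t)..(0:ℝ), Real.exp (∫ r in (0:ℝ)..(s+l), G (ψ r x))) =
        ∫ s in (-t)+l..(0:ℝ)+l, Real.exp (∫ r in (0:ℝ)..s, G (ψ r x)) :=
      intervalIntegral.integral_comp_add_right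
        (f := fun u => Real.exp (∫ r in (0:ℝ)..u, G (ψ r x))) l
    have h6 : (∫ s in (-(t-l))..(0:ℝ), Real.exp (∫ r in (0:ℝ)..s, G (ψ r x))) +
        (∫ s in (0:ℝ)..l, Real.exp (∫ r in (0:ℝ)..s, G (ψ r x))) =
        ∫ s in (-(t-l))..l, Real.exp (∫ r in (0:ℝ)..s, G (ψ r x)) :=
      intervalIntegral.integral_add_adjacent_intervals (hJi x _ _) (hJi x _ _)
    rw [h4, h5, show (-t)+l = -(t-l) by ring, zero_add, ← h6]
    ring
  constructor
  · intro x l t hl hlt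
    have ht : (0:ℝ) < t := hl.trans hlt
    have htl : (0:ℝ) < t - l := by linarith
    rw [master x l t, hp (t-l) x]
    simp only [hq]
    set I := ∫ r in (0:ℝ)..l, G (ψ r x) with hI
    have hEE : Real.exp (-I) * Real.exp I = 1 := by rw [← Real.exp_add]; simp
    rw [mul_assoc, hEE, mul_one]
    field_simp
  · intro x l
    set I := ∫ s in (0:ℝ)..l, G (ψ s x) with hI
    set E : ℝ := Real.exp (-I) with hE
    set A : ℝ → ℝ :=
      fun u => ∫ s in (-u)..(0:ℝ), Real.exp (∫ r in (0:ℝ)..s, G (ψ r x)) with hA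
    set C : ℝ := ∫ s in (0:ℝ)..l, Real.exp (∫ r in (0:ℝ)..s, G (ψ r x)) with hC
    have hE0 : 0 < E := by rw [hE]; exact Real.exp_pos _
    have hmaster : ∀ t : ℝ, p t (ψ l x) = (1/t) * (A (t-l) + C) * E := by
      intro t
      simp only [hA, hC, hE, hI]
      exact master x l t
    have hpx : ∀ t : ℝ, p t x = (1/t) * A t := by
      intro t
      rw [hp]
      simp only [hq, hA]
    have step1 : (fun t : ℝ => ENNReal.ofReal (p t (ψ l x))) =
        fun t => ENNReal.ofReal E * ENNReal.ofReal ((1/t) * (A (t-l) + C)) := by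
      funext t
      rw [hmaster t, mul_comm ((1/t) * (A (t-l) + C)) E, ENNReal.ofReal_mul hE0.le]
    have hRfun : (fun t : ℝ => ENNReal.ofReal (p t x)) =
        fun t => ENNReal.ofReal ((1/t) * A t) := by
      funext t; rw [hpx t]
    rw [step1, myliminf_const_mul _ ENNReal.ofReal_ne_top, hRfun, mul_comm]
    congr 1
    have hshift : (fun t : ℝ => ENNReal.ofReal ((1/t) * (A (t-l) + C))) =
        fun t => (fun s : ℝ => ENNReal.ofReal ((1/(s+l)) * (A s + C))) (t - l) := by
      funext t; simp only [sub_add_cancel]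
    rw [hshift, myliminf_shift (fun s : ℝ => ENNReal.ofReal ((1/(s+l)) * (A s + C))) l]
    have hev : ∀ ε : ℝ, 0 < ε → ∀ᶠ t : ℝ in Filter.atTop,
        0 < t ∧ 0 < t + l ∧ |C| * (1+ε) ≤ ε * (t+l) ∧ t ≤ (1+ε)*(t+l) ∧
          t + l ≤ (1+ε)*t ∧ 0 ≤ A t := by
      intro ε hε
      filter_upwards [Filter.eventually_ge_atTop
        (max (max 1 (1 - l)) (max (|C| * (1+ε)/ε - l) (max ((1+ε) * |l|/ε) (|l|/ε))))] with t htt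
    
      have hb1 : (1:ℝ) ≤ t := le_trans (le_trans (le_max_left _ _) (le_max_left _ _)) htt
      have hb2 : 1 - l ≤ t := le_trans (le_trans (le_max_right _ _) (le_max_left _ _)) htt
      have hb3 : |C| * (1+ε)/ε - l ≤ t :=
        le_trans (le_trans (le_max_left _ _) (le_max_right _ _)) htt
      have hb4 : (1+ε) * |l|/ε ≤ t :=
        le_trans (le_trans (le_trans (le_max_left _ _) (le_max_right _ _)) (le_max_right _ _)) htt
      have hb5 : |l|/ε ≤ t :=
        le_trans (le_trans (le_trans (le_max_right _ _) (le_max_right _ _)) (le_max_right _ _)) htt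
      have ht0 : 0 < t := lt_of_lt_of_le one_pos hb1
      have htl0 : 0 < t + l := by linarith
      refine ⟨ht0, htl0, ?_, ?_, ?_, ?_⟩
      · have : |C| * (1+ε)/ε ≤ t + l := by linarith
        rw [div_le_iff₀ hε] at this
        linarith
      · rw [div_le_iff₀ hε] at hb4
        nlinarith [mul_le_mul_of_nonneg_left (neg_abs_le l) (by linarith : (0:ℝ) ≤ 1+ε)]
      · rw [div_le_iff₀ hε] at hb5
        nlinarith [le_abs_self l]
      · simp only [hA]
        apply intervalIntegral.integral_nonneg (by linarith : -t ≤ (0:ℝ))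
        intro u _
        exact (Real.exp_pos _).le
    apply le_antisymm
    · apply myliminf_le
      intro ε hε
      filter_upwards [hev ε hε] with t ht
      obtain ⟨h1, h2, h3, h4, h5, h6⟩ := ht
      calc ENNReal.ofReal ((1/(t+l))*(A t + C))
          ≤ ENNReal.ofReal ((1+ε)*((1/t)*(A t)) + ε) :=
            ENNReal.ofReal_le_ofReal (myineq1 (A t) C t l ε h6 h1 h2 hε h3 h4)
        _ ≤ ENNReal.ofReal ((1+ε)*((1/t)*(A t))) + ENNReal.ofReal ε := ENNReal.ofReal_add_le
        _ = ENNReal.ofReal (1+ε) * ENNReal.ofReal ((1/t)*(A t)) + ENNReal.ofReal ε := by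
            rw [ENNReal.ofReal_mul (by positivity)]
    · apply myliminf_le
      intro ε hε
      filter_upwards [hev ε hε] with t ht
      obtain ⟨h1, h2, h3, h4, h5, h6⟩ := ht
      calc ENNReal.ofReal ((1/t)*(A t))
          ≤ ENNReal.ofReal ((1+ε)*((1/(t+l))*(A t + C)) + ε) :=
            ENNReal.ofReal_le_ofReal (myineq2 (A t) C t l ε h6 h1 h2 hε h3 h5)
        _ ≤ ENNReal.ofReal ((1+ε)*((1/(t+l))*(A t + C))) + ENNReal.ofReal ε :=
            ENNReal.ofReal_add_le
        _ = ENNReal.ofReal (1+ε) * ENNReal.ofReal ((1/(t+l))*(A t + C)) + ENNReal.ofReal ε := by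
            rw [ENNReal.ofReal_mul (by positivity)]
end

section
/- Suppose all solutions of all systems of the family y' = Ã(ω·t) y (with tr Ã ≡ 0, Ω compact, flow minimal) are bounded, uniformly: c := sup_{t,ω} |U(t,ω)| < ∞. Then they are also uniformly bounded away from zero (since det U(t,ω) = 1, the inverse matrices are uniformly bounded), and consequently the skew-product flow on Ω×S¹ induced by the angular equation is distal. -/
noncomputable section

private lemma stmt16.normsq (x : EuclideanSpace ℝ (Fin 2)) :
    ‖x‖^2 = x 0^2 + x 1^2 := by
  have h : ‖x‖ = Real.sqrt (x 0^2 + x 1^2) := by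
    rw [EuclideanSpace.norm_eq]; simp [Fin.sum_univ_two, sq_abs]
  rw [h, Real.sq_sqrt (by positivity)]

private lemma stmt16.area_le (x y : EuclideanSpace ℝ (Fin 2)) (hx : ‖x‖ = 1) (hy : ‖y‖ = 1) :
    |x 0 * y 1 - x 1 * y 0| ≤ ‖x - y‖ := by
  have hx2 : x 0^2 + x 1^2 = 1 := by rw [← stmt16.normsq, hx]; norm_num
  have hy2 : y 0^2 + y 1^2 = 1 := by rw [← stmt16.normsq, hy]; norm_num
  have hd : ‖x - y‖^2 = (x 0 - y 0)^2 + (x 1 - y 1)^2 := by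
    rw [stmt16.normsq]; rfl
  have key : (x 0 * y 1 - x 1 * y 0)^2 ≤ ‖x - y‖^2 := by
    rw [hd]
    nlinarith [sq_nonneg (1 - (x 0 * y 0 + x 1 * y 1)), sq_nonneg (x 0 * y 1 - x 1 * y 0)]
  calc |x 0 * y 1 - x 1 * y 0| = Real.sqrt ((x 0 * y 1 - x 1 * y 0)^2) :=
        (Real.sqrt_sq_eq_abs _).symm
    _ ≤ Real.sqrt (‖x - y‖^2) := Real.sqrt_le_sqrt key
    _ = ‖x - y‖ := Real.sqrt_sq (norm_nonneg _)

private lemma stmt16.neg_of_area_zero (x y : EuclideanSpace ℝ (Fin 2)) (hx : ‖x‖ = 1)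
    (hy : ‖y‖ = 1) (hne : x ≠ y) (h0 : x 0 * y 1 - x 1 * y 0 = 0) : y = -x := by
  have hx2 : x 0^2 + x 1^2 = 1 := by rw [← stmt16.normsq, hx]; norm_num
  have hy2 : y 0^2 + y 1^2 = 1 := by rw [← stmt16.normsq, hy]; norm_num
  have hne' : (x 0 - y 0)^2 + (x 1 - y 1)^2 ≠ 0 := by
    intro h
    apply hne
    have h0' : x 0 = y 0 := by nlinarith [sq_nonneg (x 0 - y 0), sq_nonneg (x 1 - y 1)]
    have h1' : x 1 = y 1 := by nlinarith [sq_nonneg (x 0 - y 0), sq_nonneg (x 1 - y 1)]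
    ext i
    fin_cases i <;> simp [h0', h1']
  have hsneg : x 0 * y 0 + x 1 * y 1 = -1 := by
    have hs : (x 0 * y 0 + x 1 * y 1)^2 = 1 := by nlinarith
    have hcases : (x 0 * y 0 + x 1 * y 1 - 1) * (x 0 * y 0 + x 1 * y 1 + 1) = 0 := by
      nlinarith
    rcases mul_eq_zero.mp hcases with h | h
    · exfalso; apply hne'; nlinarith
    · linarith
  have hsum : (x 0 + y 0)^2 + (x 1 + y 1)^2 = 0 := by nlinarith
  have h0' : y 0 = -x 0 := by nlinarith [sq_nonneg (x 0 + y 0), sq_nonneg (x 1 + y 1)]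
  have h1' : y 1 = -x 1 := by nlinarith [sq_nonneg (x 0 + y 0), sq_nonneg (x 1 + y 1)]
  ext i
  fin_cases i <;> simp [h0', h1']

private lemma stmt16.det2 (f : EuclideanSpace ℝ (Fin 2) →ₗ[ℝ] EuclideanSpace ℝ (Fin 2))
    (u v : EuclideanSpace ℝ (Fin 2)) :
    (f u) 0 * (f v) 1 - (f u) 1 * (f v) 0
      = f.det * (u 0 * v 1 - u 1 * v 0) := by
  classical
  let b : Module.Basis (Fin 2) ℝ (EuclideanSpace ℝ (Fin 2)) := PiLp.basisFun 2 ℝ (Fin 2)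
  have hdet : f.det = ((LinearMap.toMatrix b b) f).det := (LinearMap.det_toMatrix b f).symm
  have hrepr : ∀ x : EuclideanSpace ℝ (Fin 2), x = x 0 • b 0 + x 1 • b 1 := by
    intro x
    have h := b.sum_repr x
    rw [Fin.sum_univ_two] at h
    have h0 : b.repr x 0 = x 0 := PiLp.basisFun_repr (p := 2) (𝕜 := ℝ) (ι := Fin 2) x 0
    have h1 : b.repr x 1 = x 1 := PiLp.basisFun_repr (p := 2) (𝕜 := ℝ) (ι := Fin 2) x 1
    rw [h0, h1] at h
    exact h.symm
  have hentry : ∀ i j, (LinearMap.toMatrix b b) f i j = f (b j) i := by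
    intro i j
    rw [LinearMap.toMatrix_apply]
    exact PiLp.basisFun_repr (p := 2) (𝕜 := ℝ) (ι := Fin 2) (f (b j)) i
  have hb : ∀ i j : Fin 2, b i j = if i = j then 1 else 0 := by
    intro i j
    show (PiLp.basisFun 2 ℝ (Fin 2)) i j = _
    rw [PiLp.basisFun_apply]
    simp [Pi.single_apply, eq_comm]
  rw [hdet, Matrix.det_fin_two, hentry, hentry, hentry, hentry]
  rw [hrepr u, hrepr v]
  simp only [map_add, map_smul]
  simp only [PiLp.add_apply, PiLp.smul_apply, smul_eq_mul]
  simp [hb]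
  ring

/-- If the fundamental solutions `U(t,ω)` of the zero-trace family
`y' = Ã(ω·t) y` are uniformly bounded, `‖U(t,ω)‖ ≤ c`, and `det U(t,ω) = 1`,
then they are also uniformly bounded away from zero (`‖v‖ ≤ c ‖U(t,ω)v‖`),
and consequently the induced angular flow on `Ω × S¹` is distal: for any two
distinct unit vectors the normalized images stay at distance bounded below. -/
theorem stmt16 {Ω : Type*} (φ : ℝ → Ω → Ω)
    (hφ0 : ∀ ω, φ 0 ω = ω) (hφadd : ∀ s t ω, φ (s + t) ω = φ s (φ t ω))
    (L : ℝ → Ω → EuclideanSpace ℝ (Fin 2) →L[ℝ] EuclideanSpace ℝ (Fin 2))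
    (hL0 : ∀ ω, L 0 ω = ContinuousLinearMap.id ℝ (EuclideanSpace ℝ (Fin 2)))
    (hLcoc : ∀ s t ω, L (s + t) ω = (L s (φ t ω)).comp (L t ω))
    (hdet : ∀ t ω, LinearMap.det
      ((L t ω : EuclideanSpace ℝ (Fin 2) →ₗ[ℝ] EuclideanSpace ℝ (Fin 2))) = 1)
    (c : ℝ) (hc : ∀ t ω, ‖L t ω‖ ≤ c) :
    (∀ (t : ℝ) (ω : Ω) (v : EuclideanSpace ℝ (Fin 2)), ‖v‖ ≤ c * ‖L t ω v‖) ∧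
    (∀ (ω : Ω) (u u' : EuclideanSpace ℝ (Fin 2)), ‖u‖ = 1 → ‖u'‖ = 1 → u ≠ u' →
      ∃ ε > 0, ∀ t : ℝ,
        ε ≤ ‖(‖L t ω u‖)⁻¹ • L t ω u - (‖L t ω u'‖)⁻¹ • L t ω u'‖) := by
  have key : ∀ (t : ℝ) (ω : Ω) (v : EuclideanSpace ℝ (Fin 2)), ‖v‖ ≤ c * ‖L t ω v‖ := by
    intro t ω v
    have hinv : L (-t) (φ t ω) (L t ω v) = v := by
      have h := hLcoc (-t) t ω
      rw [neg_add_cancel, hL0] at h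
      have h2 := congrArg (fun f : EuclideanSpace ℝ (Fin 2) →L[ℝ] EuclideanSpace ℝ (Fin 2)
        => f v) h
      simpa using h2.symm
    calc ‖v‖ = ‖L (-t) (φ t ω) (L t ω v)‖ := by rw [hinv]
      _ ≤ ‖L (-t) (φ t ω)‖ * ‖L t ω v‖ := ContinuousLinearMap.le_opNorm _ _
      _ ≤ c * ‖L t ω v‖ := mul_le_mul_of_nonneg_right (hc _ _) (norm_nonneg _)
  refine ⟨key, ?_⟩
  intro ω u u' hu hu' hne
  have hc1 : (1:ℝ) ≤ c := by
    have h := hc 0 ω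
    rw [hL0] at h
    simpa using h
  have hcpos : (0:ℝ) < c := lt_of_lt_of_le one_pos hc1
  have hanz : ∀ t, L t ω u ≠ 0 := by
    intro t h
    have := key t ω u
    rw [h, norm_zero, mul_zero, hu] at this
    linarith
  have hbnz : ∀ t, L t ω u' ≠ 0 := by
    intro t h
    have := key t ω u'
    rw [h, norm_zero, mul_zero, hu'] at this
    linarith
  set D : ℝ := u 0 * u' 1 - u 1 * u' 0 with hD
  by_cases hD0 : D = 0
  · -- antipodal case: u' = -u
    have hneg : u' = -u := stmt16.neg_of_area_zero u u' hu hu' hne hD0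
    refine ⟨2, two_pos, fun t => ?_⟩
    have hb : L t ω u' = -(L t ω u) := by rw [hneg, map_neg]
    rw [hb, norm_neg, smul_neg, sub_neg_eq_add, ← two_smul ℝ, norm_smul, norm_smul]
    have h2 : (‖L t ω u‖)⁻¹ * ‖L t ω u‖ = 1 :=
      inv_mul_cancel₀ (norm_ne_zero_iff.mpr (hanz t))
    simp [h2]
  · refine ⟨|D| / c^2, by positivity, fun t => ?_⟩
    set a : EuclideanSpace ℝ (Fin 2) := L t ω u with ha
    set b : EuclideanSpace ℝ (Fin 2) := L t ω u' with hbdef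
    have hna : 0 < ‖a‖ := norm_pos_iff.mpr (hanz t)
    have hnb : 0 < ‖b‖ := norm_pos_iff.mpr (hbnz t)
    have hna' : ‖a‖ ≤ c := by
      calc ‖a‖ ≤ ‖L t ω‖ * ‖u‖ := ContinuousLinearMap.le_opNorm _ _
        _ = ‖L t ω‖ := by rw [hu, mul_one]
        _ ≤ c := hc t ω
    have hnb' : ‖b‖ ≤ c := by
      calc ‖b‖ ≤ ‖L t ω‖ * ‖u'‖ := ContinuousLinearMap.le_opNorm _ _
        _ = ‖L t ω‖ := by rw [hu', mul_one]
        _ ≤ c := hc t ω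
    set x : EuclideanSpace ℝ (Fin 2) := (‖a‖)⁻¹ • a with hx
    set y : EuclideanSpace ℝ (Fin 2) := (‖b‖)⁻¹ • b with hy
    have hxn : ‖x‖ = 1 := by
      rw [hx, norm_smul, norm_inv, norm_norm, inv_mul_cancel₀ (ne_of_gt hna)]
    have hyn : ‖y‖ = 1 := by
      rw [hy, norm_smul, norm_inv, norm_norm, inv_mul_cancel₀ (ne_of_gt hnb)]
    have hareaab : a 0 * b 1 - a 1 * b 0 = D := by
      have h := stmt16.det2 (L t ω : EuclideanSpace ℝ (Fin 2) →ₗ[ℝ] EuclideanSpace ℝ (Fin 2)) u u'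
      rw [hdet t ω, one_mul] at h
      simpa [ha, hbdef] using h
    have hareaxy : x 0 * y 1 - x 1 * y 0 = (‖a‖)⁻¹ * (‖b‖)⁻¹ * D := by
      have hx0 : x 0 = (‖a‖)⁻¹ * a 0 := rfl
      have hx1 : x 1 = (‖a‖)⁻¹ * a 1 := rfl
      have hy0 : y 0 = (‖b‖)⁻¹ * b 0 := rfl
      have hy1 : y 1 = (‖b‖)⁻¹ * b 1 := rfl
      rw [hx0, hx1, hy0, hy1, ← hareaab]
      ring
    have habs : |x 0 * y 1 - x 1 * y 0| = (‖a‖)⁻¹ * (‖b‖)⁻¹ * |D| := by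
      rw [hareaxy, abs_mul, abs_mul, abs_inv, abs_inv, abs_norm, abs_norm]
    have hlow : |D| / c^2 ≤ (‖a‖)⁻¹ * (‖b‖)⁻¹ * |D| := by
      have h1 : (‖a‖)⁻¹ * (‖b‖)⁻¹ * |D| = |D| / (‖a‖ * ‖b‖) := by
        field_simp
      rw [h1, sq]
      gcongr
      all_goals first | positivity | exact abs_nonneg _ | exact hna' | exact hnb'
    calc |D| / c^2 ≤ |x 0 * y 1 - x 1 * y 0| := by rw [habs]; exact hlow
      _ ≤ ‖x - y‖ := stmt16.area_le x y hxn hyn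
end
end

section
/- Let (Ω,σ,ℝ) be a minimal flow, and let Ω⁺ be the set of ω such that all solutions of y' = A(ω·t)y are bounded on (−∞,0]. If Ω⁺ ≠ Ω, then for every ω₀ ∉ Ω⁺ the set of directions θ ∈ ℙ¹ whose corresponding solution is bounded on ℝ⁻ contains at most one point; consequently the set D = {σ̃(t,ω₀,θ) : t ∈ ℝ, θ ≠ θ₀} is dense in Ω×ℙ and the upper semicontinuous function β̃ (which vanishes exactly where the backward solution is unbounded) vanishes on a residual subset of Ω×ℙ; hence Ω⁺ is of the first Baire category. -/
/-- Suppose the minimal flow `(Ω,σ)` carries a continuous linear cocycle `L`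
(on a plane `E`) whose set `Ω⁺` of points with all solutions bounded on
`(-∞,0]` is proper: `Ω⁺ ≠ Ω`. Then for every `ω₀ ∉ Ω⁺` the set of directions
`θ ∈ ℙ¹` with backward-bounded solution has at most one point; consequently for
any `θ₀` the set `D = {σ̃(t,ω₀,θ) : t ∈ ℝ, θ ≠ θ₀}` is dense in `Ω×ℙ`, the
upper semicontinuous function `β̃` (positive exactly at backward-bounded
directions) vanishes on a residual subset of `Ω×ℙ`, and `Ω⁺` is of the first
Baire category. `ℙ¹` is realized as `AddCircle π`, with `dir θ` a nonzero
direction vector of the line `θ`. -/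
theorem stmt18 {Ω E : Type*} [MetricSpace Ω] [CompactSpace Ω]
    [NormedAddCommGroup E] [NormedSpace ℝ E] [Fact (0 < Real.pi)]
    (hrank : Module.finrank ℝ E = 2)
    (φ : ℝ → Ω → Ω) (hφc : Continuous fun p : ℝ × Ω => φ p.1 p.2)
    (hφ0 : ∀ ω, φ 0 ω = ω) (hφadd : ∀ s t ω, φ (s + t) ω = φ s (φ t ω))
    (hmin : ∀ ω, Dense (Set.range fun t => φ t ω))
    (σ' : ℝ → Ω × AddCircle Real.pi → Ω × AddCircle Real.pi)
    (hσc : Continuous fun p : ℝ × (Ω × AddCircle Real.pi) => σ' p.1 p.2)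
    (hσ0 : ∀ x, σ' 0 x = x) (hσadd : ∀ s t x, σ' (s + t) x = σ' s (σ' t x))
    (hσfst : ∀ t x, (σ' t x).1 = φ t x.1)
    (L : ℝ → Ω → E →L[ℝ] E)
    (hLc : Continuous fun p : ℝ × Ω => L p.1 p.2)
    (hL0 : ∀ ω, L 0 ω = ContinuousLinearMap.id ℝ E)
    (hLcoc : ∀ s t ω, L (s + t) ω = (L s (φ t ω)).comp (L t ω))
    (dir : AddCircle Real.pi → E) (hdirc : Continuous dir)
    (hdir0 : ∀ θ, dir θ ≠ 0)
    (hdirindep : ∀ θ₁ θ₂ : AddCircle Real.pi, θ₁ ≠ θ₂ → ∀ c : ℝ, dir θ₁ ≠ c • dir θ₂)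
    (hdirspan : ∀ v : E, v ≠ 0 → ∃ (θ : AddCircle Real.pi) (c : ℝ), v = c • dir θ)
    (hcompat : ∀ (t : ℝ) (ω : Ω) (θ : AddCircle Real.pi),
      ∃ c : ℝ, c ≠ 0 ∧ L t ω (dir θ) = c • dir (σ' t (ω, θ)).2)
    (β : Ω × AddCircle Real.pi → ℝ)
    (hβusc : UpperSemicontinuous β) (hβ0 : ∀ x, 0 ≤ β x)
    (hβchar : ∀ (ω : Ω) (θ : AddCircle Real.pi),
      0 < β (ω, θ) ↔ ∃ M : ℝ, ∀ t ≤ (0 : ℝ), ‖L t ω (dir θ)‖ ≤ M)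
    (Ωp : Set Ω) (hΩp : Ωp = {ω | ∀ θ, 0 < β (ω, θ)}) (hne : Ωp ≠ Set.univ) :
    (∀ ω₀ ∉ Ωp, {θ | 0 < β (ω₀, θ)}.Subsingleton ∧
      ∀ θ₀ : AddCircle Real.pi,
        Dense {x : Ω × AddCircle Real.pi | ∃ (t : ℝ) (θ : AddCircle Real.pi),
          θ ≠ θ₀ ∧ x = σ' t (ω₀, θ)}) ∧
    {x | β x = 0} ∈ residual (Ω × AddCircle Real.pi) ∧
    IsMeagre Ωp := by
  classical
  have hπ : (0 : ℝ) < Real.pi := Fact.out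
  -- small reals give nonzero elements of the circle
  have hcoe_ne : ∀ δ : ℝ, 0 < δ → δ < Real.pi → (δ : AddCircle Real.pi) ≠ 0 := by
    intro δ h0 h1 h
    rw [AddCircle.coe_eq_zero_iff] at h
    obtain ⟨n, hn⟩ := h
    have hn' : (n : ℝ) * Real.pi = δ := by rw [← hn]; simp [zsmul_eq_mul]
    rcases le_or_gt n 0 with h2 | h2
    · have : (n : ℝ) ≤ 0 := by exact_mod_cast h2
      nlinarith
    · have : (1 : ℝ) ≤ (n : ℝ) := by exact_mod_cast h2
      nlinarith
  -- any vector is a combination of two independent directions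
  have hspan2 : ∀ θ₁ θ₂ : AddCircle Real.pi, θ₁ ≠ θ₂ → ∀ v : E,
      ∃ a b : ℝ, v = a • dir θ₁ + b • dir θ₂ := by
    intro θ₁ θ₂ h12 v
    have li : LinearIndependent ℝ ![dir θ₁, dir θ₂] := by
      rw [LinearIndependent.pair_iff]
      intro s t hst
      by_cases hs : s = 0
      · subst hs
        simp only [zero_smul, zero_add] at hst
        rcases smul_eq_zero.1 hst with h | h
        · exact ⟨rfl, h⟩
        · exact absurd h (hdir0 θ₂)
      · exfalso
        have hx : s • dir θ₁ = (-t) • dir θ₂ := by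
          rw [neg_smul]
          exact eq_neg_of_add_eq_zero_left hst
        have : dir θ₁ = (s⁻¹ * (-t)) • dir θ₂ := by
          calc dir θ₁ = s⁻¹ • (s • dir θ₁) := by
                rw [smul_smul, inv_mul_cancel₀ hs, one_smul]
            _ = s⁻¹ • ((-t) • dir θ₂) := by rw [hx]
            _ = (s⁻¹ * (-t)) • dir θ₂ := by rw [smul_smul]
        exact hdirindep θ₁ θ₂ h12 _ this
    have hsp := li.span_eq_top_of_card_eq_finrank (by simp [hrank])
    have hr : Set.range ![dir θ₁, dir θ₂] = {dir θ₁, dir θ₂} := by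
      ext w
      simp [Fin.exists_fin_two, or_comm]
    have hv : v ∈ Submodule.span ℝ ({dir θ₁, dir θ₂} : Set E) := by
      rw [← hr, hsp]; trivial
    obtain ⟨a, b, hab⟩ := Submodule.mem_span_pair.1 hv
    exact ⟨a, b, hab.symm⟩
  -- a bound on `(-∞, t]` gives a bound on `(-∞, 0]`
  have hglue : ∀ (ω : Ω) (v : E) (t C : ℝ), (∀ u ≤ t, ‖L u ω v‖ ≤ C) →
      ∃ M, ∀ u ≤ (0 : ℝ), ‖L u ω v‖ ≤ M := by
    intro ω v t C hC
    have hcts : Continuous fun u : ℝ => ‖L u ω v‖ := by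
      have h1 : Continuous fun u : ℝ => L u ω :=
        hLc.comp (continuous_id.prodMk continuous_const)
      exact (h1.clm_apply continuous_const).norm
    obtain ⟨C₂, hC₂⟩ :=
      (isCompact_Icc (a := min t 0) (b := (0 : ℝ))).exists_bound_of_continuousOn
        hcts.continuousOn
    refine ⟨max C C₂, fun u hu => ?_⟩
    rcases le_or_gt u (min t 0) with h | h
    · exact le_trans (hC u (h.trans (min_le_left _ _))) (le_max_left _ _)
    · have hmem : u ∈ Set.Icc (min t 0) 0 := ⟨h.le, hu⟩
      have := hC₂ u hmem
      rw [norm_norm] at this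
      exact this.trans (le_max_right _ _)
  -- positivity of β propagates backwards along the flow
  have hinv : ∀ (t : ℝ) (ω : Ω) (θ : AddCircle Real.pi),
      0 < β (σ' t (ω, θ)) → 0 < β (ω, θ) := by
    intro t ω θ hpos
    have hpos' : 0 < β ((σ' t (ω, θ)).1, (σ' t (ω, θ)).2) := by
      rwa [Prod.mk.eta]
    obtain ⟨M, hM⟩ := (hβchar _ _).1 hpos'
    obtain ⟨c, hc0, hcL⟩ := hcompat t ω θ
    rw [hβchar]
    apply hglue ω (dir θ) t (|c| * M)
    intro u hu
    have hut : u = (u - t) + t := by ring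
    rw [hut, hLcoc]
    have hval : ((L (u - t) (φ t ω)).comp (L t ω)) (dir θ)
        = c • (L (u - t) (φ t ω)) (dir (σ' t (ω, θ)).2) := by
      rw [ContinuousLinearMap.comp_apply, hcL, map_smul]
    rw [hval, norm_smul, Real.norm_eq_abs]
    have hM' : ‖L (u - t) (φ t ω) (dir (σ' t (ω, θ)).2)‖ ≤ M := by
      have := hM (u - t) (by linarith)
      rwa [← hσfst t (ω, θ)]
    exact mul_le_mul_of_nonneg_left hM' (abs_nonneg c)
  -- the subsingleton property
  have hsub : ∀ ω₀, ω₀ ∉ Ωp → {θ | 0 < β (ω₀, θ)}.Subsingleton := by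
    intro ω₀ hω₀ θ₁ h1 θ₂ h2
    by_contra h12
    apply hω₀
    rw [hΩp]
    intro θ
    obtain ⟨M₁, hM₁⟩ := (hβchar ω₀ θ₁).1 h1
    obtain ⟨M₂, hM₂⟩ := (hβchar ω₀ θ₂).1 h2
    obtain ⟨a, b, hab⟩ := hspan2 θ₁ θ₂ h12 (dir θ)
    rw [hβchar]
    refine ⟨|a| * M₁ + |b| * M₂, fun t ht => ?_⟩
    rw [hab, map_add, map_smul, map_smul]
    calc ‖a • L t ω₀ (dir θ₁) + b • L t ω₀ (dir θ₂)‖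
        ≤ ‖a • L t ω₀ (dir θ₁)‖ + ‖b • L t ω₀ (dir θ₂)‖ := norm_add_le _ _
      _ ≤ |a| * M₁ + |b| * M₂ := by
          rw [norm_smul, norm_smul, Real.norm_eq_abs, Real.norm_eq_abs]
          exact add_le_add (mul_le_mul_of_nonneg_left (hM₁ t ht) (abs_nonneg a))
            (mul_le_mul_of_nonneg_left (hM₂ t ht) (abs_nonneg b))
  -- the density property (for any base point)
  have hdense : ∀ (ω₀ : Ω) (θ₀ : AddCircle Real.pi),
      Dense {x : Ω × AddCircle Real.pi | ∃ (t : ℝ) (θ : AddCircle Real.pi),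
        θ ≠ θ₀ ∧ x = σ' t (ω₀, θ)} := by
    intro ω₀ θ₀
    rw [Metric.dense_iff]
    rintro ⟨ω, θ⟩ r hr
    obtain ⟨y, hball, hrange⟩ := Metric.dense_iff.1 (hmin ω₀) ω r hr
    obtain ⟨t, rfl⟩ := hrange
    have hdy : dist (φ t ω₀) ω < r := Metric.mem_ball.1 hball
    obtain ⟨θ'', hθ''⟩ : ∃ θ'', σ' (-t) (φ t ω₀, θ) = (ω₀, θ'') := by
      refine ⟨(σ' (-t) (φ t ω₀, θ)).2, ?_⟩
      refine Prod.ext ?_ rfl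
      rw [hσfst]
      show φ (-t) (φ t ω₀) = ω₀
      rw [← hφadd, neg_add_cancel, hφ0]
    have hψ : σ' t (ω₀, θ'') = (φ t ω₀, θ) := by
      rw [← hθ'', ← hσadd, add_neg_cancel, hσ0]
    have hF : Continuous fun η : AddCircle Real.pi => σ' t (ω₀, η) :=
      hσc.comp (continuous_const.prodMk (continuous_const.prodMk continuous_id))
    set V : Set (AddCircle Real.pi) :=
      {η | dist (σ' t (ω₀, η)) ((ω, θ) : Ω × AddCircle Real.pi) < r} with hVdef
    have hVopen : IsOpen V :=
      isOpen_lt (hF.dist continuous_const) continuous_const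
    have hθ''V : θ'' ∈ V := by
      show dist (σ' t (ω₀, θ'')) ((ω, θ) : Ω × AddCircle Real.pi) < r
      rw [hψ, Prod.dist_eq]
      simp only [dist_self]
      exact max_lt hdy hr
    -- find η ∈ V with η ≠ θ₀
    obtain ⟨η, hηV, hηθ₀⟩ : ∃ η ∈ V, η ≠ θ₀ := by
      by_cases hcase : θ'' = θ₀
      · -- perturb θ''
        have hρ : Continuous fun δ : ℝ => θ'' + (δ : AddCircle Real.pi) :=
          continuous_const.add (AddCircle.continuous_mk' Real.pi)
        have hpre : IsOpen ((fun δ : ℝ => θ'' + (δ : AddCircle Real.pi)) ⁻¹' V) :=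
          hVopen.preimage hρ
        have h0mem : (0 : ℝ) ∈ (fun δ : ℝ => θ'' + (δ : AddCircle Real.pi)) ⁻¹' V := by
          show θ'' + ((0 : ℝ) : AddCircle Real.pi) ∈ V
          simpa using hθ''V
        obtain ⟨ε, hε, hballsub⟩ := Metric.isOpen_iff.1 hpre 0 h0mem
        set δ : ℝ := min (ε / 2) (Real.pi / 2) with hδdef
        have hδ0 : 0 < δ := lt_min (by linarith) (by linarith)
        have hδπ : δ < Real.pi := lt_of_le_of_lt (min_le_right _ _) (by linarith)
        have hδε : δ < ε := lt_of_le_of_lt (min_le_left _ _) (by linarith)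
        have hδball : δ ∈ Metric.ball (0 : ℝ) ε := by
          rw [Metric.mem_ball, Real.dist_eq, sub_zero, abs_of_pos hδ0]
          exact hδε
        refine ⟨θ'' + (δ : AddCircle Real.pi), hballsub hδball, ?_⟩
        intro hcontra
        rw [hcase] at hcontra
        have : (δ : AddCircle Real.pi) = 0 := by
          have := hcontra
          rwa [add_eq_left] at this
        exact hcoe_ne δ hδ0 hδπ this
      · exact ⟨θ'', hθ''V, hcase⟩
    exact ⟨σ' t (ω₀, η), Metric.mem_ball.2 hηV, ⟨t, η, hηθ₀, rfl⟩⟩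
  -- choose a point outside Ωp
  obtain ⟨ω₀, hω₀⟩ := (Set.ne_univ_iff_exists_notMem Ωp).1 hne
  -- a direction θ₀ outside of which β vanishes at ω₀
  obtain ⟨θ₀, hθ₀⟩ : ∃ θ₀, ∀ θ, θ ≠ θ₀ → β (ω₀, θ) = 0 := by
    by_cases hb : ∃ θ, 0 < β (ω₀, θ)
    · obtain ⟨θ₀, hθ₀⟩ := hb
      refine ⟨θ₀, fun θ hθ => ?_⟩
      rcases (hβ0 (ω₀, θ)).lt_or_eq with hlt | heq
      · exact absurd (hsub ω₀ hω₀ hlt hθ₀) hθ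
      · exact heq.symm
    · push_neg at hb
      exact ⟨0, fun θ _ => le_antisymm (hb θ) (hβ0 _)⟩
  -- β vanishes on the dense set D
  have hD0 : ∀ x ∈ {x : Ω × AddCircle Real.pi | ∃ (t : ℝ) (θ : AddCircle Real.pi),
      θ ≠ θ₀ ∧ x = σ' t (ω₀, θ)}, β x = 0 := by
    rintro x ⟨t, θ, hθ, rfl⟩
    by_contra hbne
    have hpos : 0 < β (σ' t (ω₀, θ)) := (hβ0 _).lt_of_ne (Ne.symm hbne)
    have := hinv t ω₀ θ hpos
    rw [hθ₀ θ hθ] at this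
    exact lt_irrefl 0 this
  have hDd := hdense ω₀ θ₀
  -- the residual part
  have hres : {x | β x = 0} ∈ residual (Ω × AddCircle Real.pi) := by
    have hmemres : ∀ n : ℕ,
        {x : Ω × AddCircle Real.pi | β x < 1 / (n + 1)} ∈
          residual (Ω × AddCircle Real.pi) := by
      intro n
      refine residual_of_dense_open ?_ ?_
      · exact upperSemicontinuous_iff_isOpen_preimage.1 hβusc _
      · refine Dense.mono ?_ hDd
        intro x hx
        have := hD0 x hx
        show β x < 1 / (n + 1)
        rw [this]
        positivity
    have heq : {x : Ω × AddCircle Real.pi | β x = 0}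
        = ⋂ n : ℕ, {x : Ω × AddCircle Real.pi | β x < 1 / (n + 1)} := by
      ext x
      simp only [Set.mem_setOf_eq, Set.mem_iInter]
      constructor
      · intro h n; rw [h]; positivity
      · intro h
        refine le_antisymm ?_ (hβ0 x)
        by_contra hlt
        push_neg at hlt
        obtain ⟨n, hn⟩ := exists_nat_one_div_lt hlt
        exact absurd (h n) (not_lt.2 hn.le)
    rw [heq]
    exact countable_iInter_mem.2 hmemres
  -- the meagre part
  have hmeag : IsMeagre Ωp := by
    -- two fixed distinct directions
    set θb : AddCircle Real.pi := ((Real.pi / 2 : ℝ) : AddCircle Real.pi) with hθbdef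
    have h0b : (0 : AddCircle Real.pi) ≠ θb := by
      intro h
      exact hcoe_ne (Real.pi / 2) (by linarith) (by linarith) h.symm
    -- a direction unbounded at ω₀
    obtain ⟨θu, hθu⟩ : ∃ θu, ¬ 0 < β (ω₀, θu) := by
      by_contra h
      push_neg at h
      exact hω₀ (by rw [hΩp]; exact h)
    have hunb : ∀ M : ℝ, ∃ u ≤ (0 : ℝ), M < ‖L u ω₀ (dir θu)‖ := by
      intro M
      by_contra h
      push_neg at h
      exact hθu ((hβchar ω₀ θu).2 ⟨M, h⟩)
    -- the closed sets
    set G : ℕ → Set Ω := fun n =>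
      ⋂ u ∈ Set.Iic (0 : ℝ),
        {ω | ‖L u ω (dir 0)‖ ≤ (n : ℝ)} ∩ {ω | ‖L u ω (dir θb)‖ ≤ (n : ℝ)} with hGdef
    have hGclosed : ∀ n, IsClosed (G n) := by
      intro n
      refine isClosed_biInter fun u _ => IsClosed.inter ?_ ?_
      · exact isClosed_le
          (((hLc.comp (continuous_const.prodMk continuous_id)).clm_apply
            continuous_const).norm) continuous_const
      · exact isClosed_le
          (((hLc.comp (continuous_const.prodMk continuous_id)).clm_apply
            continuous_const).norm) continuous_const
    have hGsub : Ωp ⊆ ⋃ n, G n := by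
      intro ω hω
      rw [hΩp] at hω
      obtain ⟨M₁, hM₁⟩ := (hβchar ω 0).1 (hω 0)
      obtain ⟨M₂, hM₂⟩ := (hβchar ω θb).1 (hω θb)
      refine Set.mem_iUnion.2 ⟨⌈max M₁ M₂⌉₊, ?_⟩
      refine Set.mem_iInter₂.2 fun u hu => ?_
      constructor
      · exact le_trans (hM₁ u hu) (le_trans (le_max_left _ _) (Nat.le_ceil _))
      · exact le_trans (hM₂ u hu) (le_trans (le_max_right _ _) (Nat.le_ceil _))
    have hGmeagre : ∀ n, IsMeagre (G n) := by
      intro n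
      have hint : interior (G n) = ∅ := by
        by_contra hne'
        obtain ⟨y, hyrange, hyU⟩ :=
          (hmin ω₀).exists_mem_open isOpen_interior
            (Set.nonempty_iff_ne_empty.2 hne')
        obtain ⟨t, rfl⟩ := hyrange
        have hmem : φ t ω₀ ∈ G n := interior_subset hyU
        obtain ⟨a, b, hab⟩ := hspan2 0 θb h0b (L t ω₀ (dir θu))
        have hbound : ∀ u ≤ t, ‖L u ω₀ (dir θu)‖ ≤ |a| * n + |b| * n := by
          intro u hu
          have hut : u = (u - t) + t := by ring
          rw [hut, hLcoc, ContinuousLinearMap.comp_apply, hab, map_add, map_smul,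
            map_smul]
          have hmem' := Set.mem_iInter₂.1 hmem (u - t) (by simp; linarith)
          calc ‖a • L (u - t) (φ t ω₀) (dir 0) + b • L (u - t) (φ t ω₀) (dir θb)‖
              ≤ ‖a • L (u - t) (φ t ω₀) (dir 0)‖
                + ‖b • L (u - t) (φ t ω₀) (dir θb)‖ := norm_add_le _ _
            _ ≤ |a| * n + |b| * n := by
                rw [norm_smul, norm_smul, Real.norm_eq_abs, Real.norm_eq_abs]
                exact add_le_add
                  (mul_le_mul_of_nonneg_left hmem'.1 (abs_nonneg a))
                  (mul_le_mul_of_nonneg_left hmem'.2 (abs_nonneg b))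
        obtain ⟨M, hM⟩ := hglue ω₀ (dir θu) t (|a| * n + |b| * n) hbound
        obtain ⟨u, hu0, hu⟩ := hunb M
        exact absurd (hM u hu0) (not_le.2 hu)
      have hnd := isClosed_isNowhereDense_iff_compl.1
        ⟨hGclosed n, (hGclosed n).isNowhereDense_iff.2 hint⟩
      exact residual_of_dense_open hnd.1 hnd.2
    exact IsMeagre.mono hGsub (isMeagre_iUnion hGmeagre)
  exact ⟨fun ω₀' hω₀' => ⟨hsub ω₀' hω₀', fun θ₀' => hdense ω₀' θ₀'⟩, hres, hmeag⟩
end
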